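/- arXiv:2312.12179 — 4 statements merged into one kernel-verified Lean document; each statement's English description precedes it below -/
import Mathlib

section
/- For every c > 0, the sequence of iterates F_cⁿ(δ₁) is nondecreasing in the stochastic order, and it converges weakly to a limit distribution μ₁ which is supported on ℕ⁺, has finite mean, and satisfies F_c(μ₁) = μ₁. -/
open Filter Topology Set

noncomputable section

/-- Convolution of two (sub)probability mass functions on `ℕ∞ = ℕ⁺ ∪ {∞} ∪ {0}`,
with the convention `∞ + anything = ∞`. -/
def conv (μ ν : ℕ∞ → ℝ) : ℕ∞ → ℝ :=
  fun k => ∑' p : ℕ∞ × ℕ∞, if p.1 + p.2 = k then μ p.1 * ν p.2 else 0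

/-- The factor `(l(l-1)/2) / (l(l-1)/2 + c)`, the probability that the coalescence
from `l` to `l-1` lineages happens before an independent `Exp(c)` time. -/
def kingmanFactor (c : ℝ) (l : ℕ) : ℝ :=
  ((l : ℝ) * ((l : ℝ) - 1) / 2) / ((l : ℝ) * ((l : ℝ) - 1) / 2 + c)

/-- `pK c j i` : the probability that Kingman's coalescent started from `j` lineages
has exactly `i` lineages at an independent exponential time with rate `c`. -/
def pK (c : ℝ) (j : ℕ∞) (i : ℕ) : ℝ :=
  (c / ((i : ℝ) * ((i : ℝ) - 1) / 2 + c)) *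
    (if j = ⊤ then ∏' l : ℕ, kingmanFactor c (i + 1 + l)
     else ∏ l ∈ Finset.Icc (i + 1) j.toNat, kingmanFactor c l)

/-- The mass that `F_c μ` puts on a finite `k ∈ ℕ⁺`. -/
def FcFin (c : ℝ) (μ : ℕ∞ → ℝ) (k : ℕ) : ℝ :=
  ∑' j : ℕ∞, if (k : ℕ∞) ≤ j then conv μ μ j * pK c j k else 0

/-- The map `F_c` on distributions on `ℕ⁺ ∪ {∞}`; the mass at `∞` is the remaining mass. -/
def Fc (c : ℝ) (μ : ℕ∞ → ℝ) : ℕ∞ → ℝ :=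
  fun k =>
    if k = ⊤ then 1 - ∑' n : ℕ, FcFin c μ n
    else if k = 0 then 0 else FcFin c μ k.toNat

/-- `μ` is a probability distribution on `ℕ⁺ ∪ {∞}` (no mass at `0`). -/
def IsDist (μ : ℕ∞ → ℝ) : Prop :=
  (∀ k, 0 ≤ μ k) ∧ μ 0 = 0 ∧ HasSum μ 1

/-- The mean of a distribution on `ℕ⁺ ∪ {∞}` (ignoring the mass at `∞`). -/
def distMean (μ : ℕ∞ → ℝ) : ℝ := ∑' n : ℕ, (n : ℝ) * μ (n : ℕ∞)

/-- `μ` belongs to `S₁`: a probability distribution on `ℕ⁺` with finite mean. -/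
def MemS1 (μ : ℕ∞ → ℝ) : Prop :=
  IsDist μ ∧ μ ⊤ = 0 ∧ Summable (fun n : ℕ => (n : ℝ) * μ (n : ℕ∞))

/-- `StDom μ ν` : `μ ⪯ ν` in the usual stochastic order, i.e.
`μ([0,x]) ≥ ν([0,x])` for all `x ∈ [0,∞]`. -/
def StDom (μ ν : ℕ∞ → ℝ) : Prop :=
  ∀ x : ℕ∞, (∑' k : ℕ∞, if k ≤ x then ν k else 0) ≤ ∑' k : ℕ∞, if k ≤ x then μ k else 0

/-- The unit point mass at `a`. -/
def delta (a : ℕ∞) : ℕ∞ → ℝ := fun k => if k = a then 1 else 0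

end

noncomputable section KCProof
namespace KC
open Finset

variable {c : ℝ}

def lam (l : ℕ) : ℝ := (l : ℝ) * ((l : ℝ) - 1) / 2

lemma lam_nonneg (l : ℕ) : 0 ≤ lam l := by
  rcases Nat.eq_zero_or_pos l with h | h
  · simp [lam, h]
  · have h1 : (1 : ℝ) ≤ (l : ℝ) := by exact_mod_cast h
    have : 0 ≤ (l : ℝ) - 1 := by linarith
    have : 0 ≤ (l : ℝ) * ((l : ℝ) - 1) := mul_nonneg (by positivity) this
    unfold lam; linarith

lemma lam_pos (hc : 0 < c) (l : ℕ) : 0 < lam l + c := by linarith [lam_nonneg l]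

lemma kf_eq (l : ℕ) : kingmanFactor c l = lam l / (lam l + c) := rfl

lemma kf_nonneg (hc : 0 < c) (l : ℕ) : 0 ≤ kingmanFactor c l :=
  div_nonneg (lam_nonneg l) (lam_pos hc l).le

lemma kf_le_one (hc : 0 < c) (l : ℕ) : kingmanFactor c l ≤ 1 := by
  rw [kf_eq, div_le_one (lam_pos hc l)]; linarith

lemma kf_one (c : ℝ) : kingmanFactor c 1 = 0 := by
  simp [kingmanFactor]

lemma kf_add_eq_one (hc : 0 < c) (l : ℕ) :
    kingmanFactor c l + c / (lam l + c) = 1 := by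
  rw [kf_eq, ← add_div, div_self (lam_pos hc l).ne']

/-- `G c m j = ∏_{l=m+1}^{j} f_l`, the CDF of `p_c(j,·)` at `m`. -/
def G (c : ℝ) (m j : ℕ) : ℝ := ∏ l ∈ Finset.Icc (m + 1) j, kingmanFactor c l

lemma G_nonneg (hc : 0 < c) (m j : ℕ) : 0 ≤ G c m j :=
  Finset.prod_nonneg fun l _ => kf_nonneg hc l

lemma G_le_one (hc : 0 < c) (m j : ℕ) : G c m j ≤ 1 :=
  Finset.prod_le_one (fun l _ => kf_nonneg hc l) (fun l _ => kf_le_one hc l)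

lemma G_self (c : ℝ) (j : ℕ) : G c j j = 1 := by
  unfold G; rw [Finset.Icc_eq_empty (by omega)]; simp

lemma G_succ (hc : 0 < c) (m j : ℕ) (h : m < j) :
    G c m j = kingmanFactor c (m + 1) * G c (m + 1) j := by
  unfold G
  have hins : Finset.Icc (m + 1) j = insert (m + 1) (Finset.Icc (m + 2) j) := by
    ext x; simp only [Finset.mem_Icc, Finset.mem_insert]; omega
  rw [hins, Finset.prod_insert (by simp)]

lemma G_anti_succ (hc : 0 < c) (i j : ℕ) : G c i (j + 1) ≤ G c i j := by
  rcases le_or_gt (i + 1) (j + 1) with h | h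
  · unfold G
    have hins : Finset.Icc (i + 1) (j + 1) = insert (j + 1) (Finset.Icc (i + 1) j) := by
      ext x; simp only [Finset.mem_Icc, Finset.mem_insert]; omega
    rw [hins, Finset.prod_insert (by simp)]
    exact mul_le_of_le_one_left (Finset.prod_nonneg fun l _ => kf_nonneg hc l) (kf_le_one hc _)
  · unfold G
    rw [Finset.Icc_eq_empty (by omega : ¬ i + 1 ≤ j + 1),
      Finset.Icc_eq_empty (by omega : ¬ i + 1 ≤ j)]

lemma G_anti (hc : 0 < c) (i : ℕ) {j j' : ℕ} (h : j ≤ j') : G c i j' ≤ G c i j := by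
  induction j' with
  | zero =>
    have hj : j = 0 := by omega
    subst hj; exact le_rfl
  | succ n ih =>
    rcases Nat.lt_or_ge j (n + 1) with h' | h'
    · exact le_trans (G_anti_succ hc i n) (ih (by omega))
    · have : j = n + 1 := by omega
      subst this; rfl

lemma G_min (c : ℝ) (i j : ℕ) : G c (min i j) j = G c i j := by
  rcases le_total i j with h | h
  · rw [min_eq_left h]
  · rw [min_eq_right h]
    unfold G
    rw [Finset.Icc_eq_empty (by omega), Finset.Icc_eq_empty (by omega)]

lemma pK_cast (c : ℝ) (j k : ℕ) :
    pK c (j : ℕ∞) k = (c / (lam k + c)) * G c k j := by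
  have h1 : (j : ℕ∞) ≠ ⊤ := by exact_mod_cast WithTop.coe_ne_top
  simp only [pK, h1, if_false, ENat.toNat_coe]
  rfl

lemma pK_cast_nonneg (hc : 0 < c) (j k : ℕ) : 0 ≤ pK c (j : ℕ∞) k := by
  rw [pK_cast]
  exact mul_nonneg (div_nonneg hc.le (lam_pos hc k).le) (G_nonneg hc k j)

lemma pK_cast_le_one (hc : 0 < c) (j k : ℕ) : pK c (j : ℕ∞) k ≤ 1 := by
  rw [pK_cast]
  have h1 : c / (lam k + c) ≤ 1 := by
    rw [div_le_one (lam_pos hc k)]; linarith [lam_nonneg k]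
  calc c / (lam k + c) * G c k j ≤ 1 * 1 :=
        mul_le_mul h1 (G_le_one hc k j) (G_nonneg hc k j) one_pos.le
  _ = 1 := by ring

lemma lam_one : lam 1 = 0 := by simp [lam]

lemma sum_pK (hc : 0 < c) (j : ℕ) (hj : 1 ≤ j) :
    ∀ m, m ≤ j → ∑ k ∈ Finset.Icc 1 m, pK c (j : ℕ∞) k = G c m j := by
  intro m
  induction m with
  | zero =>
    intro _
    simp only [Finset.Icc_eq_empty (by omega : ¬ (1:ℕ) ≤ 0), Finset.sum_empty]
    have : (1 : ℕ) ∈ Finset.Icc (0 + 1) j := by simp [hj]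
    exact (Finset.prod_eq_zero this (kf_one c)).symm
  | succ m ih =>
    intro hm
    have hins : Finset.Icc 1 (m + 1) = insert (m + 1) (Finset.Icc 1 m) := by
      ext x; simp only [Finset.mem_Icc, Finset.mem_insert]; omega
    rw [hins, Finset.sum_insert (by simp), ih (by omega), pK_cast,
      G_succ hc m j (by omega)]
    linear_combination (G c (m + 1) j) * kf_add_eq_one hc (m + 1)

lemma sum_pK_total (hc : 0 < c) (j : ℕ) (hj : 1 ≤ j) :
    ∑ k ∈ Finset.Icc 1 j, pK c (j : ℕ∞) k = 1 := by
  rw [sum_pK hc j hj j le_rfl, G_self]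

/-! ### Finitely supported distributions -/

lemma natEmb_inj : Function.Injective (Nat.cast : ℕ → ℕ∞) := fun a b h => by exact_mod_cast h

def natEmb : ℕ ↪ ℕ∞ := ⟨Nat.cast, natEmb_inj⟩

structure Nice (μ : ℕ∞ → ℝ) (N : ℕ) : Prop where
  nn : ∀ k, 0 ≤ μ k
  supp : ∀ k : ℕ∞, μ k ≠ 0 → ∃ m : ℕ, 1 ≤ m ∧ m ≤ N ∧ k = (m : ℕ∞)
  sum1 : ∑ m ∈ Finset.Icc 1 N, μ (m : ℕ∞) = 1

lemma Nice.top_eq {μ : ℕ∞ → ℝ} {N : ℕ} (h : Nice μ N) : μ ⊤ = 0 := by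
  by_contra hne
  obtain ⟨m, _, _, hm⟩ := h.supp ⊤ hne
  exact (WithTop.coe_ne_top (a := m)) hm.symm

lemma Nice.bounds {μ : ℕ∞ → ℝ} {N : ℕ} (h : Nice μ N) {a : ℕ}
    (ha : μ (a : ℕ∞) ≠ 0) : 1 ≤ a ∧ a ≤ N := by
  obtain ⟨m, h1, h2, hm⟩ := h.supp _ ha
  have : a = m := by exact_mod_cast hm
  omega

lemma Nice.cast_out {μ : ℕ∞ → ℝ} {N : ℕ} (h : Nice μ N) {m : ℕ}
    (hm : m = 0 ∨ N < m) : μ (m : ℕ∞) = 0 := by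
  by_contra hne
  have := h.bounds hne
  omega

lemma Nice.zero_eq {μ : ℕ∞ → ℝ} {N : ℕ} (h : Nice μ N) : μ 0 = 0 := by
  have := h.cast_out (m := 0) (Or.inl rfl)
  simpa using this

/-- Trimming a `range` sum of a function vanishing outside `[1,N]`. -/
lemma helperA {N : ℕ} (f : ℕ → ℝ) (h0 : f 0 = 0) (hN : ∀ m, N < m → f m = 0)
    (i : ℕ) :
    ∑ m ∈ Finset.range (i + 1), f m
      = ∑ m ∈ Finset.Icc 1 N, (if m ≤ i then f m else 0) := by
  rw [← Finset.sum_filter]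
  apply (Finset.sum_subset _ _).symm
  · intro x hx
    simp only [Finset.mem_filter, Finset.mem_Icc] at hx
    simp only [Finset.mem_range]; omega
  · intro x hx hnx
    simp only [Finset.mem_range] at hx
    simp only [Finset.mem_filter, Finset.mem_Icc] at hnx
    rcases Nat.eq_zero_or_pos x with h | h
    · subst h; exact h0
    · exact hN x (by omega)

/-! ### Convolution -/

lemma conv_top' {μ ν : ℕ∞ → ℝ} (hμ : μ ⊤ = 0) (hν : ν ⊤ = 0) :
    conv μ ν ⊤ = 0 := by
  unfold conv
  have h : ∀ p : ℕ∞ × ℕ∞, (if p.1 + p.2 = ⊤ then μ p.1 * ν p.2 else 0) = 0 := by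
    rintro ⟨x, y⟩
    by_cases h : x + y = ⊤
    · rcases WithTop.add_eq_top.mp h with h' | h'
      · rw [if_pos h]; dsimp only; rw [show x = ⊤ from h', hμ, zero_mul]
      · rw [if_pos h]; dsimp only; rw [show y = ⊤ from h', hν, mul_zero]
    · simp [h]
  rw [tsum_congr h, tsum_zero]

lemma conv_cast (μ ν : ℕ∞ → ℝ) (m : ℕ) :
    conv μ ν (m : ℕ∞)
      = ∑ p ∈ Finset.range (m + 1) ×ˢ Finset.range (m + 1),
          (if p.1 + p.2 = m then μ (p.1 : ℕ∞) * ν (p.2 : ℕ∞) else 0) := by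
  unfold conv
  rw [tsum_eq_sum
    (s := (Finset.range (m + 1) ×ˢ Finset.range (m + 1)).map (natEmb.prodMap natEmb))]
  · rw [Finset.sum_map]
    apply Finset.sum_congr rfl
    intro p _
    rcases p with ⟨a, b⟩
    have hcast : ((a : ℕ∞) + (b : ℕ∞) = (m : ℕ∞)) ↔ a + b = m := by
      constructor
      · intro h; exact_mod_cast h
      · intro h; exact_mod_cast congrArg (Nat.cast : ℕ → ℕ∞) h
    simp only [Function.Embedding.prodMap, natEmb, Function.Embedding.coeFn_mk,
      Function.Embedding.coe_prodMap, Prod.map]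
    by_cases h : a + b = m
    · rw [if_pos h]; exact if_pos (hcast.mpr h)
    · rw [if_neg h]; exact if_neg (fun hh => h (hcast.mp hh))
  · rintro ⟨x, y⟩ hp
    dsimp only
    induction x using ENat.recTopCoe with
    | top =>
      have hne : (⊤ : ℕ∞) + y ≠ (m : ℕ∞) := by
        rw [top_add]; exact fun h => (WithTop.coe_ne_top (a := m)) h.symm
      rw [if_neg hne]
    | coe a =>
      induction y using ENat.recTopCoe with
      | top =>
        have hne : (a : ℕ∞) + ⊤ ≠ (m : ℕ∞) := by
          rw [add_top]; exact fun h => (WithTop.coe_ne_top (a := m)) h.symm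
        rw [if_neg hne]
      | coe b =>
        by_cases h : a + b = m
        · exfalso
          apply hp
          rw [Finset.mem_map]
          refine ⟨(a, b), ?_, rfl⟩
          simp only [Finset.mem_product, Finset.mem_range]
          omega
        · rw [if_neg (fun hh => h (by exact_mod_cast hh))]

lemma conv_nn {μ ν : ℕ∞ → ℝ} (hμ : ∀ k, 0 ≤ μ k) (hν : ∀ k, 0 ≤ ν k)
    (k : ℕ∞) : 0 ≤ conv μ ν k := by
  apply tsum_nonneg
  rintro ⟨x, y⟩
  by_cases h : x + y = k
  · rw [if_pos h]; exact mul_nonneg (hμ x) (hν y)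
  · rw [if_neg h]

lemma conv_cast_out {μ ν : ℕ∞ → ℝ} {N N' : ℕ} (hμ : Nice μ N) (hν : Nice ν N')
    {m : ℕ} (hm : m < 2 ∨ N + N' < m) : conv μ ν (m : ℕ∞) = 0 := by
  rw [conv_cast]
  apply Finset.sum_eq_zero
  rintro ⟨a, b⟩ _
  by_cases h : a + b = m
  · rw [if_pos h]
    by_cases ha : μ (a : ℕ∞) = 0
    · rw [ha, zero_mul]
    · by_cases hb : ν (b : ℕ∞) = 0
      · rw [hb, mul_zero]
      · exfalso
        have h1 := hμ.bounds ha
        have h2 := hν.bounds hb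
        omega
  · rw [if_neg h]

lemma conv_phi {μ ν : ℕ∞ → ℝ} {N N' : ℕ} (hμ : Nice μ N) (hν : Nice ν N')
    (φ : ℕ → ℝ) {B : ℕ} (hB : N + N' ≤ B) :
    ∑ m ∈ Finset.Icc 2 B, φ m * conv μ ν (m : ℕ∞)
      = ∑ a ∈ Finset.range (B + 1), ∑ b ∈ Finset.range (B + 1),
          φ (a + b) * (μ (a : ℕ∞) * ν (b : ℕ∞)) := by
  have step1 : ∀ m ∈ Finset.Icc 2 B,
      φ m * conv μ ν (m : ℕ∞)
        = ∑ p ∈ Finset.range (B + 1) ×ˢ Finset.range (B + 1),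
            (if p.1 + p.2 = m then φ m * (μ (p.1 : ℕ∞) * ν (p.2 : ℕ∞)) else 0) := by
    intro m hm
    simp only [Finset.mem_Icc] at hm
    rw [conv_cast, Finset.mul_sum]
    have hsub : Finset.range (m + 1) ×ˢ Finset.range (m + 1)
        ⊆ Finset.range (B + 1) ×ˢ Finset.range (B + 1) :=
      Finset.product_subset_product
        (Finset.range_subset_range.mpr (by omega)) (Finset.range_subset_range.mpr (by omega))
    rw [Finset.sum_subset hsub]
    · apply Finset.sum_congr rfl
      rintro ⟨a, b⟩ _
      dsimp only
      by_cases h : a + b = m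
      · rw [if_pos h, if_pos h]
      · rw [if_neg h, if_neg h, mul_zero]
    · rintro ⟨a, b⟩ _ hnp
      simp only [Finset.mem_product, Finset.mem_range] at hnp
      dsimp only
      rw [if_neg (fun h : a + b = m => hnp (by omega)), mul_zero]
  rw [show (∑ m ∈ Finset.Icc 2 B, φ m * conv μ ν (m : ℕ∞)) = _ from
    Finset.sum_congr rfl step1]
  rw [Finset.sum_comm, Finset.sum_product]
  apply Finset.sum_congr rfl
  intro a _
  apply Finset.sum_congr rfl
  intro b _
  have : ∑ m ∈ Finset.Icc 2 B,
      (if a + b = m then φ m * (μ (a : ℕ∞) * ν (b : ℕ∞)) else 0)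
      = if a + b ∈ Finset.Icc 2 B then φ (a + b) * (μ (a : ℕ∞) * ν (b : ℕ∞)) else 0 :=
    Finset.sum_ite_eq _ _ _
  rw [this]
  by_cases h : a + b ∈ Finset.Icc 2 B
  · rw [if_pos h]
  · rw [if_neg h]
    simp only [Finset.mem_Icc, not_and_or, not_le] at h
    by_cases ha : μ (a : ℕ∞) = 0
    · rw [ha, zero_mul, mul_zero]
    · by_cases hb : ν (b : ℕ∞) = 0
      · rw [hb, mul_zero, mul_zero]
      · exfalso
        have h1 := hμ.bounds ha
        have h2 := hν.bounds hb
        omega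

/-! ### `FcFin` and `Fc` on nice measures -/

variable {μ : ℕ∞ → ℝ} {N : ℕ}

lemma nice_range_sum (hμ : Nice μ N) {B : ℕ} (hB : N ≤ B) :
    ∑ m ∈ Finset.range (B + 1), μ (m : ℕ∞) = 1 := by
  rw [helperA (fun m => μ (m : ℕ∞)) (by simpa using hμ.zero_eq)
    (fun m hm => hμ.cast_out (Or.inr hm)) B]
  rw [← hμ.sum1]
  apply Finset.sum_congr rfl
  intro m hm
  simp only [Finset.mem_Icc] at hm
  rw [if_pos (by omega)]

lemma FcFin_eq (hc : 0 < c) (hμ : Nice μ N) (k : ℕ) :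
    FcFin c μ k = ∑ j ∈ Finset.Icc 1 (2 * N),
      (if k ≤ j then conv μ μ (j : ℕ∞) * pK c (j : ℕ∞) k else 0) := by
  unfold FcFin
  rw [tsum_eq_sum (s := (Finset.Icc 1 (2 * N)).map natEmb)]
  · rw [Finset.sum_map]
    apply Finset.sum_congr rfl
    intro j _
    simp only [natEmb, Function.Embedding.coeFn_mk]
    by_cases h : k ≤ j
    · rw [if_pos h]; exact if_pos (by exact_mod_cast h : (k : ℕ∞) ≤ (j : ℕ∞))
    · rw [if_neg h]; exact if_neg (fun hh : (k : ℕ∞) ≤ (j : ℕ∞) => h (by exact_mod_cast hh))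
  · intro x hx
    induction x using ENat.recTopCoe with
    | top =>
      rw [conv_top' hμ.top_eq hμ.top_eq, zero_mul, ite_self]
    | coe j =>
      have hj : j = 0 ∨ 2 * N < j := by
        by_contra hcon
        apply hx
        rw [Finset.mem_map]
        exact ⟨j, by simp only [Finset.mem_Icc]; omega, rfl⟩
      have : conv μ μ (j : ℕ∞) = 0 := by
        apply conv_cast_out hμ hμ
        omega
      rw [this, zero_mul, ite_self]

lemma FcFin_nn (hc : 0 < c) (hμ : Nice μ N) (k : ℕ) : 0 ≤ FcFin c μ k := by
  rw [FcFin_eq hc hμ]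
  apply Finset.sum_nonneg
  intro j _
  by_cases h : k ≤ j
  · rw [if_pos h]
    exact mul_nonneg (conv_nn hμ.nn hμ.nn _) (pK_cast_nonneg hc j k)
  · rw [if_neg h]

lemma FcFin_out (hc : 0 < c) (hμ : Nice μ N) {k : ℕ} (hk : 2 * N < k) :
    FcFin c μ k = 0 := by
  rw [FcFin_eq hc hμ]
  apply Finset.sum_eq_zero
  intro j hj
  simp only [Finset.mem_Icc] at hj
  rw [if_neg (by omega)]

lemma FcFin_zero_eq (hc : 0 < c) (hμ : Nice μ N) : FcFin c μ 0 = 0 := by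
  rw [FcFin_eq hc hμ]
  apply Finset.sum_eq_zero
  intro j hj
  simp only [Finset.mem_Icc] at hj
  rw [if_pos (by omega), pK_cast]
  have h1 : (1 : ℕ) ∈ Finset.Icc (0 + 1) j := by simp only [Finset.mem_Icc]; omega
  have : G c 0 j = 0 := Finset.prod_eq_zero h1 (kf_one c)
  rw [this, mul_zero, mul_zero]

lemma Fc_swap (hc : 0 < c) (hμ : Nice μ N) (ψ : ℕ → ℝ) :
    ∑ m ∈ Finset.Icc 1 (2 * N), ψ m * FcFin c μ m
      = ∑ j ∈ Finset.Icc 1 (2 * N), conv μ μ (j : ℕ∞)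
          * (∑ m ∈ Finset.Icc 1 j, ψ m * pK c (j : ℕ∞) m) := by
  have step : ∀ m ∈ Finset.Icc 1 (2 * N), ψ m * FcFin c μ m
      = ∑ j ∈ Finset.Icc 1 (2 * N),
          (if m ≤ j then ψ m * (conv μ μ (j : ℕ∞) * pK c (j : ℕ∞) m) else 0) := by
    intro m _
    rw [FcFin_eq hc hμ, Finset.mul_sum]
    apply Finset.sum_congr rfl
    intro j _
    by_cases h : m ≤ j
    · rw [if_pos h, if_pos h]
    · rw [if_neg h, if_neg h, mul_zero]
  rw [show (∑ m ∈ Finset.Icc 1 (2 * N), ψ m * FcFin c μ m) = _ from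
    Finset.sum_congr rfl step]
  rw [Finset.sum_comm]
  apply Finset.sum_congr rfl
  intro j hj
  simp only [Finset.mem_Icc] at hj
  have hfil : Finset.filter (fun m => m ≤ j) (Finset.Icc 1 (2 * N))
      = Finset.Icc 1 j := by
    ext x; simp only [Finset.mem_filter, Finset.mem_Icc]; omega
  rw [← Finset.sum_filter, hfil, Finset.mul_sum]
  apply Finset.sum_congr rfl
  intro m _
  ring

lemma conv_Icc_sum (hc : 0 < c) (hμ : Nice μ N) (hN : 1 ≤ N) (φ : ℕ → ℝ) :
    ∑ j ∈ Finset.Icc 1 (2 * N), conv μ μ (j : ℕ∞) * φ j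
      = ∑ a ∈ Finset.range (2 * N + 1), ∑ b ∈ Finset.range (2 * N + 1),
          φ (a + b) * (μ (a : ℕ∞) * μ (b : ℕ∞)) := by
  have h1 : Finset.Icc 1 (2 * N) = insert 1 (Finset.Icc 2 (2 * N)) := by
    ext x; simp only [Finset.mem_Icc, Finset.mem_insert]; omega
  rw [h1, Finset.sum_insert (by simp), conv_cast_out hμ hμ (Or.inl (by omega)),
    zero_mul, zero_add]
  have h2 : ∀ j ∈ Finset.Icc 2 (2 * N), conv μ μ (j : ℕ∞) * φ j
      = φ j * conv μ μ (j : ℕ∞) := fun j _ => mul_comm _ _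
  rw [Finset.sum_congr rfl h2, conv_phi hμ hμ φ (by omega)]

lemma FcFin_total (hc : 0 < c) (hμ : Nice μ N) (hN : 1 ≤ N) :
    ∑ m ∈ Finset.Icc 1 (2 * N), FcFin c μ m = 1 := by
  have h0 : ∑ m ∈ Finset.Icc 1 (2 * N), FcFin c μ m
      = ∑ m ∈ Finset.Icc 1 (2 * N), (fun _ => (1:ℝ)) m * FcFin c μ m := by
    apply Finset.sum_congr rfl; intro m _; rw [one_mul]
  rw [h0, Fc_swap hc hμ]
  have h2 : ∀ j ∈ Finset.Icc 1 (2 * N),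
      conv μ μ (j : ℕ∞) * (∑ m ∈ Finset.Icc 1 j, (fun _ => (1:ℝ)) m * pK c (j : ℕ∞) m)
        = conv μ μ (j : ℕ∞) * 1 := by
    intro j hj
    simp only [Finset.mem_Icc] at hj
    have hh : ∑ m ∈ Finset.Icc 1 j, (fun _ => (1:ℝ)) m * pK c (j : ℕ∞) m
        = (1:ℝ) := by
      have h5 : ∀ m ∈ Finset.Icc 1 j, (fun _ => (1:ℝ)) m * pK c (j : ℕ∞) m
          = pK c (j : ℕ∞) m := by intro m _; simp
      rw [Finset.sum_congr rfl h5, sum_pK_total hc j hj.1]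
    rw [hh]
  rw [Finset.sum_congr rfl h2]
  have h3 : ∀ j ∈ Finset.Icc 1 (2*N), conv μ μ (j:ℕ∞) * 1 = conv μ μ (j:ℕ∞) * (fun _ => (1:ℝ)) j := by
    intro j _; rfl
  rw [Finset.sum_congr rfl h3, conv_Icc_sum hc hμ hN]
  have h4 : ∀ a ∈ Finset.range (2*N+1), ∑ b ∈ Finset.range (2*N+1),
      (1:ℝ) * (μ (a:ℕ∞) * μ (b:ℕ∞)) = μ (a:ℕ∞) := by
    intro a _
    have : ∀ b ∈ Finset.range (2*N+1), (1:ℝ) * (μ (a:ℕ∞) * μ (b:ℕ∞))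
        = μ (a:ℕ∞) * μ (b:ℕ∞) := by intro b _; rw [one_mul]
    rw [Finset.sum_congr rfl this, ← Finset.mul_sum,
      nice_range_sum hμ (by omega), mul_one]
  rw [Finset.sum_congr rfl h4, nice_range_sum hμ (by omega)]

lemma Fc_cast_eval (c : ℝ) (μ : ℕ∞ → ℝ) {m : ℕ} (hm : 1 ≤ m) :
    Fc c μ (m : ℕ∞) = FcFin c μ m := by
  have h1 : (m : ℕ∞) ≠ ⊤ := by exact_mod_cast WithTop.coe_ne_top
  have h2 : (m : ℕ∞) ≠ 0 := by
    intro h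
    have : m = 0 := by exact_mod_cast h
    omega
  simp only [Fc, h1, h2, if_false, ENat.toNat_coe]

lemma Fc_zero_eval (c : ℝ) (μ : ℕ∞ → ℝ) : Fc c μ 0 = 0 := by
  simp [Fc]

lemma tsum_FcFin (hc : 0 < c) (hμ : Nice μ N) (hN : 1 ≤ N) :
    ∑' n : ℕ, FcFin c μ n = 1 := by
  rw [tsum_eq_sum (s := Finset.Icc 1 (2 * N)), FcFin_total hc hμ hN]
  intro n hn
  simp only [Finset.mem_Icc] at hn
  rcases Nat.eq_zero_or_pos n with h | h
  · subst h; exact FcFin_zero_eq hc hμ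
  · exact FcFin_out hc hμ (by omega)

lemma Fc_top_eval (hc : 0 < c) (hμ : Nice μ N) (hN : 1 ≤ N) :
    Fc c μ ⊤ = 0 := by
  have h : Fc c μ ⊤ = 1 - ∑' n : ℕ, FcFin c μ n := by simp [Fc]
  rw [h, tsum_FcFin hc hμ hN]
  ring

lemma nice_Fc (hc : 0 < c) (hμ : Nice μ N) (hN : 1 ≤ N) :
    Nice (Fc c μ) (2 * N) := by
  constructor
  · intro k
    induction k using ENat.recTopCoe with
    | top => rw [Fc_top_eval hc hμ hN]
    | coe m =>
      rcases Nat.eq_zero_or_pos m with h | h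
      · subst h
        rw [Nat.cast_zero, Fc_zero_eval]
      · rw [Fc_cast_eval c μ h]
        exact FcFin_nn hc hμ m
  · intro k hk
    induction k using ENat.recTopCoe with
    | top => exact absurd (Fc_top_eval hc hμ hN) hk
    | coe m =>
      rcases Nat.eq_zero_or_pos m with h | h
      · subst h
        rw [Nat.cast_zero, Fc_zero_eval] at hk
        exact absurd rfl hk
      · rcases le_or_gt m (2 * N) with h2 | h2
        · exact ⟨m, h, h2, rfl⟩
        · rw [Fc_cast_eval c μ h, FcFin_out hc hμ h2] at hk
          exact absurd rfl hk
  · have : ∀ m ∈ Finset.Icc 1 (2 * N), Fc c μ (m : ℕ∞) = FcFin c μ m := by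
      intro m hm
      simp only [Finset.mem_Icc] at hm
      exact Fc_cast_eval c μ hm.1
    rw [Finset.sum_congr rfl this, FcFin_total hc hμ hN]

lemma nice_delta : Nice (delta 1) 1 := by
  constructor
  · intro k
    unfold delta
    by_cases h : k = 1
    · rw [if_pos h]; norm_num
    · rw [if_neg h]
  · intro k hk
    unfold delta at hk
    by_cases h : k = 1
    · exact ⟨1, le_rfl, le_rfl, by rw [h, Nat.cast_one]⟩
    · rw [if_neg h] at hk; exact absurd rfl hk
  · rw [Finset.Icc_self, Finset.sum_singleton]
    unfold delta
    rw [if_pos (by rw [Nat.cast_one])]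

lemma nice_iter (hc : 0 < c) (n : ℕ) :
    Nice ((Fc c)^[n] (delta 1)) (2 ^ n) := by
  induction n with
  | zero => simpa using nice_delta
  | succ n ih =>
    rw [Function.iterate_succ_apply']
    have := nice_Fc hc ih (Nat.one_le_two_pow)
    rwa [show 2 * 2 ^ n = 2 ^ (n + 1) by ring] at this

/-! ### CDF and the stochastic order -/

def Cdf (μ : ℕ∞ → ℝ) (i : ℕ) : ℝ := ∑ m ∈ Finset.range (i + 1), μ (m : ℕ∞)

lemma Cdf_nonneg (hμ : Nice μ N) (i : ℕ) : 0 ≤ Cdf μ i :=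
  Finset.sum_nonneg fun m _ => hμ.nn _

lemma Cdf_eq_filter (hμ : Nice μ N) (i : ℕ) :
    Cdf μ i = ∑ m ∈ Finset.Icc 1 N, (if m ≤ i then μ (m : ℕ∞) else 0) :=
  helperA _ (by simpa using hμ.zero_eq) (fun m hm => hμ.cast_out (Or.inr hm)) i

lemma Cdf_le_one (hμ : Nice μ N) (i : ℕ) : Cdf μ i ≤ 1 := by
  rw [Cdf_eq_filter hμ, ← hμ.sum1]
  apply Finset.sum_le_sum
  intro m _
  by_cases h : m ≤ i
  · rw [if_pos h]
  · rw [if_neg h]; exact hμ.nn _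

lemma Cdf_eq_one (hμ : Nice μ N) {i : ℕ} (hi : N ≤ i) : Cdf μ i = 1 := by
  rw [Cdf_eq_filter hμ, ← hμ.sum1]
  apply Finset.sum_congr rfl
  intro m hm
  simp only [Finset.mem_Icc] at hm
  rw [if_pos (by omega)]

lemma Cdf_mono (hμ : Nice μ N) : Monotone (Cdf μ) := by
  apply monotone_nat_of_le_succ
  intro i
  unfold Cdf
  rw [Finset.sum_range_succ (n := i + 1)]
  have := hμ.nn ((i + 1 : ℕ) : ℕ∞)
  linarith

/-- Markov's inequality for nice measures. -/
lemma Cdf_markov (hμ : Nice μ N) {i : ℕ} (hi : 1 ≤ i) {M : ℝ}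
    (hM : ∑ m ∈ Finset.Icc 1 N, (m : ℝ) * μ (m : ℕ∞) ≤ M) :
    1 - M / i ≤ Cdf μ i := by
  have hi' : (0 : ℝ) < i := by exact_mod_cast hi
  have step : ∀ m ∈ Finset.Icc 1 N,
      μ (m : ℕ∞) - (if m ≤ i then μ (m : ℕ∞) else 0) ≤ (m : ℝ) * μ (m : ℕ∞) / i := by
    intro m hm
    simp only [Finset.mem_Icc] at hm
    by_cases h : m ≤ i
    · rw [if_pos h, sub_self]
      have := hμ.nn ((m : ℕ) : ℕ∞)
      positivity
    · rw [if_neg h, sub_zero]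
      have h1 : (i : ℝ) ≤ (m : ℝ) := by exact_mod_cast (by omega : i ≤ m)
      rw [le_div_iff₀ hi']
      nlinarith [hμ.nn ((m : ℕ) : ℕ∞)]
  have key : ∑ m ∈ Finset.Icc 1 N, (μ (m : ℕ∞) - (if m ≤ i then μ (m : ℕ∞) else 0))
      ≤ M / i := by
    calc ∑ m ∈ Finset.Icc 1 N, (μ (m : ℕ∞) - (if m ≤ i then μ (m : ℕ∞) else 0))
        ≤ ∑ m ∈ Finset.Icc 1 N, (m : ℝ) * μ (m : ℕ∞) / i := Finset.sum_le_sum step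
      _ = (∑ m ∈ Finset.Icc 1 N, (m : ℝ) * μ (m : ℕ∞)) / i := by
          rw [Finset.sum_div]
      _ ≤ M / i := by gcongr
  rw [Finset.sum_sub_distrib, hμ.sum1, ← Cdf_eq_filter hμ] at key
  linarith

lemma nice_tsum_cut (hμ : Nice μ N) (x : ℕ∞) :
    (∑' k : ℕ∞, if k ≤ x then μ k else 0)
      = ∑ m ∈ Finset.Icc 1 N, (if (m : ℕ∞) ≤ x then μ (m : ℕ∞) else 0) := by
  rw [tsum_eq_sum (s := (Finset.Icc 1 N).map natEmb)]
  · rw [Finset.sum_map]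
    rfl
  · intro k hk
    by_cases h : k ≤ x
    · rw [if_pos h]
      by_contra hne
      obtain ⟨m, h1, h2, hm⟩ := hμ.supp k hne
      apply hk
      rw [Finset.mem_map]
      exact ⟨m, by simp only [Finset.mem_Icc]; omega, hm.symm⟩
    · rw [if_neg h]

lemma stdom_of_cdf {ν : ℕ∞ → ℝ} {N' : ℕ} (hμ : Nice μ N) (hν : Nice ν N')
    (h : ∀ i, Cdf ν i ≤ Cdf μ i) : StDom μ ν := by
  intro x
  rw [nice_tsum_cut hμ, nice_tsum_cut hν]
  induction x using ENat.recTopCoe with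
  | top =>
    have e1 : ∀ (K : ℕ) (ρ : ℕ∞ → ℝ), ∀ m ∈ Finset.Icc 1 K,
        (if (m : ℕ∞) ≤ ⊤ then ρ (m : ℕ∞) else 0) = ρ (m : ℕ∞) := by
      intro K ρ m _; rw [if_pos le_top]
    rw [Finset.sum_congr rfl (e1 N' ν), Finset.sum_congr rfl (e1 N μ),
      hμ.sum1, hν.sum1]
  | coe i =>
    have e2 : ∀ (K : ℕ) (ρ : ℕ∞ → ℝ) (hρ : Nice ρ K),
        (∑ m ∈ Finset.Icc 1 K, if (m : ℕ∞) ≤ (i : ℕ∞) then ρ (m : ℕ∞) else 0)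
          = Cdf ρ i := by
      intro K ρ hρ
      rw [Cdf_eq_filter hρ]
      apply Finset.sum_congr rfl
      intro m _
      by_cases h2 : m ≤ i
      · rw [if_pos (by exact_mod_cast h2), if_pos h2]
      · rw [if_neg (fun hh => h2 (by exact_mod_cast hh)), if_neg h2]
    rw [e2 N' ν hν, e2 N μ hμ]
    exact h i

/-! ### Abel summation and monotone expectations -/

lemma abel_identity (v g : ℕ → ℝ) (B : ℕ) :
    ∑ m ∈ Finset.range (B + 1), v m * g m
      = (∑ i ∈ Finset.range B,
          (∑ m ∈ Finset.range (i + 1), v m) * (g i - g (i + 1)))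
        + (∑ m ∈ Finset.range (B + 1), v m) * g B := by
  induction B with
  | zero => simp
  | succ B ih =>
    have e1 : ∑ m ∈ Finset.range (B + 1 + 1), v m * g m
        = (∑ m ∈ Finset.range (B + 1), v m * g m) + v (B + 1) * g (B + 1) :=
      Finset.sum_range_succ _ _
    have e2 : ∑ i ∈ Finset.range (B + 1),
          (∑ m ∈ Finset.range (i + 1), v m) * (g i - g (i + 1))
        = (∑ i ∈ Finset.range B,
            (∑ m ∈ Finset.range (i + 1), v m) * (g i - g (i + 1)))
          + (∑ m ∈ Finset.range (B + 1), v m) * (g B - g (B + 1)) :=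
      Finset.sum_range_succ _ _
    have e3 : ∑ m ∈ Finset.range (B + 1 + 1), v m
        = (∑ m ∈ Finset.range (B + 1), v m) + v (B + 1) :=
      Finset.sum_range_succ _ _
    rw [e1, ih, e2, e3]
    ring

lemma exp_mono {w w' g : ℕ → ℝ} {B : ℕ}
    (hcdf : ∀ i, ∑ m ∈ Finset.range (i + 1), w' m ≤ ∑ m ∈ Finset.range (i + 1), w m)
    (htot : ∑ m ∈ Finset.range (B + 1), w' m = ∑ m ∈ Finset.range (B + 1), w m)
    (hg : ∀ i, g (i + 1) ≤ g i) :
    ∑ m ∈ Finset.range (B + 1), w' m * g m ≤ ∑ m ∈ Finset.range (B + 1), w m * g m := by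
  rw [abel_identity w g B, abel_identity w' g B, htot]
  apply add_le_add_left
  apply Finset.sum_le_sum
  intro i _
  exact mul_le_mul_of_nonneg_right (hcdf i) (by linarith [hg i])

/-! ### CDF of the image under `Fc` -/

lemma cdf_Fc_eq (hc : 0 < c) (hμ : Nice μ N) (hN : 1 ≤ N) (i : ℕ)
    {B : ℕ} (hB : 2 * N ≤ B) :
    Cdf (Fc c μ) i
      = ∑ a ∈ Finset.range (B + 1), μ (a : ℕ∞)
          * (∑ b ∈ Finset.range (B + 1), μ (b : ℕ∞) * G c i (a + b)) := by
  -- Step 1 : `Cdf (Fc c μ) i = ∑_{m ∈ Icc 1 (2N)} [m ≤ i] FcFin m`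
  have h0 : Cdf (Fc c μ) i
      = ∑ m ∈ Finset.Icc 1 (2 * N), (fun m => if m ≤ i then (1:ℝ) else 0) m * FcFin c μ m := by
    rw [Cdf_eq_filter (nice_Fc hc hμ hN) i]
    apply Finset.sum_congr rfl
    intro m hm
    simp only [Finset.mem_Icc] at hm
    dsimp only
    by_cases h : m ≤ i
    · rw [if_pos h, if_pos h, one_mul, Fc_cast_eval c μ hm.1]
    · rw [if_neg h, if_neg h, zero_mul]
  rw [h0, Fc_swap hc hμ]
  -- Step 2 : inner sums are `G c i j`
  have h1 : ∀ j ∈ Finset.Icc 1 (2 * N),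
      conv μ μ (j : ℕ∞) * (∑ m ∈ Finset.Icc 1 j,
          (fun m => if m ≤ i then (1:ℝ) else 0) m * pK c (j : ℕ∞) m)
        = conv μ μ (j : ℕ∞) * (fun j => G c i j) j := by
    intro j hj
    simp only [Finset.mem_Icc] at hj
    congr 1
    have h2 : ∀ m ∈ Finset.Icc 1 j, (fun m => if m ≤ i then (1:ℝ) else 0) m * pK c (j : ℕ∞) m
        = (if m ≤ i then pK c (j : ℕ∞) m else 0) := by
      intro m _
      dsimp only
      by_cases h : m ≤ i
      · rw [if_pos h, if_pos h, one_mul]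
      · rw [if_neg h, if_neg h, zero_mul]
    rw [Finset.sum_congr rfl h2, ← Finset.sum_filter]
    have h3 : Finset.filter (fun m => m ≤ i) (Finset.Icc 1 j)
        = Finset.Icc 1 (min i j) := by
      ext x; simp only [Finset.mem_filter, Finset.mem_Icc]; omega
    rw [h3, sum_pK hc j hj.1 (min i j) (by omega), G_min]
  rw [Finset.sum_congr rfl h1, conv_Icc_sum hc hμ hN (fun j => G c i j)]
  have hBB : 2 * N + 1 ≤ B + 1 := by omega
  -- extend range (2N+1) to range (B+1)
  have hz : ∀ a, 2 * N < a → μ (a : ℕ∞) = 0 := by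
    intro a ha
    exact hμ.cast_out (Or.inr (by omega))
  rw [Finset.sum_subset (Finset.range_subset_range.mpr hBB)]
  · apply Finset.sum_congr rfl
    intro a _
    rw [Finset.sum_subset (Finset.range_subset_range.mpr hBB)]
    · rw [Finset.mul_sum]
      apply Finset.sum_congr rfl
      intro b _
      ring
    · intro b _ hb
      simp only [Finset.mem_range, not_lt] at hb
      rw [hz b (by omega), mul_zero, mul_zero]
  · intro a _ ha
    simp only [Finset.mem_range, not_lt] at ha
    apply Finset.sum_eq_zero
    intro b _
    rw [hz a (by omega), zero_mul, mul_zero]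

lemma h_antitone (hc : 0 < c) (i a : ℕ) :
    ∀ (ρ : ℕ∞ → ℝ) (B : ℕ), (∀ k, 0 ≤ ρ k) →
    ∑ b ∈ Finset.range (B + 1), ρ (b : ℕ∞) * G c i (a + 1 + b)
      ≤ ∑ b ∈ Finset.range (B + 1), ρ (b : ℕ∞) * G c i (a + b) := by
  intro ρ B hρ
  apply Finset.sum_le_sum
  intro b _
  apply mul_le_mul_of_nonneg_left _ (hρ _)
  have : a + 1 + b = (a + b) + 1 := by ring
  rw [this]
  exact G_anti_succ hc i (a + b)

/-- Monotonicity of `Fc` in the CDF order. -/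
lemma cdf_Fc_mono {μ' : ℕ∞ → ℝ} {N' : ℕ} (hc : 0 < c)
    (hμ : Nice μ N) (hμ' : Nice μ' N') (hN : 1 ≤ N) (hN' : 1 ≤ N')
    (h : ∀ i, Cdf μ' i ≤ Cdf μ i) (i : ℕ) :
    Cdf (Fc c μ') i ≤ Cdf (Fc c μ) i := by
  set B := 2 * max N N' with hBdef
  have hB : 2 * N ≤ B := by omega
  have hB' : 2 * N' ≤ B := by omega
  rw [cdf_Fc_eq hc hμ hN i hB, cdf_Fc_eq hc hμ' hN' i hB']
  -- inner comparison
  have hcdf' : ∀ j, ∑ m ∈ Finset.range (j + 1), μ' (m : ℕ∞)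
      ≤ ∑ m ∈ Finset.range (j + 1), μ (m : ℕ∞) := fun j => h j
  have htot : ∑ m ∈ Finset.range (B + 1), μ' (m : ℕ∞)
      = ∑ m ∈ Finset.range (B + 1), μ (m : ℕ∞) := by
    rw [nice_range_sum hμ (by omega), nice_range_sum hμ' (by omega)]
  have inner : ∀ a, ∑ b ∈ Finset.range (B + 1), μ' (b : ℕ∞) * G c i (a + b)
      ≤ ∑ b ∈ Finset.range (B + 1), μ (b : ℕ∞) * G c i (a + b) := by
    intro a
    apply exp_mono hcdf' htot
    intro b
    have : a + (b + 1) = (a + b) + 1 := by ring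
    rw [this]
    exact G_anti_succ hc i (a + b)
  calc ∑ a ∈ Finset.range (B + 1), μ' (a : ℕ∞)
          * (∑ b ∈ Finset.range (B + 1), μ' (b : ℕ∞) * G c i (a + b))
      ≤ ∑ a ∈ Finset.range (B + 1), μ' (a : ℕ∞)
          * (∑ b ∈ Finset.range (B + 1), μ (b : ℕ∞) * G c i (a + b)) := by
        apply Finset.sum_le_sum
        intro a _
        exact mul_le_mul_of_nonneg_left (inner a) (hμ'.nn _)
    _ ≤ ∑ a ∈ Finset.range (B + 1), μ (a : ℕ∞)
          * (∑ b ∈ Finset.range (B + 1), μ (b : ℕ∞) * G c i (a + b)) := by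
        apply exp_mono hcdf' htot
        intro a
        exact h_antitone hc i a μ B hμ.nn

/-! ### Mean estimates -/

lemma one_sub_prod_le (s : Finset ℕ) (f : ℕ → ℝ)
    (h0 : ∀ l ∈ s, 0 ≤ f l) (h1 : ∀ l ∈ s, f l ≤ 1) :
    1 - ∏ l ∈ s, f l ≤ ∑ l ∈ s, (1 - f l) := by
  induction s using Finset.cons_induction with
  | empty => simp
  | cons a s ha ih =>
    rw [Finset.prod_cons, Finset.sum_cons]
    have hh0 : ∀ l ∈ s, 0 ≤ f l := fun l hl => h0 l (Finset.mem_cons_of_mem hl)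
    have hh1 : ∀ l ∈ s, f l ≤ 1 := fun l hl => h1 l (Finset.mem_cons_of_mem hl)
    have ihh := ih hh0 hh1
    have hpl : ∏ l ∈ s, f l ≤ 1 := Finset.prod_le_one hh0 hh1
    have hp0 : 0 ≤ ∏ l ∈ s, f l := Finset.prod_nonneg hh0
    have ha0 : 0 ≤ f a := h0 a (Finset.mem_cons_self a s)
    have ha1 : f a ≤ 1 := h1 a (Finset.mem_cons_self a s)
    nlinarith

lemma sum_inv_tele {i : ℕ} (hi : 2 ≤ i) (j : ℕ) :
    ∑ l ∈ Finset.Icc i j, (1 / ((l : ℝ) - 1) - 1 / l) ≤ 1 / ((i : ℝ) - 1) := by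
  have hipos : (0 : ℝ) < (i : ℝ) - 1 := by
    have : (2 : ℝ) ≤ i := by exact_mod_cast hi
    linarith
  rcases lt_or_ge j i with h | h
  · rw [Finset.Icc_eq_empty (by omega), Finset.sum_empty]
    positivity
  · have key : ∀ j, i ≤ j →
        ∑ l ∈ Finset.Icc i j, (1 / ((l : ℝ) - 1) - 1 / l)
          = 1 / ((i : ℝ) - 1) - 1 / j := by
      intro j hj
      induction j, hj using Nat.le_induction with
      | base => rw [Finset.Icc_self, Finset.sum_singleton]
      | succ j hj ihj =>
        have hins : Finset.Icc i (j + 1) = insert (j + 1) (Finset.Icc i j) := by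
          ext x; simp only [Finset.mem_Icc, Finset.mem_insert]; omega
        rw [hins, Finset.sum_insert (by simp), ihj]
        have : ((j : ℝ) + 1) - 1 = (j : ℝ) := by ring
        push_cast
        rw [this]
        ring
    rw [key j h]
    have hj1 : (0 : ℝ) < j := by
      have : (2 : ℝ) ≤ (j : ℝ) := by exact_mod_cast le_trans hi h
      linarith
    have : 0 ≤ 1 / (j : ℝ) := by positivity
    linarith

lemma one_sub_kf_le (hc : 0 < c) {l : ℕ} (hl : 2 ≤ l) :
    1 - kingmanFactor c l ≤ 2 * c * (1 / ((l : ℝ) - 1) - 1 / l) := by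
  have hl2 : (2 : ℝ) ≤ (l : ℝ) := by exact_mod_cast hl
  have hlam : 0 < lam l := by
    unfold lam
    have : (0:ℝ) < (l : ℝ) * ((l : ℝ) - 1) := by nlinarith
    linarith
  have hne : lam l + c ≠ 0 := (lam_pos hc l).ne'
  have h1 : 1 - kingmanFactor c l = c / (lam l + c) := by
    rw [kf_eq]
    field_simp
    ring
  have h2 : c / (lam l + c) ≤ c / lam l :=
    div_le_div_of_nonneg_left hc.le hlam (by linarith)
  have h3 : c / lam l = 2 * c * (1 / ((l : ℝ) - 1) - 1 / l) := by
    unfold lam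
    have hl0 : (l : ℝ) ≠ 0 := by linarith
    have hl1 : (l : ℝ) - 1 ≠ 0 := by linarith
    field_simp
    ring
  rw [h1, ← h3]
  exact h2

lemma G_tail (hc : 0 < c) {m : ℕ} (hm : 1 ≤ m) (j : ℕ) :
    1 - G c m j ≤ 2 * c / (m : ℝ) := by
  have hm1 : (1 : ℝ) ≤ (m : ℝ) := by exact_mod_cast hm
  have step1 : 1 - G c m j ≤ ∑ l ∈ Finset.Icc (m + 1) j, (1 - kingmanFactor c l) :=
    one_sub_prod_le _ _ (fun l _ => kf_nonneg hc l) (fun l _ => kf_le_one hc l)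
  have step2 : ∑ l ∈ Finset.Icc (m + 1) j, (1 - kingmanFactor c l)
      ≤ ∑ l ∈ Finset.Icc (m + 1) j, 2 * c * (1 / ((l : ℝ) - 1) - 1 / l) := by
    apply Finset.sum_le_sum
    intro l hl
    simp only [Finset.mem_Icc] at hl
    exact one_sub_kf_le hc (by omega)
  have step3 : ∑ l ∈ Finset.Icc (m + 1) j, 2 * c * (1 / ((l : ℝ) - 1) - 1 / l)
      ≤ 2 * c * (1 / ((m : ℝ) + 1 - 1)) := by
    rw [← Finset.mul_sum]
    have := sum_inv_tele (i := m + 1) (by omega) j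
    have h2 : ((m + 1 : ℕ) : ℝ) - 1 = (m : ℝ) + 1 - 1 := by push_cast; ring
    rw [h2] at this
    nlinarith
  have : (m : ℝ) + 1 - 1 = (m : ℝ) := by ring
  rw [this] at step3
  calc 1 - G c m j ≤ _ := step1
    _ ≤ _ := step2
    _ ≤ 2 * c * (1 / (m : ℝ)) := step3
    _ = 2 * c / (m : ℝ) := by ring

lemma harm2 : ∀ j : ℕ, 2 ≤ j →
    ∑ i ∈ Finset.Icc 2 j, 1 / ((i : ℝ) - 1) ≤ 1 + Real.log ((j : ℝ) - 1) := by
  intro j hj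
  induction j, hj using Nat.le_induction with
  | base =>
    rw [Finset.Icc_self, Finset.sum_singleton]
    norm_num
  | succ j hj ihj =>
    have hins : Finset.Icc 2 (j + 1) = insert (j + 1) (Finset.Icc 2 j) := by
      ext x; simp only [Finset.mem_Icc, Finset.mem_insert]; omega
    rw [hins, Finset.sum_insert (by simp)]
    have hj2 : (2 : ℝ) ≤ (j : ℝ) := by exact_mod_cast hj
    have hlog : 1 / ((j : ℝ) + 1 - 1) ≤ Real.log (j : ℝ) - Real.log ((j : ℝ) - 1) := by
      have hx : (0 : ℝ) < ((j : ℝ) - 1) / (j : ℝ) := by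
        apply div_pos <;> linarith
      have h1 := Real.log_le_sub_one_of_pos hx
      rw [Real.log_div (by linarith) (by linarith)] at h1
      have : ((j : ℝ) - 1) / (j : ℝ) - 1 = - (1 / (j : ℝ)) := by
        field_simp
        ring
      rw [this] at h1
      have : (j : ℝ) + 1 - 1 = (j : ℝ) := by ring
      rw [this]
      linarith
    push_cast
    have hsimp : (j : ℝ) + 1 - 1 = (j : ℝ) := by ring
    rw [hsimp]
    rw [hsimp] at hlog
    linarith

/-- The key per-`j` mean bound: `∑_k k p_c(j,k) ≤ 1 + 2c + 2c log j`. -/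
lemma h_bound (hc : 0 < c) {j : ℕ} (hj : 1 ≤ j) :
    ∑ k ∈ Finset.Icc 1 j, (k : ℝ) * pK c (j : ℕ∞) k
      ≤ 1 + 2 * c + 2 * c * Real.log j := by
  -- (k : ℝ) as a sum of indicators
  have hk : ∀ k ∈ Finset.Icc 1 j, (k : ℝ) * pK c (j : ℕ∞) k
      = ∑ i ∈ Finset.Icc 1 j, (if i ≤ k then pK c (j : ℕ∞) k else 0) := by
    intro k hkm
    simp only [Finset.mem_Icc] at hkm
    rw [← Finset.sum_filter]
    have hfil : Finset.filter (fun i => i ≤ k) (Finset.Icc 1 j) = Finset.Icc 1 k := by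
      ext x; simp only [Finset.mem_filter, Finset.mem_Icc]; omega
    rw [hfil, Finset.sum_const, Nat.card_Icc]
    simp only [Nat.add_sub_cancel, nsmul_eq_mul]
  rw [Finset.sum_congr rfl hk, Finset.sum_comm]
  -- inner sums: `∑_{k=i}^{j} pK = 1 - G c (i-1) j`
  have hinner : ∀ i ∈ Finset.Icc 1 j,
      (∑ k ∈ Finset.Icc 1 j, if i ≤ k then pK c (j : ℕ∞) k else 0)
        = 1 - G c (i - 1) j := by
    intro i hi
    simp only [Finset.mem_Icc] at hi
    rw [← Finset.sum_filter]
    have hfil : Finset.filter (fun k => i ≤ k) (Finset.Icc 1 j) = Finset.Icc i j := by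
      ext x; simp only [Finset.mem_filter, Finset.mem_Icc]; omega
    rw [hfil]
    have hsplit : Finset.Icc 1 j = Finset.Icc 1 (i - 1) ∪ Finset.Icc i j := by
      ext x; simp only [Finset.mem_union, Finset.mem_Icc]; omega
    have hdisj : Disjoint (Finset.Icc 1 (i - 1)) (Finset.Icc i j) := by
      rw [Finset.disjoint_left]
      intro x hx1 hx2
      simp only [Finset.mem_Icc] at hx1 hx2
      omega
    have htot := sum_pK_total hc j hj
    rw [hsplit, Finset.sum_union hdisj] at htot
    rw [sum_pK hc j hj (i - 1) (by omega)] at htot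
    linarith
  rw [Finset.sum_congr rfl hinner]
  -- split off `i = 1` and bound the rest
  have hins : Finset.Icc 1 j = insert 1 (Finset.Icc 2 j) := by
    ext x; simp only [Finset.mem_Icc, Finset.mem_insert]; omega
  rw [hins, Finset.sum_insert (by simp)]
  have hterm1 : 1 - G c (1 - 1) j ≤ 1 := by
    have := G_nonneg hc (1 - 1) j
    linarith
  have hrest : ∑ i ∈ Finset.Icc 2 j, (1 - G c (i - 1) j)
      ≤ ∑ i ∈ Finset.Icc 2 j, 2 * c / ((i : ℝ) - 1) := by
    apply Finset.sum_le_sum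
    intro i hi
    simp only [Finset.mem_Icc] at hi
    have h1 := G_tail hc (m := i - 1) (by omega) j
    have h2 : ((i - 1 : ℕ) : ℝ) = (i : ℝ) - 1 := by
      have : (1 : ℝ) ≤ (i : ℝ) := by exact_mod_cast (by omega : 1 ≤ i)
      push_cast [Nat.cast_sub (by omega : 1 ≤ i)]
      ring
    rw [h2] at h1
    exact h1
  have hsum : ∑ i ∈ Finset.Icc 2 j, 2 * c / ((i : ℝ) - 1)
      ≤ 2 * c * (1 + Real.log j) := by
    have e : ∀ i ∈ Finset.Icc 2 j, 2 * c / ((i : ℝ) - 1)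
        = 2 * c * (1 / ((i : ℝ) - 1)) := by intro i _; ring
    rw [Finset.sum_congr rfl e, ← Finset.mul_sum]
    rcases lt_or_ge j 2 with h | h
    · rw [Finset.Icc_eq_empty (by omega), Finset.sum_empty]
      have : 0 ≤ Real.log j := by
        rcases Nat.lt_or_ge j 1 with h1 | h1
        · have : j = 0 := by omega
          simp [this]
        · apply Real.log_nonneg
          exact_mod_cast h1
      nlinarith
    · have h1 := harm2 j h
      have h2 : Real.log ((j : ℝ) - 1) ≤ Real.log j := by
        apply Real.log_le_log (by
          have : (2:ℝ) ≤ (j:ℝ) := by exact_mod_cast h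
          linarith)
        linarith
      have hnn : (0:ℝ) ≤ ∑ i ∈ Finset.Icc 2 j, 1 / ((i : ℝ) - 1) := by
        apply Finset.sum_nonneg
        intro i hi
        simp only [Finset.mem_Icc] at hi
        have h3 : (2:ℝ) ≤ (i:ℝ) := by exact_mod_cast hi.1
        have h4 : (0:ℝ) < (i:ℝ) - 1 := by linarith
        positivity
      nlinarith
  calc (1 - G c (1 - 1) j) + ∑ i ∈ Finset.Icc 2 j, (1 - G c (i - 1) j)
      ≤ 1 + 2 * c * (1 + Real.log j) := by linarith [le_trans hrest hsum]
    _ = 1 + 2 * c + 2 * c * Real.log j := by ring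

/-! ### The mean recursion -/

def meanF (μ : ℕ∞ → ℝ) (N : ℕ) : ℝ := ∑ m ∈ Finset.Icc 1 N, (m : ℝ) * μ (m : ℕ∞)

lemma mean_range (hμ : Nice μ N) {B : ℕ} (hB : N ≤ B) :
    ∑ a ∈ Finset.range (B + 1), (a : ℝ) * μ (a : ℕ∞) = meanF μ N := by
  rw [helperA (fun a => (a : ℝ) * μ (a : ℕ∞)) (by simp)
    (fun m hm => by
      show (m : ℝ) * μ (m : ℕ∞) = 0
      rw [hμ.cast_out (Or.inr hm), mul_zero]) B]
  unfold meanF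
  apply Finset.sum_congr rfl
  intro m hm
  simp only [Finset.mem_Icc] at hm
  rw [if_pos (by omega)]

lemma meanF_nonneg (hμ : Nice μ N) : 0 ≤ meanF μ N :=
  Finset.sum_nonneg fun m _ => mul_nonneg (by positivity) (hμ.nn _)

lemma log_le_linear (hc : 0 < c) {x : ℝ} (hx : 1 ≤ x) :
    Real.log x ≤ x / (16 * c) + Real.log (16 * c) := by
  have ht : (0 : ℝ) < 16 * c := by linarith
  have hx0 : (0 : ℝ) < x := by linarith
  have h1 : Real.log (x / (16 * c)) = Real.log x - Real.log (16 * c) :=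
    Real.log_div hx0.ne' ht.ne'
  have h2 : Real.log (x / (16 * c)) ≤ x / (16 * c) - 1 :=
    Real.log_le_sub_one_of_pos (by positivity)
  linarith

lemma log_add_le {a b : ℕ} (ha : 1 ≤ a) (hb : 1 ≤ b) :
    Real.log ((a : ℝ) + (b : ℝ)) ≤ Real.log 2 + Real.log a + Real.log b := by
  have ha' : (1 : ℝ) ≤ (a : ℝ) := by exact_mod_cast ha
  have hb' : (1 : ℝ) ≤ (b : ℝ) := by exact_mod_cast hb
  have hle : (a : ℝ) + (b : ℝ) ≤ 2 * ((a : ℝ) * (b : ℝ)) := by nlinarith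
  have h1 : Real.log ((a : ℝ) + (b : ℝ)) ≤ Real.log (2 * ((a : ℝ) * (b : ℝ))) :=
    Real.log_le_log (by linarith) hle
  rw [Real.log_mul (by norm_num) (by positivity),
    Real.log_mul (by linarith) (by linarith)] at h1
  linarith

def Kc (c : ℝ) : ℝ := 1 + 2 * c + 2 * c * Real.log 2 + 4 * c * Real.log (16 * c)

lemma mean_Fc_le (hc : 0 < c) (hμ : Nice μ N) (hN : 1 ≤ N) :
    meanF (Fc c μ) (2 * N) ≤ Kc c + meanF μ N / 4 := by
  set B := 2 * N with hBdef
  set C : ℝ := 1 + 2 * c + 2 * c * Real.log 2 with hCdef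
  set φ : ℕ → ℝ := fun j => 1 + 2 * c + 2 * c * Real.log (j : ℝ) with hφdef
  set ψ : ℕ → ℝ := fun m => (m : ℝ) with hψdef
  have s1 : meanF (Fc c μ) (2 * N)
      = ∑ j ∈ Finset.Icc 1 (2 * N), conv μ μ (j : ℕ∞)
          * (∑ m ∈ Finset.Icc 1 j, ψ m * pK c (j : ℕ∞) m) := by
    rw [← Fc_swap hc hμ]
    unfold meanF
    apply Finset.sum_congr rfl
    intro m hm
    simp only [Finset.mem_Icc] at hm
    rw [Fc_cast_eval c μ hm.1, hψdef]
  have s2 : ∑ j ∈ Finset.Icc 1 (2 * N), conv μ μ (j : ℕ∞)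
        * (∑ m ∈ Finset.Icc 1 j, ψ m * pK c (j : ℕ∞) m)
      ≤ ∑ j ∈ Finset.Icc 1 (2 * N), conv μ μ (j : ℕ∞) * φ j := by
    apply Finset.sum_le_sum
    intro j hj
    simp only [Finset.mem_Icc] at hj
    apply mul_le_mul_of_nonneg_left _ (conv_nn hμ.nn hμ.nn _)
    rw [hφdef]
    have := h_bound hc hj.1
    refine le_trans (le_of_eq ?_) this
    apply Finset.sum_congr rfl
    intro m _
    rw [hψdef]
  have hconv := conv_Icc_sum hc hμ hN φ
  have s4 : ∑ a ∈ Finset.range (B + 1), ∑ b ∈ Finset.range (B + 1),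
        φ (a + b) * (μ (a : ℕ∞) * μ (b : ℕ∞))
      ≤ ∑ a ∈ Finset.range (B + 1), ∑ b ∈ Finset.range (B + 1),
        (C + 2 * c * Real.log a + 2 * c * Real.log b) * (μ (a : ℕ∞) * μ (b : ℕ∞)) := by
    apply Finset.sum_le_sum
    intro a _
    apply Finset.sum_le_sum
    intro b _
    rw [hφdef]
    dsimp only
    by_cases hza : μ (a : ℕ∞) = 0
    · rw [hza, zero_mul, mul_zero, mul_zero]
    · by_cases hzb : μ (b : ℕ∞) = 0
      · rw [hzb, mul_zero, mul_zero, mul_zero]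
      · have hb1 := (hμ.bounds hzb).1
        have ha1 := (hμ.bounds hza).1
        apply mul_le_mul_of_nonneg_right _ (mul_nonneg (hμ.nn _) (hμ.nn _))
        have hcast : ((a + b : ℕ) : ℝ) = (a : ℝ) + (b : ℝ) := by push_cast; ring
        rw [hcast, hCdef]
        have := log_add_le ha1 hb1
        nlinarith [this]
  set T0 : ℝ := ∑ a ∈ Finset.range (B + 1), μ (a : ℕ∞) with hT0def
  set T1 : ℝ := ∑ a ∈ Finset.range (B + 1), Real.log a * μ (a : ℕ∞) with hT1def
  have hT0 : T0 = 1 := nice_range_sum hμ (by omega)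
  have halg : ∑ a ∈ Finset.range (B + 1), ∑ b ∈ Finset.range (B + 1),
        (C + 2 * c * Real.log a + 2 * c * Real.log b) * (μ (a : ℕ∞) * μ (b : ℕ∞))
      = C * T0 * T0 + 2 * c * T1 * T0 + 2 * c * T0 * T1 := by
    have h1 : ∀ a ∈ Finset.range (B + 1),
        ∑ b ∈ Finset.range (B + 1),
          (C + 2 * c * Real.log a + 2 * c * Real.log b) * (μ (a : ℕ∞) * μ (b : ℕ∞))
        = ((C + 2 * c * Real.log a) * μ (a : ℕ∞)) * T0 + (2 * c * μ (a : ℕ∞)) * T1 := by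
      intro a _
      rw [hT0def, hT1def, Finset.mul_sum, Finset.mul_sum, ← Finset.sum_add_distrib]
      apply Finset.sum_congr rfl
      intro b _
      ring
    rw [Finset.sum_congr rfl h1, Finset.sum_add_distrib]
    have h2 : ∑ a ∈ Finset.range (B + 1), ((C + 2 * c * Real.log a) * μ (a : ℕ∞)) * T0
        = (C * T0 + 2 * c * T1) * T0 := by
      rw [← Finset.sum_mul]
      congr 1
      have h3 : ∀ a ∈ Finset.range (B + 1), (C + 2 * c * Real.log a) * μ (a : ℕ∞)
          = C * μ (a : ℕ∞) + 2 * c * (Real.log a * μ (a : ℕ∞)) := by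
        intro a _; ring
      rw [Finset.sum_congr rfl h3, Finset.sum_add_distrib, ← Finset.mul_sum,
        ← Finset.mul_sum, hT0def, hT1def]
    have h4 : ∑ a ∈ Finset.range (B + 1), (2 * c * μ (a : ℕ∞)) * T1
        = 2 * c * T0 * T1 := by
      rw [← Finset.sum_mul, ← Finset.mul_sum, hT0def]
    rw [h2, h4]
    ring
  have hT1 : T1 ≤ meanF μ N / (16 * c) + Real.log (16 * c) := by
    have hstep : ∀ a ∈ Finset.range (B + 1), Real.log a * μ (a : ℕ∞)
        ≤ ((a : ℝ) / (16 * c) + Real.log (16 * c)) * μ (a : ℕ∞) := by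
      intro a _
      by_cases hza : μ (a : ℕ∞) = 0
      · rw [hza, mul_zero, mul_zero]
      · apply mul_le_mul_of_nonneg_right _ (hμ.nn _)
        have ha1 : (1 : ℝ) ≤ (a : ℝ) := by exact_mod_cast (hμ.bounds hza).1
        exact log_le_linear hc ha1
    have h5 : ∑ a ∈ Finset.range (B + 1),
          ((a : ℝ) / (16 * c) + Real.log (16 * c)) * μ (a : ℕ∞)
        = (∑ a ∈ Finset.range (B + 1), (a : ℝ) * μ (a : ℕ∞)) / (16 * c)
          + Real.log (16 * c) * T0 := by
      have h6 : ∀ a ∈ Finset.range (B + 1),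
          ((a : ℝ) / (16 * c) + Real.log (16 * c)) * μ (a : ℕ∞)
          = ((a : ℝ) * μ (a : ℕ∞)) / (16 * c) + Real.log (16 * c) * μ (a : ℕ∞) := by
        intro a _; ring
      rw [Finset.sum_congr rfl h6, Finset.sum_add_distrib, ← Finset.sum_div,
        ← Finset.mul_sum, hT0def]
    rw [hT1def]
    calc ∑ a ∈ Finset.range (B + 1), Real.log a * μ (a : ℕ∞)
        ≤ ∑ a ∈ Finset.range (B + 1),
            ((a : ℝ) / (16 * c) + Real.log (16 * c)) * μ (a : ℕ∞) :=
          Finset.sum_le_sum hstep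
      _ = _ := h5
      _ = meanF μ N / (16 * c) + Real.log (16 * c) := by
          rw [mean_range hμ (by omega), hT0, mul_one]
  have hcA : (0 : ℝ) < 4 * c := by linarith
  have hmean4 : 4 * c * (meanF μ N / (16 * c)) = meanF μ N / 4 := by
    field_simp
    ring
  have hKc : Kc c = C + 4 * c * Real.log (16 * c) := by
    rw [hCdef]; unfold Kc; ring
  calc meanF (Fc c μ) (2 * N)
      ≤ ∑ j ∈ Finset.Icc 1 (2 * N), conv μ μ (j : ℕ∞) * φ j := by rw [s1]; exact s2
    _ = ∑ a ∈ Finset.range (B + 1), ∑ b ∈ Finset.range (B + 1),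
          φ (a + b) * (μ (a : ℕ∞) * μ (b : ℕ∞)) := hconv
    _ ≤ C * T0 * T0 + 2 * c * T1 * T0 + 2 * c * T0 * T1 := by rw [← halg]; exact s4
    _ = C + 4 * c * T1 := by rw [hT0]; ring
    _ ≤ C + 4 * c * (meanF μ N / (16 * c) + Real.log (16 * c)) := by nlinarith [hT1]
    _ = C + 4 * c * Real.log (16 * c) + 4 * c * (meanF μ N / (16 * c)) := by ring
    _ = Kc c + meanF μ N / 4 := by rw [hmean4, hKc]

def Mc (c : ℝ) : ℝ := 4 * |Kc c| + 4

lemma mean_iter_le (hc : 0 < c) (n : ℕ) :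
    meanF ((Fc c)^[n] (delta 1)) (2 ^ n) ≤ Mc c := by
  induction n with
  | zero =>
    have : meanF (delta 1) 1 = 1 := by
      unfold meanF delta
      rw [Finset.Icc_self, Finset.sum_singleton]
      rw [if_pos (by rw [Nat.cast_one])]
      norm_num
    simp only [Function.iterate_zero_apply, pow_zero]
    rw [this]
    unfold Mc
    have := abs_nonneg (Kc c)
    linarith
  | succ n ih =>
    rw [Function.iterate_succ_apply']
    have h1 := mean_Fc_le hc (nice_iter hc n) (Nat.one_le_two_pow)
    rw [show 2 * 2 ^ n = 2 ^ (n + 1) by ring] at h1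
    have h2 : Kc c ≤ |Kc c| := le_abs_self _
    unfold Mc
    unfold Mc at ih
    linarith [abs_nonneg (Kc c)]

/-! ### Convolution is nice; its mean -/

lemma nice_conv (hc : 0 < c) (hμ : Nice μ N) (hN : 1 ≤ N) :
    Nice (conv μ μ) (2 * N) := by
  constructor
  · exact conv_nn hμ.nn hμ.nn
  · intro k hk
    induction k using ENat.recTopCoe with
    | top => exact absurd (conv_top' hμ.top_eq hμ.top_eq) hk
    | coe m =>
      by_cases h : m < 2 ∨ N + N < m
      · exact absurd (conv_cast_out hμ hμ h) hk
      · exact ⟨m, by omega, by omega, rfl⟩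
  · have h1 := conv_Icc_sum hc hμ hN (fun _ => (1 : ℝ))
    have h2 : ∀ j ∈ Finset.Icc 1 (2 * N), conv μ μ (j : ℕ∞)
        = conv μ μ (j : ℕ∞) * (fun _ => (1:ℝ)) j := by
      intro j _; rw [mul_one]
    rw [Finset.sum_congr rfl h2, h1]
    have h3 : ∀ a ∈ Finset.range (2 * N + 1),
        ∑ b ∈ Finset.range (2 * N + 1), (fun _ => (1:ℝ)) (a + b) * (μ (a : ℕ∞) * μ (b : ℕ∞))
          = μ (a : ℕ∞) := by
      intro a _
      have h4 : ∀ b ∈ Finset.range (2 * N + 1),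
          (fun _ => (1:ℝ)) (a + b) * (μ (a : ℕ∞) * μ (b : ℕ∞))
            = μ (a : ℕ∞) * μ (b : ℕ∞) := by intro b _; rw [one_mul]
      rw [Finset.sum_congr rfl h4, ← Finset.mul_sum, nice_range_sum hμ (by omega),
        mul_one]
    rw [Finset.sum_congr rfl h3, nice_range_sum hμ (by omega)]

lemma conv_mean (hc : 0 < c) (hμ : Nice μ N) (hN : 1 ≤ N) :
    meanF (conv μ μ) (2 * N) = 2 * meanF μ N := by
  set ψ : ℕ → ℝ := fun j => (j : ℝ) with hψdef
  have h1 := conv_Icc_sum hc hμ hN ψ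
  have h2 : meanF (conv μ μ) (2 * N)
      = ∑ j ∈ Finset.Icc 1 (2 * N), conv μ μ (j : ℕ∞) * ψ j := by
    unfold meanF
    apply Finset.sum_congr rfl
    intro j _
    rw [hψdef, mul_comm]
  rw [h2, h1]
  set T0 : ℝ := ∑ a ∈ Finset.range (2 * N + 1), μ (a : ℕ∞) with hT0def
  set T1 : ℝ := ∑ a ∈ Finset.range (2 * N + 1), (a : ℝ) * μ (a : ℕ∞) with hT1def
  have hT0 : T0 = 1 := nice_range_sum hμ (by omega)
  have hT1 : T1 = meanF μ N := mean_range hμ (by omega)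
  have h3 : ∀ a ∈ Finset.range (2 * N + 1),
      ∑ b ∈ Finset.range (2 * N + 1), ψ (a + b) * (μ (a : ℕ∞) * μ (b : ℕ∞))
        = ((a : ℝ) * μ (a : ℕ∞)) * T0 + μ (a : ℕ∞) * T1 := by
    intro a _
    rw [hT0def, hT1def, Finset.mul_sum, Finset.mul_sum, ← Finset.sum_add_distrib]
    apply Finset.sum_congr rfl
    intro b _
    rw [hψdef]
    push_cast
    ring
  rw [Finset.sum_congr rfl h3, Finset.sum_add_distrib, ← Finset.sum_mul,
    ← Finset.sum_mul, ← hT1def, ← hT0def, hT0, hT1]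
  ring

/-! ### Iterates are CDF-antitone, partial means -/

lemma Cdf_zero_eq (hμ : Nice μ N) : Cdf μ 0 = 0 := by
  unfold Cdf
  rw [Finset.range_one, Finset.sum_singleton, Nat.cast_zero, hμ.zero_eq]

lemma cdf_iter_anti (hc : 0 < c) (n : ℕ) (i : ℕ) :
    Cdf ((Fc c)^[n + 1] (delta 1)) i ≤ Cdf ((Fc c)^[n] (delta 1)) i := by
  induction n generalizing i with
  | zero =>
    simp only [zero_add, Function.iterate_one, Function.iterate_zero_apply]
    rcases Nat.eq_zero_or_pos i with h | h
    · subst h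
      rw [Cdf_zero_eq (nice_Fc hc nice_delta le_rfl), Cdf_zero_eq nice_delta]
    · rw [Cdf_eq_one nice_delta h]
      exact Cdf_le_one (nice_Fc hc nice_delta le_rfl) i
  | succ n ih =>
    rw [Function.iterate_succ_apply', Function.iterate_succ_apply' (Fc c) n]
    have heq : (Fc c)^[n + 1] (delta 1) = Fc c ((Fc c)^[n] (delta 1)) :=
      Function.iterate_succ_apply' (Fc c) n (delta 1)
    have h1 : Nice (Fc c ((Fc c)^[n] (delta 1))) (2 ^ (n + 1)) := by
      rw [← heq]
      exact nice_iter hc (n + 1)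
    have hih : ∀ i, Cdf (Fc c ((Fc c)^[n] (delta 1))) i
        ≤ Cdf ((Fc c)^[n] (delta 1)) i := by
      intro i
      rw [← heq]
      exact ih i
    exact cdf_Fc_mono hc (nice_iter hc n) h1
      Nat.one_le_two_pow Nat.one_le_two_pow hih i

lemma partial_mean_le (hμ : Nice μ N) (J : ℕ) :
    ∑ k ∈ Finset.range J, (k : ℝ) * μ (k : ℕ∞) ≤ meanF μ N := by
  rcases Nat.eq_zero_or_pos J with h | h
  · subst h
    rw [Finset.range_zero, Finset.sum_empty]
    exact meanF_nonneg hμ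
  · obtain ⟨i, rfl⟩ : ∃ i, J = i + 1 := ⟨J - 1, by omega⟩
    rw [helperA (fun k => (k : ℝ) * μ (k : ℕ∞)) (by simp)
      (fun m hm => by
        show (m : ℝ) * μ (m : ℕ∞) = 0
        rw [hμ.cast_out (Or.inr hm), mul_zero]) i]
    unfold meanF
    apply Finset.sum_le_sum
    intro m _
    by_cases hmi : m ≤ i
    · rw [if_pos hmi]
    · rw [if_neg hmi]
      exact mul_nonneg (by positivity) (hμ.nn _)

/-! ### The limit distribution -/

def itn (c : ℝ) (n : ℕ) : ℕ∞ → ℝ := (Fc c)^[n] (delta 1)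

def Lf (c : ℝ) (i : ℕ) : ℝ := ⨅ n : ℕ, Cdf (itn c n) i

def mu1 (c : ℝ) : ℕ∞ → ℝ :=
  fun k => ENat.recTopCoe 0 (fun m => if m = 0 then 0 else Lf c m - Lf c (m - 1)) k

lemma mu1_top (c : ℝ) : mu1 c ⊤ = 0 := rfl

lemma mu1_cast (c : ℝ) (m : ℕ) :
    mu1 c (m : ℕ∞) = if m = 0 then 0 else Lf c m - Lf c (m - 1) := rfl

lemma cast_surj (k : ℕ∞) (hk : k ≠ ⊤) : ∃ m : ℕ, k = (m : ℕ∞) := by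
  induction k using ENat.recTopCoe with
  | top => exact absurd rfl hk
  | coe m => exact ⟨m, rfl⟩

section Limit

variable (hc : 0 < c)
include hc

lemma itn_nice (n : ℕ) : Nice (itn c n) (2 ^ n) := nice_iter hc n

lemma cdf_anti (i : ℕ) : Antitone fun n => Cdf (itn c n) i := by
  apply antitone_nat_of_succ_le
  intro n
  exact cdf_iter_anti hc n i

lemma cdf_bdd (i : ℕ) : BddBelow (Set.range fun n => Cdf (itn c n) i) := by
  refine ⟨0, ?_⟩
  rintro x ⟨n, rfl⟩
  exact Cdf_nonneg (itn_nice hc n) i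

lemma L_tendsto (i : ℕ) :
    Tendsto (fun n => Cdf (itn c n) i) atTop (𝓝 (Lf c i)) :=
  tendsto_atTop_ciInf (cdf_anti hc i) (cdf_bdd hc i)

lemma L_mono : Monotone (Lf c) := by
  intro i i' h
  exact ciInf_mono (cdf_bdd hc i) fun n => Cdf_mono (itn_nice hc n) (by omega)

lemma L_zero : Lf c 0 = 0 := by
  unfold Lf
  have h : ∀ n : ℕ, Cdf (itn c n) 0 = 0 := fun n => Cdf_zero_eq (itn_nice hc n)
  rw [show (fun n => Cdf (itn c n) 0) = fun _ : ℕ => (0:ℝ) from funext h]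
  exact ciInf_const

lemma L_le_one (i : ℕ) : Lf c i ≤ 1 :=
  ciInf_le_of_le (cdf_bdd hc i) 0 (Cdf_le_one (itn_nice hc 0) i)

lemma L_tail {i : ℕ} (hi : 1 ≤ i) : 1 - Mc c / i ≤ Lf c i :=
  le_ciInf fun n => Cdf_markov (itn_nice hc n) hi (mean_iter_le hc n)

lemma mass_tendsto (k : ℕ) :
    Tendsto (fun n => itn c n (k : ℕ∞)) atTop (𝓝 (mu1 c (k : ℕ∞))) := by
  rcases Nat.eq_zero_or_pos k with h | h
  · subst h
    have h1 : (fun n => itn c n ((0 : ℕ) : ℕ∞)) = fun _ : ℕ => (0:ℝ) := by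
      funext n
      rw [Nat.cast_zero]
      exact (itn_nice hc n).zero_eq
    rw [h1, mu1_cast, if_pos rfl]
    exact tendsto_const_nhds
  · have h1 : ∀ n, itn c n (k : ℕ∞) = Cdf (itn c n) k - Cdf (itn c n) (k - 1) := by
      intro n
      unfold Cdf
      obtain ⟨i, rfl⟩ : ∃ i, k = i + 1 := ⟨k - 1, by omega⟩
      rw [Finset.sum_range_succ]
      simp only [Nat.add_sub_cancel]
      ring
    rw [show (fun n => itn c n (k : ℕ∞))
      = fun n => Cdf (itn c n) k - Cdf (itn c n) (k - 1) from funext h1]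
    rw [mu1_cast, if_neg (by omega)]
    exact (L_tendsto hc k).sub (L_tendsto hc (k - 1))

lemma mu1_nonneg (k : ℕ∞) : 0 ≤ mu1 c k := by
  induction k using ENat.recTopCoe with
  | top => exact le_of_eq (mu1_top c).symm
  | coe m =>
    rw [mu1_cast]
    rcases Nat.eq_zero_or_pos m with h | h
    · simp [h]
    · rw [if_neg (by omega)]
      have := L_mono hc (show m - 1 ≤ m by omega)
      linarith

lemma mu1_partial (i : ℕ) :
    ∑ m ∈ Finset.range (i + 1), mu1 c ((m : ℕ) : ℕ∞) = Lf c i := by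
  induction i with
  | zero =>
    rw [Finset.range_one, Finset.sum_singleton, mu1_cast, if_pos rfl, L_zero hc]
  | succ i ih =>
    rw [Finset.sum_range_succ, ih, mu1_cast, if_neg (by omega)]
    simp only [Nat.add_sub_cancel]
    ring

lemma L_tendsto_one : Tendsto (Lf c) atTop (𝓝 1) := by
  have h1 : Tendsto (fun i : ℕ => 1 - Mc c / i) atTop (𝓝 1) := by
    have := (tendsto_const_div_atTop_nhds_zero_nat (Mc c)).const_sub 1
    simpa using this
  apply tendsto_of_tendsto_of_tendsto_of_le_of_le' h1 tendsto_const_nhds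
  · filter_upwards [eventually_ge_atTop 1] with i hi
    exact L_tail hc hi
  · filter_upwards with i
    exact L_le_one hc i

lemma mu1_summable_nat : Summable (fun m : ℕ => mu1 c ((m : ℕ) : ℕ∞)) := by
  apply summable_of_sum_range_le (c := (1:ℝ)) (fun m => mu1_nonneg hc _)
  intro n
  rcases Nat.eq_zero_or_pos n with h | h
  · subst h; simp
  · obtain ⟨i, rfl⟩ : ∃ i, n = i + 1 := ⟨n - 1, by omega⟩
    rw [mu1_partial hc i]
    exact L_le_one hc i

lemma mu1_hasSum_nat : HasSum (fun m : ℕ => mu1 c ((m : ℕ) : ℕ∞)) 1 := by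
  rw [Summable.hasSum_iff_tendsto_nat (mu1_summable_nat hc)]
  have h1 : Tendsto (fun n : ℕ => Lf c (n - 1)) atTop (𝓝 1) :=
    (L_tendsto_one hc).comp (Filter.tendsto_sub_atTop_nat 1)
  apply Tendsto.congr' _ h1
  filter_upwards [eventually_ge_atTop 1] with n hn
  obtain ⟨i, rfl⟩ : ∃ i, n = i + 1 := ⟨n - 1, by omega⟩
  simp only [Nat.add_sub_cancel]
  exact (mu1_partial hc i).symm

lemma mu1_hasSum : HasSum (mu1 c) 1 := by
  have hinj : Function.Injective (Nat.cast : ℕ → ℕ∞) := fun a b h => by exact_mod_cast h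
  have hvanish : ∀ x ∉ Set.range (Nat.cast : ℕ → ℕ∞), mu1 c x = 0 := by
    intro x hx
    by_cases h : x = ⊤
    · rw [h, mu1_top]
    · obtain ⟨m, rfl⟩ := cast_surj x h
      exact absurd ⟨m, rfl⟩ hx
  exact (Function.Injective.hasSum_iff hinj hvanish).mp (mu1_hasSum_nat hc)

lemma mu1_mean_partial (J : ℕ) :
    ∑ k ∈ Finset.range J, (k : ℝ) * mu1 c ((k : ℕ) : ℕ∞) ≤ Mc c := by
  have hn : ∀ n, ∑ k ∈ Finset.range J, (k : ℝ) * itn c n ((k : ℕ) : ℕ∞) ≤ Mc c :=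
    fun n => le_trans (partial_mean_le (itn_nice hc n) J) (mean_iter_le hc n)
  have htend : Tendsto (fun n => ∑ k ∈ Finset.range J, (k : ℝ) * itn c n ((k : ℕ) : ℕ∞))
      atTop (𝓝 (∑ k ∈ Finset.range J, (k : ℝ) * mu1 c ((k : ℕ) : ℕ∞))) := by
    apply tendsto_finset_sum
    intro k _
    exact (mass_tendsto hc k).const_mul _
  exact le_of_tendsto htend (Filter.Eventually.of_forall hn)

lemma mu1_mean_summable : Summable (fun n : ℕ => (n : ℝ) * mu1 c ((n : ℕ) : ℕ∞)) := by
  apply summable_of_sum_range_le (c := Mc c)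
    (fun n => mul_nonneg (by positivity) (mu1_nonneg hc _))
  exact mu1_mean_partial hc

/-! ### The fixed point property -/

lemma nu_tendsto (j : ℕ) :
    Tendsto (fun n => conv (itn c n) (itn c n) (j : ℕ∞)) atTop
      (𝓝 (conv (mu1 c) (mu1 c) (j : ℕ∞))) := by
  rw [conv_cast]
  refine Tendsto.congr (fun n => (conv_cast _ _ j).symm) ?_
  apply tendsto_finset_sum
  intro p _
  by_cases h : p.1 + p.2 = j
  · have h1 : (fun n => if p.1 + p.2 = j
        then itn c n (p.1 : ℕ∞) * itn c n (p.2 : ℕ∞) else 0)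
        = fun n => itn c n (p.1 : ℕ∞) * itn c n (p.2 : ℕ∞) := by
      funext n; rw [if_pos h]
    rw [h1, if_pos h]
    exact (mass_tendsto hc p.1).mul (mass_tendsto hc p.2)
  · have h1 : (fun n => if p.1 + p.2 = j
        then itn c n (p.1 : ℕ∞) * itn c n (p.2 : ℕ∞) else 0)
        = fun _ => (0:ℝ) := by
      funext n; rw [if_neg h]
    rw [h1, if_neg h]
    exact tendsto_const_nhds

lemma FcFin_mu1 {k : ℕ} (hk : 1 ≤ k) : FcFin c (mu1 c) k = mu1 c (k : ℕ∞) := by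
  classical
  set AL : ℕ → ℝ :=
    fun j => if k ≤ j then conv (mu1 c) (mu1 c) (j : ℕ∞) * pK c (j : ℕ∞) k else 0
    with hALdef
  set A : ℕ → ℕ → ℝ :=
    fun n j => if k ≤ j then conv (itn c n) (itn c n) (j : ℕ∞) * pK c (j : ℕ∞) k else 0
    with hAdef
  have hmu1nn : ∀ x, 0 ≤ mu1 c x := mu1_nonneg hc
  have hALnn : ∀ j, 0 ≤ AL j := by
    intro j
    rw [hALdef]
    dsimp only
    by_cases h : k ≤ j
    · rw [if_pos h]
      exact mul_nonneg (conv_nn hmu1nn hmu1nn _) (pK_cast_nonneg hc j k)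
    · rw [if_neg h]
  have hAnn : ∀ n j, 0 ≤ A n j := by
    intro n j
    rw [hAdef]
    dsimp only
    by_cases h : k ≤ j
    · rw [if_pos h]
      exact mul_nonneg (conv_nn (itn_nice hc n).nn (itn_nice hc n).nn _)
        (pK_cast_nonneg hc j k)
    · rw [if_neg h]
  have hA0 : ∀ n, A n 0 = 0 := by
    intro n
    rw [hAdef]
    dsimp only
    rw [if_neg (by omega)]
  have hAout : ∀ n j, 2 * 2 ^ n < j → A n j = 0 := by
    intro n j hj
    rw [hAdef]
    dsimp only
    rw [conv_cast_out (itn_nice hc n) (itn_nice hc n) (Or.inr (by omega)),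
      zero_mul, ite_self]
  have hAtend : ∀ j, Tendsto (fun n => A n j) atTop (𝓝 (AL j)) := by
    intro j
    rw [hAdef, hALdef]
    dsimp only
    by_cases h : k ≤ j
    · simp only [if_pos h]
      exact (nu_tendsto hc j).mul_const _
    · simp only [if_neg h]
      exact tendsto_const_nhds
  have hitn : ∀ n, itn c (n + 1) (k : ℕ∞) = ∑ j ∈ Finset.Icc 1 (2 * 2 ^ n), A n j := by
    intro n
    have h1 : itn c (n + 1) = Fc c (itn c n) := Function.iterate_succ_apply' (Fc c) n _
    rw [h1, Fc_cast_eval c _ hk]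
    exact FcFin_eq hc (itn_nice hc n) k
  have hrange : ∀ n J, ∑ j ∈ Finset.range (J + 1), A n j
      = ∑ j ∈ Finset.Icc 1 (2 * 2 ^ n), (if j ≤ J then A n j else 0) :=
    fun n J => helperA (A n) (hA0 n) (fun j hj => hAout n j hj) J
  -- lower bound
  have hlow : ∀ J, ∑ j ∈ Finset.range (J + 1), AL j ≤ mu1 c (k : ℕ∞) := by
    intro J
    have hn : ∀ n, ∑ j ∈ Finset.range (J + 1), A n j ≤ itn c (n + 1) (k : ℕ∞) := by
      intro n
      rw [hrange n J, hitn n]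
      apply Finset.sum_le_sum
      intro j _
      by_cases h : j ≤ J
      · rw [if_pos h]
      · rw [if_neg h]
        exact hAnn n j
    exact le_of_tendsto_of_tendsto'
      (tendsto_finset_sum _ fun j _ => hAtend j)
      ((mass_tendsto hc k).comp (Filter.tendsto_add_atTop_nat 1)) hn
  have hALsummable : Summable AL := by
    apply summable_of_sum_range_le (c := mu1 c (k : ℕ∞)) hALnn
    intro J
    rcases Nat.eq_zero_or_pos J with h | h
    · subst h
      rw [Finset.range_zero, Finset.sum_empty]
      exact hmu1nn _
    · obtain ⟨i, rfl⟩ : ∃ i, J = i + 1 := ⟨J - 1, by omega⟩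
      exact hlow i
  have htsum_le : ∑' j, AL j ≤ mu1 c (k : ℕ∞) := by
    apply Summable.tsum_le_of_sum_range_le hALsummable
    intro J
    rcases Nat.eq_zero_or_pos J with h | h
    · subst h
      rw [Finset.range_zero, Finset.sum_empty]
      exact hmu1nn _
    · obtain ⟨i, rfl⟩ : ∃ i, J = i + 1 := ⟨J - 1, by omega⟩
      exact hlow i
  -- upper bound
  have hup : mu1 c (k : ℕ∞) ≤ ∑' j, AL j := by
    have hJ : ∀ J : ℕ, 1 ≤ J →
        mu1 c (k : ℕ∞) ≤ (∑ j ∈ Finset.range (J + 1), AL j) + 2 * Mc c / J := by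
      intro J hJ1
      have hJR : (1 : ℝ) ≤ (J : ℝ) := by exact_mod_cast hJ1
      have hn : ∀ n, itn c (n + 1) (k : ℕ∞)
          ≤ (∑ j ∈ Finset.range (J + 1), A n j) + 2 * Mc c / J := by
        intro n
        rw [hitn n, hrange n J]
        have hsplit : ∑ j ∈ Finset.Icc 1 (2 * 2 ^ n), A n j
            = (∑ j ∈ Finset.Icc 1 (2 * 2 ^ n), (if j ≤ J then A n j else 0))
              + ∑ j ∈ Finset.Icc 1 (2 * 2 ^ n), (if j ≤ J then 0 else A n j) := by
          rw [← Finset.sum_add_distrib]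
          apply Finset.sum_congr rfl
          intro j _
          by_cases h : j ≤ J
          · rw [if_pos h, if_pos h, add_zero]
          · rw [if_neg h, if_neg h, zero_add]
        rw [hsplit]
        apply add_le_add_right
        have h2 : ∑ j ∈ Finset.Icc 1 (2 * 2 ^ n), (if j ≤ J then 0 else A n j)
            ≤ ∑ j ∈ Finset.Icc (1:ℕ) (2 * 2 ^ n),
                ((j : ℝ) / (J:ℝ)) * conv (itn c n) (itn c n) ((j:ℕ) : ℕ∞) := by
          apply Finset.sum_le_sum
          intro j hj
          simp only [Finset.mem_Icc] at hj
          have hconvnn : 0 ≤ conv (itn c n) (itn c n) (j : ℕ∞) :=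
            conv_nn (itn_nice hc n).nn (itn_nice hc n).nn _
          by_cases h : j ≤ J
          · rw [if_pos h]
            have : 0 ≤ (j : ℝ) / J := by positivity
            exact mul_nonneg this hconvnn
          · rw [if_neg h]
            have hjJ : (J : ℝ) ≤ (j : ℝ) := by exact_mod_cast (by omega : J ≤ j)
            have h1 : (1 : ℝ) ≤ (j : ℝ) / J := by
              rw [le_div_iff₀ (by linarith)]
              linarith
            rw [hAdef]
            dsimp only
            by_cases hkj : k ≤ j
            · rw [if_pos hkj]
              calc conv (itn c n) (itn c n) (j : ℕ∞) * pK c (j : ℕ∞) k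
                  ≤ conv (itn c n) (itn c n) (j : ℕ∞) * 1 :=
                    mul_le_mul_of_nonneg_left (pK_cast_le_one hc j k) hconvnn
                _ = conv (itn c n) (itn c n) (j : ℕ∞) := mul_one _
                _ ≤ ((j : ℝ) / J) * conv (itn c n) (itn c n) (j : ℕ∞) := by
                    nlinarith
            · rw [if_neg hkj]
              exact mul_nonneg (by positivity) hconvnn
        have h3 : ∑ j ∈ Finset.Icc (1:ℕ) (2 * 2 ^ n),
              ((j : ℝ) / (J:ℝ)) * conv (itn c n) (itn c n) ((j:ℕ) : ℕ∞)
            = meanF (conv (itn c n) (itn c n)) (2 * 2 ^ n) / J := by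
          unfold meanF
          rw [Finset.sum_div]
          apply Finset.sum_congr rfl
          intro j _
          ring
        have h4 : meanF (conv (itn c n) (itn c n)) (2 * 2 ^ n)
            = 2 * meanF (itn c n) (2 ^ n) :=
          conv_mean hc (itn_nice hc n) Nat.one_le_two_pow
        have h5 : meanF (itn c n) (2 ^ n) ≤ Mc c := mean_iter_le hc n
        calc ∑ j ∈ Finset.Icc 1 (2 * 2 ^ n), (if j ≤ J then 0 else A n j)
            ≤ _ := h2
          _ = meanF (conv (itn c n) (itn c n)) (2 * 2 ^ n) / J := h3
          _ = 2 * meanF (itn c n) (2 ^ n) / J := by rw [h4]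
          _ ≤ 2 * Mc c / J := by
              apply div_le_div_of_nonneg_right ?_ ?_ |>.trans_eq rfl
              · linarith
              · linarith
      refine le_of_tendsto_of_tendsto'
        ((mass_tendsto hc k).comp (Filter.tendsto_add_atTop_nat 1))
        (Tendsto.add_const _ (tendsto_finset_sum _ fun j _ => hAtend j)) hn
    have htendJ : Tendsto
        (fun J : ℕ => (∑ j ∈ Finset.range (J + 1), AL j) + 2 * Mc c / J) atTop
        (𝓝 ((∑' j, AL j) + 0)) := by
      apply Tendsto.add
      · exact hALsummable.hasSum.tendsto_sum_nat.comp (Filter.tendsto_add_atTop_nat 1)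
      · exact tendsto_const_div_atTop_nhds_zero_nat _
    rw [add_zero] at htendJ
    apply ge_of_tendsto htendJ
    filter_upwards [eventually_ge_atTop 1] with J hJ1
    exact hJ J hJ1
  have htsum : ∑' j, AL j = mu1 c (k : ℕ∞) := le_antisymm htsum_le hup
  -- identify with the `ℕ∞` sum
  have hinj : Function.Injective (Nat.cast : ℕ → ℕ∞) := fun a b h => by exact_mod_cast h
  set F : ℕ∞ → ℝ :=
    fun j => if (k : ℕ∞) ≤ j then conv (mu1 c) (mu1 c) j * pK c j k else 0 with hFdef
  have hvanish : ∀ x ∉ Set.range (Nat.cast : ℕ → ℕ∞), F x = 0 := by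
    intro x hx
    by_cases h : x = ⊤
    · rw [hFdef]
      dsimp only
      rw [h, conv_top' (mu1_top c) (mu1_top c), zero_mul, ite_self]
    · obtain ⟨m, rfl⟩ := cast_surj x h
      exact absurd ⟨m, rfl⟩ hx
  have hcomp : F ∘ (Nat.cast : ℕ → ℕ∞) = AL := by
    funext j
    rw [hFdef, hALdef]
    simp only [Function.comp_apply]
    by_cases h : k ≤ j
    · rw [if_pos (by exact_mod_cast h), if_pos h]
    · rw [if_neg (fun hh => h (by exact_mod_cast hh)), if_neg h]
  have hhs : HasSum AL (mu1 c (k : ℕ∞)) := htsum ▸ hALsummable.hasSum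
  have hFs : HasSum F (mu1 c (k : ℕ∞)) :=
    (Function.Injective.hasSum_iff hinj hvanish).mp (by rwa [hcomp])
  exact hFs.tsum_eq

lemma FcFin_mu1_zero : FcFin c (mu1 c) 0 = 0 := by
  unfold FcFin
  have hall : ∀ j : ℕ∞,
      (if ((0 : ℕ) : ℕ∞) ≤ j then conv (mu1 c) (mu1 c) j * pK c j 0 else 0) = 0 := by
    intro j
    rw [if_pos (by rw [Nat.cast_zero]; exact zero_le)]
    induction j using ENat.recTopCoe with
    | top => rw [conv_top' (mu1_top c) (mu1_top c), zero_mul]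
    | coe m =>
      rcases Nat.eq_zero_or_pos m with h | h
      · subst h
        have : conv (mu1 c) (mu1 c) ((0 : ℕ) : ℕ∞) = 0 := by
          rw [conv_cast]
          apply Finset.sum_eq_zero
          rintro ⟨a, b⟩ hp
          simp only [Finset.mem_product, Finset.mem_range] at hp
          have ha : a = 0 := by omega
          subst ha
          dsimp only
          rw [show mu1 c ((0:ℕ) : ℕ∞) = 0 from by rw [mu1_cast, if_pos rfl],
            zero_mul, ite_self]
        rw [this, zero_mul]
      · have hpk : pK c ((m : ℕ) : ℕ∞) 0 = 0 := by
          rw [pK_cast]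
          have h1 : (1 : ℕ) ∈ Finset.Icc (0 + 1) m := by
            simp only [Finset.mem_Icc]; omega
          rw [show G c 0 m = 0 from Finset.prod_eq_zero h1 (kf_one c), mul_zero]
        rw [hpk, mul_zero]
  rw [tsum_congr hall, tsum_zero]

lemma Fc_mu1_fix : Fc c (mu1 c) = mu1 c := by
  funext k
  induction k using ENat.recTopCoe with
  | top =>
    have h1 : Fc c (mu1 c) ⊤ = 1 - ∑' n : ℕ, FcFin c (mu1 c) n := by simp [Fc]
    have h2 : ∀ n : ℕ, FcFin c (mu1 c) n = mu1 c ((n : ℕ) : ℕ∞) := by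
      intro n
      rcases Nat.eq_zero_or_pos n with h | h
      · subst h
        rw [FcFin_mu1_zero hc, mu1_cast, if_pos rfl]
      · exact FcFin_mu1 hc h
    rw [h1, tsum_congr h2, (mu1_hasSum_nat hc).tsum_eq, mu1_top]
    ring
  | coe m =>
    rcases Nat.eq_zero_or_pos m with h | h
    · subst h
      rw [Nat.cast_zero, Fc_zero_eval]
      have h0 : mu1 c ((0:ℕ) : ℕ∞) = 0 := by rw [mu1_cast, if_pos rfl]
      rw [Nat.cast_zero] at h0
      exact h0.symm
    · rw [Fc_cast_eval c _ h, FcFin_mu1 hc h]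

end Limit

end KC
end KCProof

/-- The iterates `F_cⁿ(δ₁)` are nondecreasing in the stochastic order
and converge weakly to a limit `μ₁` supported on `ℕ⁺` with finite mean and `F_c(μ₁) = μ₁`. -/
theorem iterates_delta_one (c : ℝ) (hc : 0 < c) :
    ∃ μ₁ : ℕ∞ → ℝ,
      (∀ n : ℕ, StDom ((Fc c)^[n] (delta 1)) ((Fc c)^[n + 1] (delta 1))) ∧
      (∀ k : ℕ, Tendsto (fun n : ℕ => (Fc c)^[n] (delta 1) (k : ℕ∞)) atTop (𝓝 (μ₁ (k : ℕ∞)))) ∧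
      MemS1 μ₁ ∧ Fc c μ₁ = μ₁ := by
  refine ⟨KC.mu1 c, ?_, ?_, ?_, ?_⟩
  · intro n
    exact KC.stdom_of_cdf (KC.nice_iter hc n) (KC.nice_iter hc (n + 1))
      (fun i => KC.cdf_iter_anti hc n i)
  · intro k
    exact KC.mass_tendsto hc k
  · refine ⟨⟨KC.mu1_nonneg hc, ?_, KC.mu1_hasSum hc⟩, KC.mu1_top c,
      KC.mu1_mean_summable hc⟩
    have h0 : KC.mu1 c ((0 : ℕ) : ℕ∞) = 0 := by rw [KC.mu1_cast, if_pos rfl]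
    rwa [Nat.cast_zero] at h0
  · exact KC.Fc_mu1_fix hc
end

section
/- Let c > 0 and let μ ∈ S₁ satisfy F_c(μ) = μ, with probability generating function R(x) = Σ_{i=1}^∞ μ({i}) x^i. Then R(0) = 0, R(1) = 1, R'(x) > 0 for all x ∈ [0,1], and R(x) = R(x)² + (x(1-x)/(2c)) R''(x) for all x ∈ [0,1). -/
open Filter Topology Set

open Filter Topology Set

private lemma sumPoly {x : ℝ} (hx : |x| < 1) (a b : ℝ) :
    Summable (fun n : ℕ => ((n : ℝ) + a) * ((n : ℝ) + b) * x ^ n) := by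
  have h2 : Summable (fun n : ℕ => ((n : ℝ)) ^ 2 * x ^ n) := by
    simpa using summable_pow_mul_geometric_of_norm_lt_one 2 (by rwa [Real.norm_eq_abs])
  have h1 : Summable (fun n : ℕ => (n : ℝ) * x ^ n) := by
    simpa using summable_pow_mul_geometric_of_norm_lt_one 1 (by rwa [Real.norm_eq_abs])
  have h0 : Summable (fun n : ℕ => x ^ n) :=
    summable_geometric_of_norm_lt_one (by rwa [Real.norm_eq_abs])
  exact ((h2.add (h1.mul_left (a + b))).add (h0.mul_left (a * b))).congr
    (fun n => by ring)

private lemma sumPoly1 {x : ℝ} (hx : |x| < 1) (a : ℝ) :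
    Summable (fun n : ℕ => ((n : ℝ) + a) * x ^ n) := by
  have h1 : Summable (fun n : ℕ => (n : ℝ) * x ^ n) := by
    simpa using summable_pow_mul_geometric_of_norm_lt_one 1 (by rwa [Real.norm_eq_abs])
  have h0 : Summable (fun n : ℕ => x ^ n) :=
    summable_geometric_of_norm_lt_one (by rwa [Real.norm_eq_abs])
  exact (h1.add (h0.mul_left a)).congr (fun n => by ring)

private lemma hasDerivAt_tsum_poly (a : ℕ → ℝ) (C : ℝ)
    (hC : ∀ k, |a k| ≤ C * ((k : ℝ) + 1)) {y : ℝ} (hy : |y| < 1) :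
    HasDerivAt (fun z : ℝ => ∑' k : ℕ, a k * z ^ k)
      (∑' k : ℕ, ((k : ℝ) + 1) * a (k + 1) * y ^ k) y := by
  have hC0 : 0 ≤ C := by have := (abs_nonneg (a 0)).trans (hC 0); push_cast at this; linarith
  set r : ℝ := (|y| + 1) / 2 with hrdef
  have hy0 : 0 ≤ |y| := abs_nonneg y
  have hr0 : 0 < r := by rw [hrdef]; linarith
  have hyr : |y| < r := by rw [hrdef]; linarith
  have hr1 : r < 1 := by rw [hrdef]; linarith
  have hrabs : |r| < 1 := by rw [abs_of_nonneg hr0.le]; exact hr1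
  set u : ℕ → ℝ := fun k => C * ((k : ℝ) + 1) * (k : ℝ) * r ^ (k - 1) with hudef
  have hu : Summable u := by
    rw [← summable_nat_add_iff 1]
    refine ((sumPoly hrabs 2 1).mul_left C).congr (fun n => ?_)
    show C * (((n:ℝ) + 2) * ((n:ℝ) + 1) * r ^ n)
      = C * ((((n+1:ℕ)) : ℝ) + 1) * (((n+1:ℕ)) : ℝ) * r ^ ((n+1) - 1)
    simp only [Nat.add_sub_cancel]
    push_cast
    ring
  have hg : ∀ (k : ℕ) (z : ℝ), z ∈ Metric.ball (0 : ℝ) r →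
      HasDerivAt (fun w : ℝ => a k * w ^ k) (a k * ((k : ℝ) * z ^ (k - 1))) z :=
    fun k z _ => (hasDerivAt_pow k z).const_mul (a k)
  have hg' : ∀ (k : ℕ) (z : ℝ), z ∈ Metric.ball (0 : ℝ) r →
      ‖a k * ((k : ℝ) * z ^ (k - 1))‖ ≤ u k := by
    intro k z hz
    rw [mem_ball_zero_iff, Real.norm_eq_abs] at hz
    cases k with
    | zero => simp [hudef]
    | succ m =>
        rw [Real.norm_eq_abs, abs_mul, abs_mul, abs_pow]
        simp only [hudef, Nat.add_sub_cancel]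
        have h1 : |a (m + 1)| ≤ C * ((m : ℝ) + 1 + 1) := by
          have := hC (m + 1); push_cast at this ⊢; linarith
        have h2 : |z| ^ m ≤ r ^ m := pow_le_pow_left₀ (abs_nonneg z) hz.le m
        have h3 : (0 : ℝ) ≤ |(((m : ℕ) + 1 : ℕ) : ℝ)| := abs_nonneg _
        calc |a (m + 1)| * (|(((m : ℕ) + 1 : ℕ) : ℝ)| * |z| ^ m)
            ≤ (C * ((m : ℝ) + 1 + 1)) * (|(((m : ℕ) + 1 : ℕ) : ℝ)| * r ^ m) := by
              apply mul_le_mul h1 (by gcongr) (by positivity) (by positivity)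
          _ = C * (((m : ℕ) + 1 : ℕ) + 1 : ℝ) * (((m : ℕ) + 1 : ℕ) : ℝ) * r ^ m := by
              push_cast
              rw [abs_of_nonneg (by positivity : (0:ℝ) ≤ (m : ℝ) + 1)]
              ring
  have h0mem : (0 : ℝ) ∈ Metric.ball (0 : ℝ) r := by
    rw [mem_ball_zero_iff]; simpa using hr0
  have hg0 : Summable (fun k : ℕ => a k * (0 : ℝ) ^ k) := by
    apply summable_of_ne_finset_zero (s := {0})
    intro b hb
    rw [zero_pow (by simpa using hb), mul_zero]
  have hymem : y ∈ Metric.ball (0 : ℝ) r := by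
    rw [mem_ball_zero_iff, Real.norm_eq_abs]; exact hyr
  have key := hasDerivAt_tsum_of_isPreconnected hu Metric.isOpen_ball
    (convex_ball (0 : ℝ) r).isPreconnected hg hg' h0mem hg0 hymem
  have hsum : Summable (fun k : ℕ => a k * ((k : ℝ) * y ^ (k - 1))) :=
    Summable.of_norm_bounded hu (fun k => hg' k y hymem)
  have hshift : ∑' k : ℕ, a k * ((k : ℝ) * y ^ (k - 1))
      = ∑' k : ℕ, ((k : ℝ) + 1) * a (k + 1) * y ^ k := by
    rw [Summable.tsum_eq_zero_add hsum]
    simp only [Nat.cast_zero, zero_mul, mul_zero, zero_add]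
    
    exact tsum_congr fun k => by simp only [Nat.add_sub_cancel]; push_cast; ring
  rw [hshift] at key
  exact key
private lemma norm_term_le {A B b x : ℝ} (k : ℕ) (hA : |A| ≤ B) (hb : |b| ≤ 1) :
    ‖A * b * x ^ k‖ ≤ B * |x| ^ k := by
  rw [Real.norm_eq_abs, abs_mul, abs_mul, abs_pow]
  have h0 : 0 ≤ |A| := abs_nonneg A
  have hB : 0 ≤ B := h0.trans hA
  have h1 : (0:ℝ) ≤ |x| ^ k := by positivity
  calc |A| * |b| * |x| ^ k ≤ (B * 1) * |x| ^ k := by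
        apply mul_le_mul (mul_le_mul hA hb (abs_nonneg b) hB) le_rfl h1 (by nlinarith)
    _ = B * |x| ^ k := by ring

private lemma pgf_analytic (c : ℝ) (hc : 0 < c) (q ν : ℕ → ℝ)
    (hq : ∀ k, 0 ≤ q k) (hq0 : q 0 = 0) (hqs : HasSum q 1)
    (hmean : Summable (fun k : ℕ => (k : ℝ) * q k))
    (hrec : ∀ k : ℕ, ((k : ℝ) * ((k : ℝ) - 1) / 2 + c) * q k
      = c * ν k + ((k : ℝ) + 1) * (k : ℝ) / 2 * q (k + 1))
    (hνf : ∀ n : ℕ, ν n = ∑ p ∈ Finset.HasAntidiagonal.antidiagonal n, q p.1 * q p.2)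
    (hq1 : 0 < q 1)
    (R : ℝ → ℝ) (hR : R = fun x => ∑' i : ℕ, q i * x ^ i) :
    R 0 = 0 ∧ R 1 = 1 ∧
    (∀ x ∈ Set.Icc (0 : ℝ) 1, 0 < derivWithin R (Set.Icc (0 : ℝ) 1) x) ∧
    ∀ x ∈ Set.Ico (0 : ℝ) 1,
      R x = (R x) ^ 2 + x * (1 - x) / (2 * c) * deriv (deriv R) x := by
  have hqle : ∀ k, q k ≤ 1 := by
    intro k
    have := Summable.le_tsum hqs.summable k (fun j _ => hq j)
    rwa [hqs.tsum_eq] at this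
  have habs : ∀ k, |q k| ≤ 1 := fun k => abs_le.2 ⟨by linarith [hq k], hqle k⟩
  set R1fun : ℝ → ℝ := fun y => ∑' k : ℕ, ((k : ℝ) + 1) * q (k + 1) * y ^ k with hR1def
  set R2fun : ℝ → ℝ := fun y => ∑' k : ℕ, ((k : ℝ) + 2) * ((k : ℝ) + 1) * q (k + 2) * y ^ k
    with hR2def
  have hDer1 : ∀ y : ℝ, |y| < 1 → HasDerivAt R (R1fun y) y := by
    intro y hy
    rw [hR]
    have h := hasDerivAt_tsum_poly q 1
      (fun k => by rw [one_mul]; exact (habs k).trans (by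
        have : (0:ℝ) ≤ (k:ℝ) := Nat.cast_nonneg k
        linarith)) hy
    exact h
  have hDer2 : ∀ y : ℝ, |y| < 1 → HasDerivAt R1fun (R2fun y) y := by
    intro y hy
    have hb : ∀ k : ℕ, |((k : ℝ) + 1) * q (k + 1)| ≤ 1 * ((k : ℝ) + 1) := by
      intro k
      have hk : (0:ℝ) ≤ (k:ℝ) := Nat.cast_nonneg k
      rw [abs_mul, abs_of_nonneg (by linarith : (0:ℝ) ≤ (k:ℝ) + 1), one_mul]
      nlinarith [habs (k + 1), abs_nonneg (q (k+1))]
    have h := hasDerivAt_tsum_poly (fun k => ((k : ℝ) + 1) * q (k + 1)) 1 hb hy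
    have hconv : ∑' k : ℕ, ((k : ℝ) + 1) * ((((k + 1 : ℕ)) : ℝ) + 1) * q ((k + 1) + 1) * y ^ k
      = R2fun y := tsum_congr fun k => by push_cast; ring_nf
    rw [hR1def]
    convert h using 1
    rw [← hconv]
    exact tsum_congr fun k => by push_cast; ring
  have hderiv2 : ∀ x : ℝ, |x| < 1 → deriv (deriv R) x = R2fun x := by
    intro x hx
    obtain ⟨hx1, hx2⟩ := abs_lt.1 hx
    have hsub : Ioo (-1 : ℝ) 1 ∈ 𝓝 x := isOpen_Ioo.mem_nhds ⟨hx1, hx2⟩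
    have hev : deriv R =ᶠ[𝓝 x] R1fun :=
      eventually_of_mem hsub (fun y hy => (hDer1 y (abs_lt.2 ⟨hy.1, hy.2⟩)).deriv)
    rw [hev.deriv_eq, (hDer2 x hx).deriv]
  have hR0 : R 0 = 0 := by
    rw [hR]
    have h : ∀ i : ℕ, q i * (0 : ℝ) ^ i = 0 := by
      intro i
      cases i with
      | zero => simp [hq0]
      | succ n => simp
    simp only [h]
    exact tsum_zero
  have hR1 : R 1 = 1 := by
    rw [hR]
    simp only [one_pow, mul_one]
    exact hqs.tsum_eq
  refine ⟨hR0, hR1, ?_, ?_⟩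
  · -- positivity of derivWithin
    intro x hx
    rcases eq_or_lt_of_le hx.2 with heq | hlt
    · -- x = 1
      subst heq
      have hMsum : Summable (fun k : ℕ => q k * (k : ℝ)) :=
        hmean.congr (fun k => mul_comm _ _)
      set M : ℝ := ∑' k : ℕ, q k * (k : ℝ) with hMdef
      have hDW : HasDerivWithinAt R M (Set.Icc (0 : ℝ) 1) 1 := by
        rw [hasDerivWithinAt_iff_tendsto_slope]
        set φ : ℝ → ℝ := fun y => max 0 (min y 1) with hφdef
        have hφc : Continuous φ := continuous_const.max (continuous_id.min continuous_const)
        have hφ1 : φ 1 = 1 := by norm_num [hφdef]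
        have hφ0 : ∀ y, 0 ≤ φ y := fun y => le_max_left _ _
        have hφle : ∀ y, φ y ≤ 1 := fun y => max_le (by norm_num) (min_le_right _ _)
        set g : ℝ → ℕ → ℝ := fun y k => q k * ∑ i ∈ Finset.range k, (φ y) ^ i with hgdef
        have htend : ∀ k, Tendsto (fun y => g y k) (𝓝[Set.Icc (0:ℝ) 1 \ {1}] 1)
            (𝓝 (q k * (k : ℝ))) := by
          intro k
          have hc2 : Continuous (fun y => g y k) :=
            continuous_const.mul (continuous_finset_sum _ (fun i _ => hφc.pow i))
          have h := (hc2.tendsto 1).mono_left (nhdsWithin_le_nhds (s := Set.Icc (0:ℝ) 1 \ {1}))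
          have : g 1 k = q k * (k : ℝ) := by
            simp [hgdef, hφ1]
          rwa [this] at h
        have hb : ∀ (y : ℝ) (k : ℕ), ‖g y k‖ ≤ q k * (k : ℝ) := by
          intro y k
          have h1 : 0 ≤ ∑ i ∈ Finset.range k, (φ y) ^ i :=
            Finset.sum_nonneg fun i _ => pow_nonneg (hφ0 y) i
          have h2 : ∑ i ∈ Finset.range k, (φ y) ^ i ≤ (k : ℝ) := by
            calc ∑ i ∈ Finset.range k, (φ y) ^ i ≤ ∑ _i ∈ Finset.range k, (1:ℝ) :=
                  Finset.sum_le_sum fun i _ => pow_le_one₀ (hφ0 y) (hφle y)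
              _ = (k : ℝ) := by simp
          rw [hgdef, Real.norm_eq_abs, abs_mul, abs_of_nonneg (hq k), abs_of_nonneg h1]
          exact mul_le_mul_of_nonneg_left h2 (hq k)
        have hT := tendsto_tsum_of_dominated_convergence hMsum htend
          (Filter.Eventually.of_forall hb)
        have heq : (fun y => ∑' k, g y k) =ᶠ[𝓝[Set.Icc (0:ℝ) 1 \ {1}] 1] slope R 1 := by
          filter_upwards [self_mem_nhdsWithin] with y hy
          obtain ⟨⟨hy0, hy1⟩, hyne⟩ := hy
          have hyne' : y ≠ 1 := by simpa using hyne
          have hφy : φ y = y := by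
            rw [hφdef]; simp only []
            rw [min_eq_left hy1, max_eq_right hy0]
          have hsub1 : y - 1 ≠ 0 := sub_ne_zero.2 hyne'
          have hsy : Summable (fun k => q k * y ^ k) :=
            Summable.of_nonneg_of_le
              (fun k => mul_nonneg (hq k) (pow_nonneg hy0 k))
              (fun k => mul_le_of_le_one_right (hq k) (pow_le_one₀ hy0 hy1))
              hqs.summable
          have hs1 : Summable (fun k => q k * (1:ℝ) ^ k) :=
            hqs.summable.congr (fun k => by rw [one_pow, mul_one])
          show ∑' k, g y k = slope R 1 y
          rw [slope_def_field, hR]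
          simp only []
          rw [← Summable.tsum_sub hsy hs1, ← tsum_div_const]
          refine tsum_congr fun k => ?_
          rw [hgdef]
          simp only [hφy]
          rw [eq_div_iff hsub1]
          have hgs := geom_sum_mul y k
          rw [one_pow]
          linear_combination q k * hgs
        exact hT.congr' heq
      rw [hDW.derivWithin (uniqueDiffOn_Icc one_pos 1 (by norm_num))]
      have hle : q 1 * ((1:ℕ):ℝ) ≤ M :=
        Summable.le_tsum hMsum 1 (fun j _ => mul_nonneg (hq j) (Nat.cast_nonneg j))
      simp only [Nat.cast_one, mul_one] at hle
      linarith
    · -- x < 1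
      have hx' : |x| < 1 := abs_lt.2 ⟨by linarith [hx.1], hlt⟩
      rw [(hDer1 x hx').differentiableAt.derivWithin (uniqueDiffOn_Icc one_pos x hx),
        (hDer1 x hx').deriv]
      have habs' : |(|x|)| < 1 := by rwa [abs_abs]
      have sR1 : Summable (fun k : ℕ => ((k : ℝ) + 1) * q (k + 1) * x ^ k) := by
        refine Summable.of_norm_bounded
          (sumPoly1 habs' 1) (fun k => ?_)
        exact norm_term_le k (by
          rw [abs_of_nonneg (by positivity : (0:ℝ) ≤ (k:ℝ)+1)]) (habs (k+1))
      have hterm0 : (((0:ℕ):ℝ) + 1) * q (0 + 1) * x ^ 0 = q 1 := by norm_num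
      have hle := Summable.le_tsum sR1 0 (fun j _ =>
        mul_nonneg (mul_nonneg (by positivity) (hq (j+1))) (pow_nonneg hx.1 j))
      rw [hterm0] at hle
      have : q 1 ≤ R1fun x := hle
      linarith
  · -- the ODE
    intro x hx
    have hx' : |x| < 1 := abs_lt.2 ⟨by linarith [hx.1], hx.2⟩
    have habs' : |(|x|)| < 1 := by rwa [abs_abs]
    have sgeo : Summable (fun k : ℕ => |x| ^ k) :=
      summable_geometric_of_norm_lt_one (by rwa [Real.norm_eq_abs, abs_abs])
    have snorm : Summable (fun k : ℕ => ‖q k * x ^ k‖) := by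
      refine Summable.of_nonneg_of_le (fun k => norm_nonneg _) (fun k => ?_) sgeo
      rw [Real.norm_eq_abs, abs_mul, abs_pow]
      exact mul_le_of_le_one_left (by positivity) (habs k)
    have s0 : Summable (fun k : ℕ => q k * x ^ k) := snorm.of_norm
    have sT2 : Summable (fun k : ℕ => (k:ℝ) * ((k:ℝ) - 1) / 2 * q k * x ^ k) := by
      refine Summable.of_norm_bounded
        (sumPoly habs' 1 1) (fun k => ?_)
      refine norm_term_le k ?_ (habs k)
      have hk : (0:ℝ) ≤ (k:ℝ) := Nat.cast_nonneg k
      rw [abs_le]; constructor <;> nlinarith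
    have sT1 : Summable (fun k : ℕ => ((k:ℝ)+1) * (k:ℝ) / 2 * q (k+1) * x ^ k) := by
      refine Summable.of_norm_bounded
        (sumPoly habs' 1 1) (fun k => ?_)
      refine norm_term_le k ?_ (habs (k+1))
      have hk : (0:ℝ) ≤ (k:ℝ) := Nat.cast_nonneg k
      rw [abs_le]; constructor <;> nlinarith
    have hterm : ∀ n : ℕ, ∑ kl ∈ Finset.HasAntidiagonal.antidiagonal n,
        (q kl.1 * x ^ kl.1) * (q kl.2 * x ^ kl.2) = ν n * x ^ n := by
      intro n
      rw [hνf n, Finset.sum_mul]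
      refine Finset.sum_congr rfl fun p hp => ?_
      rw [Finset.HasAntidiagonal.mem_antidiagonal] at hp
      rw [← hp, pow_add]
      ring
    have hν_norm : Summable (fun n : ℕ => ‖ν n * x ^ n‖) := by
      have h := summable_norm_sum_mul_antidiagonal_of_summable_norm snorm snorm
      exact h.congr (fun n => by rw [hterm n])
    have sνx : Summable (fun n : ℕ => ν n * x ^ n) := hν_norm.of_norm
    have hcauchy : (∑' k : ℕ, q k * x ^ k) * (∑' k : ℕ, q k * x ^ k)
        = ∑' n : ℕ, ν n * x ^ n := by
      rw [tsum_mul_tsum_eq_tsum_sum_antidiagonal_of_summable_norm snorm snorm]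
      exact tsum_congr hterm
    have key : ∑' k : ℕ, (((k:ℝ) * ((k:ℝ) - 1) / 2 + c) * q k) * x ^ k
        = ∑' k : ℕ, (c * ν k + ((k:ℝ)+1) * (k:ℝ) / 2 * q (k+1)) * x ^ k :=
      tsum_congr fun k => by rw [hrec k]
    have hL : ∑' k : ℕ, (((k:ℝ) * ((k:ℝ) - 1) / 2 + c) * q k) * x ^ k
        = (∑' k : ℕ, (k:ℝ) * ((k:ℝ) - 1) / 2 * q k * x ^ k)
          + c * ∑' k : ℕ, q k * x ^ k := by
      rw [tsum_congr (fun k : ℕ => show (((k:ℝ) * ((k:ℝ) - 1) / 2 + c) * q k) * x ^ k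
        = (k:ℝ) * ((k:ℝ) - 1) / 2 * q k * x ^ k + c * (q k * x ^ k) from by ring)]
      rw [Summable.tsum_add sT2 (s0.mul_left c), tsum_mul_left]
    have hRr : ∑' k : ℕ, (c * ν k + ((k:ℝ)+1) * (k:ℝ) / 2 * q (k+1)) * x ^ k
        = c * (∑' n : ℕ, ν n * x ^ n)
          + ∑' k : ℕ, ((k:ℝ)+1) * (k:ℝ) / 2 * q (k+1) * x ^ k := by
      rw [tsum_congr (fun k : ℕ => show (c * ν k + ((k:ℝ)+1) * (k:ℝ) / 2 * q (k+1)) * x ^ k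
        = c * (ν k * x ^ k) + ((k:ℝ)+1) * (k:ℝ) / 2 * q (k+1) * x ^ k from by ring)]
      rw [Summable.tsum_add (sνx.mul_left c) sT1, tsum_mul_left]
    have hT2 : ∑' k : ℕ, (k:ℝ) * ((k:ℝ) - 1) / 2 * q k * x ^ k = x^2 / 2 * R2fun x := by
      rw [Summable.tsum_eq_zero_add sT2, Summable.tsum_eq_zero_add ((summable_nat_add_iff 1).2 sT2)]
      have hsh : ∀ b : ℕ, (((b+1+1:ℕ)):ℝ) * ((((b+1+1:ℕ)):ℝ) - 1) / 2 * q (b+1+1) * x ^ (b+1+1)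
          = x^2 / 2 * (((b:ℝ) + 2) * ((b:ℝ) + 1) * q (b+2) * x ^ b) := by
        intro b
        push_cast
        rw [show b+1+1 = b+2 from rfl, pow_add]
        ring
      rw [tsum_congr hsh, tsum_mul_left]
      norm_num
      exact Or.inl rfl
    have hT1 : ∑' k : ℕ, ((k:ℝ)+1) * (k:ℝ) / 2 * q (k+1) * x ^ k = x / 2 * R2fun x := by
      rw [Summable.tsum_eq_zero_add sT1]
      have hsh : ∀ b : ℕ, ((((b+1:ℕ)):ℝ)+1) * (((b+1:ℕ)):ℝ) / 2 * q ((b+1)+1) * x ^ (b+1)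
          = x / 2 * (((b:ℝ) + 2) * ((b:ℝ) + 1) * q (b+2) * x ^ b) := by
        intro b
        push_cast
        rw [pow_succ]
        ring
      rw [tsum_congr hsh, tsum_mul_left]
      norm_num
      exact Or.inl rfl
    rw [hL, hRr, hT2, hT1] at key
    rw [hderiv2 x hx', hR]
    simp only []
    set P : ℝ := ∑' k : ℕ, q k * x ^ k
    set S : ℝ := R2fun x
    rw [← hcauchy] at key
    have hc' : c ≠ 0 := ne_of_gt hc
    field_simp
    ring_nf
    ring_nf at key
    linarith [key]

section Helpers

private lemma kingman_nonneg (k : ℕ) : (0:ℝ) ≤ (k:ℝ) * ((k:ℝ) - 1) := by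
  rcases k with _ | n
  · simp
  · have h : ((n+1:ℕ):ℝ) = (n:ℝ) + 1 := by push_cast; ring
    rw [h]
    nlinarith [Nat.cast_nonneg (α := ℝ) n]

private lemma denom_pos (c : ℝ) (hc : 0 < c) (k : ℕ) :
    0 < (k:ℝ) * ((k:ℝ) - 1) / 2 + c := by nlinarith [kingman_nonneg k]

private lemma kf_nonneg (c : ℝ) (hc : 0 < c) (l : ℕ) : 0 ≤ kingmanFactor c l :=
  div_nonneg (by nlinarith [kingman_nonneg l]) (denom_pos c hc l).le

private lemma kf_le_one (c : ℝ) (hc : 0 < c) (l : ℕ) : kingmanFactor c l ≤ 1 := by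
  rw [kingmanFactor, div_le_one (denom_pos c hc l)]
  linarith

private lemma kf_pos (c : ℝ) (hc : 0 < c) {l : ℕ} (hl : 2 ≤ l) : 0 < kingmanFactor c l := by
  have h2 : (2:ℝ) ≤ (l:ℝ) := by exact_mod_cast hl
  apply div_pos (by nlinarith) (denom_pos c hc l)

private lemma pK_coe (c : ℝ) (j k : ℕ) : pK c (j:ℕ∞) k
    = (c / ((k:ℝ) * ((k:ℝ) - 1) / 2 + c)) * ∏ l ∈ Finset.Icc (k+1) j, kingmanFactor c l := by
  simp [pK]

private lemma pK_nonneg (c : ℝ) (hc : 0 < c) (j k : ℕ) : 0 ≤ pK c (j:ℕ∞) k := by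
  rw [pK_coe]
  exact mul_nonneg (div_nonneg hc.le (denom_pos c hc k).le)
    (Finset.prod_nonneg fun l _ => kf_nonneg c hc l)

private lemma pK_le_one (c : ℝ) (hc : 0 < c) (j k : ℕ) : pK c (j:ℕ∞) k ≤ 1 := by
  rw [pK_coe]
  have h1 : c / ((k:ℝ) * ((k:ℝ) - 1) / 2 + c) ≤ 1 := by
    rw [div_le_one (denom_pos c hc k)]
    nlinarith [kingman_nonneg k]
  have h2 : ∏ l ∈ Finset.Icc (k+1) j, kingmanFactor c l ≤ 1 :=
    Finset.prod_le_one (fun l _ => kf_nonneg c hc l) (fun l _ => kf_le_one c hc l)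
  have h3 : 0 ≤ c / ((k:ℝ) * ((k:ℝ) - 1) / 2 + c) :=
    div_nonneg hc.le (denom_pos c hc k).le
  calc _ ≤ (c / ((k:ℝ) * ((k:ℝ) - 1) / 2 + c)) * 1 := by
        apply mul_le_mul_of_nonneg_left h2 h3
    _ ≤ 1 := by rw [mul_one]; exact h1

private lemma pK_diag (c : ℝ) (hc : 0 < c) (k : ℕ) :
    ((k:ℝ) * ((k:ℝ) - 1) / 2 + c) * pK c (k:ℕ∞) k = c := by
  rw [pK_coe, Finset.Icc_eq_empty (by omega), Finset.prod_empty, mul_one,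
    mul_div_cancel₀ _ (ne_of_gt (denom_pos c hc k))]

private lemma pK_rec (c : ℝ) (hc : 0 < c) (k : ℕ) {j : ℕ} (hjk : k + 1 ≤ j) :
    ((k:ℝ) * ((k:ℝ) - 1) / 2 + c) * pK c (j:ℕ∞) k
      = ((k:ℝ) + 1) * (k:ℝ) / 2 * pK c (j:ℕ∞) (k+1) := by
  rw [pK_coe, pK_coe]
  rw [← Finset.Ico_add_one_right_eq_Icc (k+1) j, ← Finset.Ico_add_one_right_eq_Icc (k+2) j]
  rw [Finset.prod_eq_prod_Ico_succ_bot (by omega : k + 1 < j + 1) (kingmanFactor c)]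
  have hd1 : (k:ℝ) * ((k:ℝ) - 1) / 2 + c ≠ 0 := ne_of_gt (denom_pos c hc k)
  have hd2' := denom_pos c hc (k+1)
  have hcast : ((k+1:ℕ):ℝ) = (k:ℝ) + 1 := by push_cast; ring
  rw [hcast] at hd2'
  have hd2 : ((k:ℝ) + 1) * ((k:ℝ) + 1 - 1) / 2 + c ≠ 0 := ne_of_gt hd2'
  rw [kingmanFactor, hcast]
  rw [← mul_assoc, mul_comm ((k:ℝ) * ((k:ℝ) - 1) / 2 + c)
    (c / ((k:ℝ) * ((k:ℝ) - 1) / 2 + c)), div_mul_cancel₀ c hd1]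
  ring

end Helpers

/-- If `μ ∈ S₁` is a fixed point of `F_c` with probability generating
function `R`, then `R(0) = 0`, `R(1) = 1`, `R' > 0` on `[0,1]`, and
`R(x) = R(x)² + (x(1-x)/(2c)) R''(x)` on `[0,1)`. -/
theorem pgf_ode (c : ℝ) (hc : 0 < c) (μ : ℕ∞ → ℝ) (hμ : MemS1 μ) (hfix : Fc c μ = μ)
    (R : ℝ → ℝ) (hR : R = fun x => ∑' i : ℕ, μ (i : ℕ∞) * x ^ i) :
    R 0 = 0 ∧ R 1 = 1 ∧
    (∀ x ∈ Set.Icc (0 : ℝ) 1, 0 < derivWithin R (Set.Icc (0 : ℝ) 1) x) ∧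
    ∀ x ∈ Set.Ico (0 : ℝ) 1,
      R x = (R x) ^ 2 + x * (1 - x) / (2 * c) * deriv (deriv R) x := by
  obtain ⟨⟨hpos, hzero, hsum⟩, htop, hmean0⟩ := hμ
  set q : ℕ → ℝ := fun n => μ (n : ℕ∞) with hqdef
  set ν : ℕ → ℝ := fun n => ∑ p ∈ Finset.HasAntidiagonal.antidiagonal n, q p.1 * q p.2 with hνdef
  have hq0 : q 0 = 0 := by
    show μ ((0 : ℕ) : ℕ∞) = 0
    rw [Nat.cast_zero]
    exact hzero
  have hinj : Function.Injective (fun n : ℕ => (n : ℕ∞)) := Nat.cast_injective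
  have hqs : HasSum q 1 := by
    refine (Function.Injective.hasSum_iff hinj ?_).2 hsum
    intro x hx
    cases x using ENat.recTopCoe with
    | top => exact htop
    | coe a => exact absurd ⟨a, rfl⟩ hx
  have hconv_coe : ∀ n : ℕ, conv μ μ ((n : ℕ∞)) = ν n := by
    intro n
    show (∑' p : ℕ∞ × ℕ∞, if p.1 + p.2 = (n : ℕ∞) then μ p.1 * μ p.2 else 0) = ν n
    rw [tsum_eq_sum
      (s := (Finset.HasAntidiagonal.antidiagonal n).image (fun p : ℕ × ℕ => ((p.1 : ℕ∞), (p.2 : ℕ∞))))]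
    · rw [Finset.sum_image (by
        intro x _ y _ hxy
        have h1 : ((x.1 : ℕ∞)) = (y.1 : ℕ∞) := congrArg Prod.fst hxy
        have h2 : ((x.2 : ℕ∞)) = (y.2 : ℕ∞) := congrArg Prod.snd hxy
        exact Prod.ext (by exact_mod_cast h1) (by exact_mod_cast h2))]
      refine Finset.sum_congr rfl fun p hp => ?_
      rw [Finset.HasAntidiagonal.mem_antidiagonal] at hp
      rw [if_pos (show ((p.1 : ℕ∞)) + ((p.2 : ℕ∞)) = (n : ℕ∞) by exact_mod_cast hp)]
    · rintro ⟨p1, p2⟩ hp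
      split_ifs with h
      · exfalso
        cases p1 using ENat.recTopCoe with
        | top => simp at h
        | coe a =>
          cases p2 using ENat.recTopCoe with
          | top => simp at h
          | coe b =>
            have hab : a + b = n := by
              have h' : ((a : ℕ∞)) + ((b : ℕ∞)) = (n : ℕ∞) := h
              exact_mod_cast h'
            exact hp (Finset.mem_image.2 ⟨(a, b), Finset.HasAntidiagonal.mem_antidiagonal.2 hab, rfl⟩)
      · rfl
  have hconv_top : conv μ μ ⊤ = 0 := by
    have h : ∀ p : ℕ∞ × ℕ∞, (if p.1 + p.2 = (⊤ : ℕ∞) then μ p.1 * μ p.2 else 0) = 0 := by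
      intro p
      split_ifs with hh
      · rcases ENat.add_eq_top.1 hh with h' | h' <;> rw [h'] <;> simp [htop]
      · rfl
    exact (tsum_congr h).trans tsum_zero
  have hFcFin : ∀ k : ℕ, FcFin c μ k
      = ∑' j : ℕ, (if k ≤ j then ν j * pK c (j : ℕ∞) k else 0) := by
    intro k
    refine ((Function.Injective.tsum_eq hinj ?_).symm).trans (tsum_congr ?_)
    · intro x hx
      cases x using ENat.recTopCoe with
      | top =>
        exfalso
        apply hx
        show (if ((k : ℕ∞)) ≤ ⊤ then conv μ μ ⊤ * pK c ⊤ k else 0) = 0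
        split_ifs
        · rw [hconv_top, zero_mul]
        · rfl
      | coe a => exact ⟨a, rfl⟩
    · intro n
      simp only [Nat.cast_le]
      split_ifs with h
      · rw [hconv_coe n]
      · rfl
  have hfix_eval : ∀ k : ℕ, k ≠ 0 → q k = FcFin c μ k := by
    intro k hk
    have h := congrFun hfix ((k : ℕ∞))
    simp only [Fc] at h
    rw [if_neg (by simp), if_neg (by simpa using hk)] at h
    simpa using h.symm
  have hqnn : Summable (fun k : ℕ => ‖q k‖) :=
    hqs.summable.congr (fun k => by rw [Real.norm_eq_abs, abs_of_nonneg (hpos _)])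
  have hνsum : Summable ν :=
    (summable_norm_sum_mul_antidiagonal_of_summable_norm hqnn hqnn).of_norm
  have hνnn : ∀ n, 0 ≤ ν n := fun n =>
    Finset.sum_nonneg fun p _ => mul_nonneg (hpos _) (hpos _)
  have hνtot : ∑' n, ν n = 1 := by
    have h := tsum_mul_tsum_eq_tsum_sum_antidiagonal_of_summable_norm hqnn hqnn
    rw [hqs.tsum_eq, mul_one] at h
    exact h.symm
  have hG_sum : ∀ k : ℕ,
      Summable (fun j : ℕ => if k ≤ j then ν j * pK c (j : ℕ∞) k else 0) := by
    intro k
    refine Summable.of_nonneg_of_le (fun j => ?_) (fun j => ?_) hνsum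
    · split_ifs with h
      · exact mul_nonneg (hνnn j) (pK_nonneg c hc j k)
      · exact le_refl 0
    · split_ifs with h
      · calc ν j * pK c (j : ℕ∞) k ≤ ν j * 1 :=
            mul_le_mul_of_nonneg_left (pK_le_one c hc j k) (hνnn j)
          _ = ν j := mul_one _
      · exact hνnn j
  have hν00 : ν 0 = 0 := by
    rw [hνdef]
    simp [hq0]
  have hrec : ∀ k : ℕ, ((k : ℝ) * ((k : ℝ) - 1) / 2 + c) * q k
      = c * ν k + ((k : ℝ) + 1) * (k : ℝ) / 2 * q (k + 1) := by
    intro k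
    rcases Nat.eq_zero_or_pos k with rfl | hk
    · rw [hq0, hν00]
      push_cast
      ring
    · rw [hfix_eval k (by omega), hfix_eval (k+1) (by omega), hFcFin, hFcFin]
      rw [← tsum_mul_left, ← tsum_mul_left,
        show c * ν k = c * ∑' j : ℕ, (if j = k then ν k else 0) from by rw [tsum_ite_eq],
        ← tsum_mul_left]
      have hs1 : Summable (fun j : ℕ => c * if j = k then ν k else 0) :=
        (summable_of_ne_finset_zero (s := {k})
          (fun b hb => if_neg (by simpa using hb))).mul_left c
      have hs2 : Summable (fun j : ℕ => ((k : ℝ) + 1) * (k : ℝ) / 2 *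
          if k + 1 ≤ j then ν j * pK c (j : ℕ∞) (k+1) else 0) :=
        (hG_sum (k+1)).mul_left _
      rw [← Summable.tsum_add hs1 hs2]
      refine tsum_congr fun j => ?_
      by_cases h1 : k ≤ j
      · by_cases h2 : k + 1 ≤ j
        · rw [if_pos h1, if_pos h2, if_neg (show ¬(j = k) by omega)]
          have hrc := pK_rec c hc k h2
          linear_combination ν j * hrc
        · have hjk : j = k := by omega
          subst hjk
          rw [if_pos h1, if_pos rfl, if_neg h2]
          have hd := pK_diag c hc j
          linear_combination ν j * hd
      · rw [if_neg h1, if_neg (show ¬(j = k) by omega), if_neg (show ¬(k + 1 ≤ j) by omega)]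
        ring
  have hq1 : 0 < q 1 := by
    obtain ⟨j₀, hj₀⟩ : ∃ j, 0 < ν j := by
      by_contra h
      push_neg at h
      have hz : ∀ j, ν j = (fun _ : ℕ => (0:ℝ)) j := fun j => le_antisymm (h j) (hνnn j)
      rw [tsum_congr hz, tsum_zero] at hνtot
      linarith
    have hj₀1 : 1 ≤ j₀ := by
      rcases Nat.eq_zero_or_pos j₀ with rfl | h
      · rw [hν00] at hj₀; linarith
      · exact h
    have hpk : 0 < pK c (j₀ : ℕ∞) 1 := by
      rw [pK_coe]
      exact mul_pos (div_pos hc (denom_pos c hc 1))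
        (Finset.prod_pos fun l hl => kf_pos c hc (Finset.mem_Icc.1 hl).1)
    have h1 := hfix_eval 1 one_ne_zero
    rw [hFcFin] at h1
    have hle := Summable.le_tsum (hG_sum 1) j₀ (fun j _ => by
      split_ifs with h
      · exact mul_nonneg (hνnn j) (pK_nonneg c hc j 1)
      · exact le_refl 0)
    rw [if_pos hj₀1] at hle
    rw [h1]
    exact lt_of_lt_of_le (mul_pos hj₀ hpk) hle
  exact pgf_analytic c hc q ν (fun k => hpos _) hq0 hqs hmean0 hrec (fun n => rfl) hq1 R hR
end

section
/- Let c > 0 and let μ be a probability distribution on ℕ⁺ satisfying F_c(μ) = μ. Then for every i ∈ ℕ⁺, (i(i-1) + 2c) μ({i}) = (i+1) i μ({i+1}) + 2c (μ∗μ)({i}). -/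
open Filter Topology Set

private lemma fpr_nat_sq_nonneg (l : ℕ) : 0 ≤ (l : ℝ) * ((l : ℝ) - 1) := by
  rcases Nat.eq_zero_or_pos l with h | h
  · simp [h]
  · have : (1:ℝ) ≤ l := by exact_mod_cast h
    nlinarith

private lemma fpr_kf_nonneg {c : ℝ} (hc : 0 < c) (l : ℕ) : 0 ≤ kingmanFactor c l := by
  have := fpr_nat_sq_nonneg l
  unfold kingmanFactor
  positivity

private lemma fpr_kf_le_one {c : ℝ} (hc : 0 < c) (l : ℕ) : kingmanFactor c l ≤ 1 := by
  have := fpr_nat_sq_nonneg l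
  unfold kingmanFactor
  rw [div_le_one (by linarith)]
  linarith

private lemma fpr_pK_nonneg {c : ℝ} (hc : 0 < c) (n i : ℕ) : 0 ≤ pK c (n : ℕ∞) i := by
  have hi := fpr_nat_sq_nonneg i
  unfold pK
  rw [if_neg (by simp)]
  have : 0 ≤ ∏ l ∈ Finset.Icc (i + 1) ((n : ℕ∞)).toNat, kingmanFactor c l :=
    Finset.prod_nonneg fun l _ => fpr_kf_nonneg hc l
  positivity

private lemma fpr_pK_le_one {c : ℝ} (hc : 0 < c) (n i : ℕ) : pK c (n : ℕ∞) i ≤ 1 := by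
  have hi := fpr_nat_sq_nonneg i
  unfold pK
  rw [if_neg (by simp)]
  have h1 : ∏ l ∈ Finset.Icc (i + 1) ((n : ℕ∞)).toNat, kingmanFactor c l ≤ 1 :=
    Finset.prod_le_one (fun l _ => fpr_kf_nonneg hc l) (fun l _ => fpr_kf_le_one hc l)
  have h4 : 0 ≤ c / ((i : ℝ) * ((i : ℝ) - 1) / 2 + c) := by positivity
  have h3 : c / ((i : ℝ) * ((i : ℝ) - 1) / 2 + c) ≤ 1 := by
    rw [div_le_one (by linarith)]; linarith
  calc _ ≤ c / ((i : ℝ) * ((i : ℝ) - 1) / 2 + c) * 1 := mul_le_mul_of_nonneg_left h1 h4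
    _ ≤ 1 := by rw [mul_one]; exact h3

private lemma fpr_pK_self {c : ℝ} (i : ℕ) :
    pK c (i : ℕ∞) i = c / ((i : ℝ) * ((i : ℝ) - 1) / 2 + c) := by
  unfold pK
  rw [if_neg (by simp)]
  have h : ((i : ℕ∞)).toNat = i := by simp
  rw [h, Finset.Icc_eq_empty (by omega), Finset.prod_empty, mul_one]

private lemma fpr_pK_rec {c : ℝ} (hc : 0 < c) {i n : ℕ} (h : i + 1 ≤ n) :
    pK c (n : ℕ∞) i =
      ((i : ℝ) + 1) * (i : ℝ) / 2 / ((i : ℝ) * ((i : ℝ) - 1) / 2 + c) *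
        pK c (n : ℕ∞) (i + 1) := by
  have hi := fpr_nat_sq_nonneg i
  have hi1 : (0:ℝ) ≤ ((i:ℝ)+1) * (i:ℝ) := by positivity
  unfold pK
  rw [if_neg (by simp), if_neg (by simp)]
  have htn : ((n : ℕ∞)).toNat = n := by simp
  simp only [htn]
  have hsplit : ∏ l ∈ Finset.Icc (i + 1) n, kingmanFactor c l =
      kingmanFactor c (i + 1) * ∏ l ∈ Finset.Icc (i + 2) n, kingmanFactor c l := by
    rw [← Finset.Ico_add_one_right_eq_Icc, ← Finset.Ico_add_one_right_eq_Icc,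
      Finset.prod_eq_prod_Ico_succ_bot (by omega)]
  rw [hsplit]
  have hkf : kingmanFactor c (i + 1) =
      (((i:ℝ) + 1) * (i:ℝ) / 2) / (((i:ℝ) + 1) * (i:ℝ) / 2 + c) := by
    unfold kingmanFactor
    push_cast
    ring_nf
  rw [hkf]
  have d1 : (i : ℝ) * ((i : ℝ) - 1) / 2 + c ≠ 0 := by linarith
  have d2 : ((i:ℝ) + 1) * (i:ℝ) / 2 + c ≠ 0 := by linarith
  have heq : ((i:ℝ)+1) * ((i:ℝ)+1-1) / 2 + c = ((i:ℝ)+1) * (i:ℝ) / 2 + c := by ring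
  push_cast
  rw [heq]
  field_simp

private lemma fpr_conv_top {μ : ℕ∞ → ℝ} (htop : μ ⊤ = 0) : conv μ μ ⊤ = 0 := by
  unfold conv
  have h : ∀ p : ℕ∞ × ℕ∞, (if p.1 + p.2 = ⊤ then μ p.1 * μ p.2 else 0) = 0 := by
    intro p
    split_ifs with h
    · rcases ENat.add_eq_top.mp h with h | h <;> simp [h, htop]
    · rfl
  simp only [h, tsum_zero]

private lemma fpr_conv_nonneg {μ : ℕ∞ → ℝ} (hμ0 : ∀ k, 0 ≤ μ k) (j : ℕ∞) :
    0 ≤ conv μ μ j := by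
  unfold conv
  apply tsum_nonneg
  intro p
  split_ifs
  · exact mul_nonneg (hμ0 _) (hμ0 _)
  · exact le_refl 0

private lemma fpr_conv_summable {μ : ℕ∞ → ℝ} (hμ0 : ∀ k, 0 ≤ μ k) (hsum : Summable μ) :
    Summable (conv μ μ) := by
  have hg : Summable (fun p : ℕ∞ × ℕ∞ => μ p.1 * μ p.2) :=
    Summable.mul_of_nonneg hsum hsum hμ0 hμ0
  have hfib := hg.hasSum.tsum_fiberwise (fun p : ℕ∞ × ℕ∞ => p.1 + p.2)
  have heq : conv μ μ = fun j => ∑' p : (fun p : ℕ∞ × ℕ∞ => p.1 + p.2) ⁻¹' {j},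
      μ (p : ℕ∞ × ℕ∞).1 * μ (p : ℕ∞ × ℕ∞).2 := by
    funext j
    rw [tsum_subtype ((fun p : ℕ∞ × ℕ∞ => p.1 + p.2) ⁻¹' {j}) (fun q : ℕ∞ × ℕ∞ => μ q.1 * μ q.2)]
    unfold conv
    apply tsum_congr
    intro p
    by_cases h : p.1 + p.2 = j
    · rw [if_pos h, Set.indicator_of_mem (by simpa using h)]
    · rw [if_neg h, Set.indicator_of_notMem (by simpa using h)]
  rw [heq]
  exact hfib.summable

/-- If `μ` is a distribution on `ℕ⁺` with `F_c(μ) = μ`, then for every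
`i ∈ ℕ⁺`, `(i(i-1) + 2c) μ({i}) = (i+1)i μ({i+1}) + 2c (μ∗μ)({i})`. -/
theorem fixed_point_recursion (c : ℝ) (hc : 0 < c) (μ : ℕ∞ → ℝ) (hμ : IsDist μ)
    (htop : μ ⊤ = 0) (hfix : Fc c μ = μ) (i : ℕ) (hi : 1 ≤ i) :
    ((i : ℝ) * ((i : ℝ) - 1) + 2 * c) * μ (i : ℕ∞) =
      ((i : ℝ) + 1) * (i : ℝ) * μ ((i + 1 : ℕ) : ℕ∞) + 2 * c * conv μ μ (i : ℕ∞) := by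
  classical
  obtain ⟨hμ0, hμz, hμ1⟩ := hμ
  have hi0 := fpr_nat_sq_nonneg i
  have d1 : (0:ℝ) < (i : ℝ) * ((i : ℝ) - 1) / 2 + c := by linarith
  set r : ℝ := ((i : ℝ) + 1) * (i : ℝ) / 2 / ((i : ℝ) * ((i : ℝ) - 1) / 2 + c) with hr
  -- the summand of FcFin c μ i
  set f : ℕ∞ → ℝ := fun j => if ((i : ℕ) : ℕ∞) ≤ j then conv μ μ j * pK c j i else 0 with hfdef
  have hconvtop : conv μ μ ⊤ = 0 := fpr_conv_top htop
  have hconvnn : ∀ j, 0 ≤ conv μ μ j := fpr_conv_nonneg hμ0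
  have hconvsumm : Summable (conv μ μ) := fpr_conv_summable hμ0 hμ1.summable
  have hf_bounds : ∀ j, 0 ≤ f j ∧ f j ≤ conv μ μ j := by
    intro j
    induction j using ENat.recTopCoe with
    | top =>
      simp only [hfdef, hconvtop, zero_mul, ite_self]
      exact ⟨le_refl 0, le_refl 0⟩
    | coe n =>
      simp only [hfdef]
      split_ifs with h
      · refine ⟨mul_nonneg (hconvnn _) (fpr_pK_nonneg hc n i), ?_⟩
        calc conv μ μ ↑n * pK c ↑n i ≤ conv μ μ ↑n * 1 :=
              mul_le_mul_of_nonneg_left (fpr_pK_le_one hc n i) (hconvnn _)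
          _ = conv μ μ ↑n := mul_one _
      · exact ⟨le_refl 0, hconvnn _⟩
  have hf_summ : Summable f :=
    Summable.of_nonneg_of_le (fun j => (hf_bounds j).1) (fun j => (hf_bounds j).2) hconvsumm
  -- μ at i and i+1 are fixed points of FcFin
  have hfixval : ∀ k : ℕ, 1 ≤ k → μ (k : ℕ∞) = FcFin c μ k := by
    intro k hk
    conv_lhs => rw [← hfix]
    unfold Fc
    rw [if_neg (by simp), if_neg (by exact_mod_cast (by omega : ¬ k = 0))]
    congr 1
  have hμi : μ ((i : ℕ) : ℕ∞) = FcFin c μ i := hfixval i hi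
  have hμi1 : μ (((i+1) : ℕ) : ℕ∞) = FcFin c μ (i+1) := hfixval (i+1) (by omega)
  -- split off the term at j = i
  have hsplit : FcFin c μ i = f ((i : ℕ) : ℕ∞) + ∑' j : ℕ∞, if j = ((i : ℕ) : ℕ∞) then 0 else f j := by
    exact hf_summ.tsum_eq_add_tsum_ite _
  have hfi : f ((i : ℕ) : ℕ∞) = conv μ μ ((i : ℕ) : ℕ∞) * (c / ((i : ℝ) * ((i : ℝ) - 1) / 2 + c)) := by
    simp only [hfdef]
    rw [if_pos le_rfl, fpr_pK_self]
  -- the tail equals r times the summand of FcFin c μ (i+1)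
  have htail : ∀ j : ℕ∞, (if j = ((i : ℕ) : ℕ∞) then 0 else f j) =
      r * (if (((i+1 : ℕ)) : ℕ∞) ≤ j then conv μ μ j * pK c j (i+1) else 0) := by
    intro j
    induction j using ENat.recTopCoe with
    | top =>
      rw [if_neg (by simp), if_pos le_top]
      simp only [hfdef, hconvtop, zero_mul, ite_self, mul_zero]
    | coe n =>
      by_cases hni : n = i
      · subst hni
        rw [if_pos (rfl : ((n:ℕ):ℕ∞) = ((n:ℕ):ℕ∞)), if_neg (by exact_mod_cast (by omega : ¬ n + 1 ≤ n)), mul_zero]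
      · rw [if_neg (by exact_mod_cast hni)]
        simp only [hfdef]
        by_cases hle : i ≤ n
        · have hle1 : i + 1 ≤ n := by omega
          rw [if_pos (by exact_mod_cast hle), if_pos (by exact_mod_cast hle1)]
          rw [fpr_pK_rec hc hle1]
          ring
        · rw [if_neg (by exact_mod_cast hle), if_neg (by exact_mod_cast (by omega : ¬ i + 1 ≤ n)), mul_zero]
  have htsum : (∑' j : ℕ∞, if j = ((i : ℕ) : ℕ∞) then 0 else f j) = r * FcFin c μ (i+1) := by
    calc (∑' j : ℕ∞, if j = ((i : ℕ) : ℕ∞) then 0 else f j)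
        = ∑' j : ℕ∞, r * (if (((i+1 : ℕ)) : ℕ∞) ≤ j then conv μ μ j * pK c j (i+1) else 0) :=
          tsum_congr htail
      _ = r * FcFin c μ (i+1) := by rw [tsum_mul_left]; rfl
  have key : μ ((i : ℕ) : ℕ∞) =
      conv μ μ ((i : ℕ) : ℕ∞) * (c / ((i : ℝ) * ((i : ℝ) - 1) / 2 + c)) +
        r * μ (((i+1) : ℕ) : ℕ∞) := by
    rw [hμi, hsplit, hfi, htsum, ← hμi1]
  rw [hr] at key
  have d1' : (i : ℝ) * ((i : ℝ) - 1) / 2 + c ≠ 0 := ne_of_gt d1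
  field_simp at key
  push_cast at key ⊢
  nlinarith [key]
end

section
/- Let c > 0, let μ ∈ S₁ satisfy F_c(μ) = μ, let R be its probability generating function, and let g(x) = -log(1 - R(x)) for x ∈ [0,1). Then: g(0) = 0; 0 < g(x) < ∞ for all x ∈ (0,1); lim_{x→1⁻} g(x) = ∞; g''(x) = (g'(x))² + (2c/(x(1-x)))(1 - e^{-g(x)}) for all x ∈ (0,1); lim_{x→1⁻} g'(x) = ∞; lim_{x→1⁻} g''(x) = ∞; and g'(x) ≤ 1/(1-x) for all x ∈ [0,1). -/
open Filter Topology Set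

noncomputable section GAux
namespace GAux

open Finset

/-- `lam n = n(n-1)/2`. -/
def lam (n : ℕ) : ℝ := (n : ℝ) * ((n : ℝ) - 1) / 2

lemma lam_nonneg (n : ℕ) : 0 ≤ lam n := by
  rcases n with _ | m
  · simp [lam]
  · unfold lam
    push_cast
    nlinarith [Nat.cast_nonneg (α := ℝ) m]

lemma lam_succ (k : ℕ) : lam (k + 1) = ((k : ℝ) + 1) * k / 2 := by
  unfold lam; push_cast; ring

variable {c : ℝ}

lemma lam_add_pos (hc : 0 < c) (n : ℕ) : 0 < lam n + c :=
  add_pos_of_nonneg_of_pos (lam_nonneg n) hc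

lemma kf_eq (l : ℕ) : kingmanFactor c l = lam l / (lam l + c) := rfl

lemma kf_nonneg (hc : 0 < c) (l : ℕ) : 0 ≤ kingmanFactor c l :=
  div_nonneg (lam_nonneg l) (lam_add_pos hc l).le

lemma kf_le_one (hc : 0 < c) (l : ℕ) : kingmanFactor c l ≤ 1 := by
  rw [kf_eq]
  exact div_le_one_of_le₀ (by linarith) (lam_add_pos hc l).le

lemma pK_coe (j k : ℕ) :
    pK c (j : ℕ∞) k = (c / (lam k + c)) * ∏ l ∈ Finset.Icc (k + 1) j, kingmanFactor c l := by
  rw [pK, if_neg (ENat.coe_ne_top j), ENat.toNat_coe]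
  rfl

lemma pK_coe_nonneg (hc : 0 < c) (j k : ℕ) : 0 ≤ pK c (j : ℕ∞) k := by
  rw [pK_coe]
  exact mul_nonneg (div_nonneg hc.le (lam_add_pos hc k).le)
    (Finset.prod_nonneg fun l _ => kf_nonneg hc l)

lemma pK_coe_le_one (hc : 0 < c) (j k : ℕ) : pK c (j : ℕ∞) k ≤ 1 := by
  rw [pK_coe]
  have h1 : c / (lam k + c) ≤ 1 :=
    div_le_one_of_le₀ (by linarith [lam_nonneg k]) (lam_add_pos hc k).le
  have h2 : ∏ l ∈ Finset.Icc (k + 1) j, kingmanFactor c l ≤ 1 :=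
    Finset.prod_le_one (fun l _ => kf_nonneg hc l) (fun l _ => kf_le_one hc l)
  calc c / (lam k + c) * ∏ l ∈ Finset.Icc (k + 1) j, kingmanFactor c l
      ≤ 1 * 1 := mul_le_mul h1 h2 (Finset.prod_nonneg fun l _ => kf_nonneg hc l) (by norm_num)
    _ = 1 := by norm_num

lemma pK_self (k : ℕ) : pK c (k : ℕ∞) k = c / (lam k + c) := by
  rw [pK_coe, Finset.Icc_eq_empty (by omega), Finset.prod_empty, mul_one]

lemma pK_step (hc : 0 < c) {k j : ℕ} (h : k + 1 ≤ j) :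
    (lam k + c) * pK c (j : ℕ∞) k = lam (k + 1) * pK c (j : ℕ∞) (k + 1) := by
  rw [pK_coe, pK_coe]
  have h1 : Finset.Icc (k + 1) j = Finset.Ico (k + 1) (j + 1) := by
    rw [Finset.Ico_add_one_right_eq_Icc]
  have h2 : ∏ l ∈ Finset.Icc (k + 1) j, kingmanFactor c l
      = kingmanFactor c (k + 1) * ∏ l ∈ Finset.Icc (k + 2) j, kingmanFactor c l := by
    rw [h1, Finset.prod_eq_prod_Ico_succ_bot (by omega), Finset.Ico_add_one_right_eq_Icc]
  rw [h2, kf_eq]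
  have hA : lam k + c ≠ 0 := (lam_add_pos hc k).ne'
  have hB : lam (k + 1) + c ≠ 0 := (lam_add_pos hc (k + 1)).ne'
  field_simp


variable {μ : ℕ∞ → ℝ} {c : ℝ}

lemma mu_nonneg (hμ : MemS1 μ) (k : ℕ∞) : 0 ≤ μ k := hμ.1.1 k

lemma hasSum_nat (hμ : MemS1 μ) : HasSum (fun n : ℕ => μ (n : ℕ∞)) 1 := by
  refine (Function.Injective.hasSum_iff (f := μ)
    (Nat.cast_injective : Function.Injective (fun n : ℕ => (n : ℕ∞))) ?_).2 hμ.1.2.2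
  intro j hj
  induction j using ENat.recTopCoe with
  | top => exact hμ.2.1
  | coe n => exact absurd ⟨n, rfl⟩ hj

lemma summable_nat (hμ : MemS1 μ) : Summable (fun n : ℕ => μ (n : ℕ∞)) :=
  (hasSum_nat hμ).summable

lemma mu_le_one (hμ : MemS1 μ) (n : ℕ) : μ (n : ℕ∞) ≤ 1 :=
  le_hasSum (hasSum_nat hμ) n (fun j _ => mu_nonneg hμ j)

lemma mu_zero (hμ : MemS1 μ) : μ ((0 : ℕ) : ℕ∞) = 0 := by
  rw [Nat.cast_zero]
  exact hμ.1.2.1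

/-- finite convolution coefficients -/
def Mc (μ : ℕ∞ → ℝ) (n : ℕ) : ℝ :=
  ∑ p ∈ Finset.HasAntidiagonal.antidiagonal n, μ (p.1 : ℕ∞) * μ (p.2 : ℕ∞)

lemma Mc_nonneg (hμ : MemS1 μ) (n : ℕ) : 0 ≤ Mc μ n :=
  Finset.sum_nonneg fun p _ => mul_nonneg (mu_nonneg hμ _) (mu_nonneg hμ _)

lemma Mc_zero (hμ : MemS1 μ) : Mc μ 0 = 0 := by
  simp [Mc, hμ.1.2.1]

lemma summable_Mc (hμ : MemS1 μ) : Summable (Mc μ) := by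
  have h : Summable fun x : ℕ × ℕ => μ (x.1 : ℕ∞) * μ (x.2 : ℕ∞) :=
    Summable.mul_of_nonneg (summable_nat hμ) (summable_nat hμ)
      (fun n => mu_nonneg hμ _) (fun n => mu_nonneg hμ _)
  have h2 := summable_sum_mul_antidiagonal_of_summable_mul (f := fun n : ℕ => μ (n : ℕ∞))
    (g := fun n : ℕ => μ (n : ℕ∞)) h
  exact h2

lemma conv_top (hμ : MemS1 μ) : conv μ μ ⊤ = 0 := by
  unfold conv
  have h : (fun p : ℕ∞ × ℕ∞ => if p.1 + p.2 = (⊤ : ℕ∞) then μ p.1 * μ p.2 else 0)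
      = fun _ => (0 : ℝ) := by
    funext p
    split_ifs with h
    · rcases ENat.add_eq_top.mp h with h1 | h1 <;> (rw [h1, hμ.2.1]; ring)
    · rfl
  rw [h, tsum_zero]

lemma conv_coe (μ : ℕ∞ → ℝ) (n : ℕ) : conv μ μ (n : ℕ∞) = Mc μ n := by
  unfold conv Mc
  have hinj : Function.Injective (fun p : ℕ × ℕ => ((p.1 : ℕ∞), (p.2 : ℕ∞))) := by
    intro p q h
    simp only [Prod.mk.injEq, Nat.cast_inj] at h
    exact Prod.ext h.1 h.2
  rw [tsum_eq_sum (s := (Finset.HasAntidiagonal.antidiagonal n).map ⟨_, hinj⟩)]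
  · rw [Finset.sum_map]
    refine Finset.sum_congr rfl fun p hp => ?_
    have hpn : p.1 + p.2 = n := Finset.HasAntidiagonal.mem_antidiagonal.mp hp
    simp only [Function.Embedding.coeFn_mk]
    rw [if_pos (by rw [← Nat.cast_add, hpn])]
  · rintro ⟨q1, q2⟩ hq
    split_ifs with h
    · exfalso
      simp only at h
      have h1 : q1 ≠ ⊤ := by
        rintro rfl
        rw [top_add] at h
        exact ENat.coe_ne_top n h.symm
      have h2 : q2 ≠ ⊤ := by
        rintro rfl
        rw [add_top] at h
        exact ENat.coe_ne_top n h.symm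
      lift q1 to ℕ using h1 with a ha
      lift q2 to ℕ using h2 with b hb
      apply hq
      rw [Finset.mem_map]
      refine ⟨(a, b), ?_, ?_⟩
      · rw [Finset.HasAntidiagonal.mem_antidiagonal]
        exact_mod_cast h
      · simp [Function.Embedding.coeFn_mk]
    · rfl

lemma FcFin_eq (hμ : MemS1 μ) (k : ℕ) :
    FcFin c μ k = ∑' j : ℕ, (if k ≤ j then Mc μ j * pK c (j : ℕ∞) k else 0) := by
  unfold FcFin
  rw [← Function.Injective.tsum_eq
    (Nat.cast_injective : Function.Injective (fun n : ℕ => (n : ℕ∞)))]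
  · apply tsum_congr
    intro j
    have : ((k : ℕ∞) ≤ (j : ℕ∞)) ↔ k ≤ j := Nat.cast_le
    rw [conv_coe]
    by_cases hkj : k ≤ j
    · rw [if_pos (this.mpr hkj), if_pos hkj]
    · rw [if_neg (fun hcon => hkj (this.mp hcon)), if_neg hkj]
  · intro j hj
    induction j using ENat.recTopCoe with
    | top => exact absurd (by simp [conv_top hμ]) hj
    | coe n => exact ⟨n, rfl⟩

lemma mu_eq_FcFin (hfix : Fc c μ = μ) {k : ℕ} (hk : 1 ≤ k) : μ (k : ℕ∞) = FcFin c μ k := by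
  conv_lhs => rw [← hfix]
  unfold Fc
  rw [if_neg (ENat.coe_ne_top k), if_neg (by
    intro h0
    rw [show ((0 : ℕ∞)) = ((0 : ℕ) : ℕ∞) from rfl] at h0
    exact absurd (Nat.cast_injective h0) (by omega)), ENat.toNat_coe]

lemma summable_term (hc : 0 < c) (hμ : MemS1 μ) (k : ℕ) :
    Summable (fun j : ℕ => if k ≤ j then Mc μ j * pK c (j : ℕ∞) k else 0) := by
  refine Summable.of_nonneg_of_le (fun j => ?_) (fun j => ?_) (summable_Mc hμ)
  · split_ifs with h
    · exact mul_nonneg (Mc_nonneg hμ j) (pK_coe_nonneg hc j k)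
    · exact le_refl 0
  · split_ifs with h
    · calc Mc μ j * pK c (j : ℕ∞) k ≤ Mc μ j * 1 :=
          mul_le_mul_of_nonneg_left (pK_coe_le_one hc j k) (Mc_nonneg hμ j)
        _ = Mc μ j := mul_one _
    · exact Mc_nonneg hμ j

lemma recursion (hc : 0 < c) (hμ : MemS1 μ) (hfix : Fc c μ = μ) {k : ℕ} (hk : 1 ≤ k) :
    (lam k + c) * μ (k : ℕ∞) = c * Mc μ k + lam (k + 1) * μ ((k + 1 : ℕ) : ℕ∞) := by
  have hA : lam k + c ≠ 0 := (lam_add_pos hc k).ne'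
  rw [mu_eq_FcFin hfix hk, FcFin_eq hμ, mu_eq_FcFin hfix (by omega : 1 ≤ k + 1),
    FcFin_eq hμ (k + 1)]
  rw [← tsum_mul_left]
  have hterm : ∀ j : ℕ,
      (lam k + c) * (if k ≤ j then Mc μ j * pK c (j : ℕ∞) k else 0)
      = (if j = k then c * Mc μ k else 0)
        + lam (k + 1) * (if k + 1 ≤ j then Mc μ j * pK c (j : ℕ∞) (k + 1) else 0) := by
    intro j
    rcases lt_trichotomy j k with h | h | h
    · rw [if_neg (by omega), if_neg (by omega), if_neg (by omega)]
      ring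
    · subst h
      rw [if_pos (le_refl j), if_pos rfl, if_neg (by omega), pK_self]
      field_simp
      ring
    · rw [if_pos (by omega), if_neg (by omega), if_pos (by omega)]
      rw [show (lam k + c) * (Mc μ j * pK c (j : ℕ∞) k)
          = Mc μ j * ((lam k + c) * pK c (j : ℕ∞) k) by ring, pK_step hc (by omega)]
      ring
  rw [tsum_congr hterm]
  rw [Summable.tsum_add ((hasSum_ite_eq k (c * Mc μ k)).summable) ((summable_term hc hμ (k + 1)).mul_left _)]
  rw [tsum_ite_eq, tsum_mul_left]

lemma coeff_identity (hc : 0 < c) (hμ : MemS1 μ) (hfix : Fc c μ = μ) (k : ℕ) :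
    μ (((k + 1 : ℕ)) : ℕ∞) * ((((k + 1 : ℕ)) : ℝ) * (((k + 1 - 1 : ℕ)) : ℝ))
      - μ (k : ℕ∞) * ((k : ℝ) * (((k - 1 : ℕ)) : ℝ))
      = 2 * c * μ (k : ℕ∞) - 2 * c * Mc μ k := by
  rcases Nat.eq_zero_or_pos k with rfl | hk
  · simp [Nat.cast_zero, hμ.1.2.1, Mc_zero hμ]
  · have hrec := recursion hc hμ hfix hk
    have h1 : (((k + 1 - 1 : ℕ)) : ℝ) = (k : ℝ) := by
      norm_num
    have h2 : (((k - 1 : ℕ)) : ℝ) = (k : ℝ) - 1 := by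
      have : (1 : ℕ) ≤ k := hk
      push_cast [this]
      ring
    rw [h1, h2]
    have hl1 : lam k = (k : ℝ) * ((k : ℝ) - 1) / 2 := rfl
    have hl2 : lam (k + 1) = ((k : ℝ) + 1) * (k : ℝ) / 2 := lam_succ k
    rw [hl1, hl2] at hrec
    have h3 : (((k + 1 : ℕ)) : ℝ) = (k : ℝ) + 1 := by push_cast; ring
    rw [h3]
    linear_combination (-2 : ℝ) * hrec

def Rf (μ : ℕ∞ → ℝ) (x : ℝ) : ℝ := ∑' i : ℕ, μ (i : ℕ∞) * x ^ i

def R1 (μ : ℕ∞ → ℝ) (x : ℝ) : ℝ := ∑' i : ℕ, μ (i : ℕ∞) * ((i : ℝ) * x ^ (i - 1))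

def R2 (μ : ℕ∞ → ℝ) (x : ℝ) : ℝ :=
  ∑' i : ℕ, μ (i : ℕ∞) * ((i : ℝ) * (((i - 1 : ℕ)) : ℝ) * x ^ (i - 2))

lemma geo0 {a : ℝ} (h0 : 0 ≤ a) (h1 : a < 1) : Summable (fun i : ℕ => a ^ i) :=
  summable_geometric_of_lt_one h0 h1

lemma geo1 {a : ℝ} (h0 : 0 ≤ a) (h1 : a < 1) :
    Summable (fun i : ℕ => (i : ℝ) * a ^ (i - 1)) := by
  rw [← summable_nat_add_iff 1]
  have h : Summable (fun n : ℕ => (n : ℝ) * a ^ n + a ^ n) :=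
    ((summable_pow_mul_geometric_of_norm_lt_one 1 (by rwa [Real.norm_eq_abs, abs_of_nonneg h0])).congr
      (fun n => by push_cast; ring)).add (geo0 h0 h1)
  exact h.congr (fun n => by push_cast [Nat.add_sub_cancel]; ring)

lemma geo2 {a : ℝ} (h0 : 0 ≤ a) (h1 : a < 1) :
    Summable (fun i : ℕ => (i : ℝ) * (((i - 1 : ℕ)) : ℝ) * a ^ (i - 2)) := by
  rw [← summable_nat_add_iff 2]
  have ha : ‖a‖ < 1 := by rwa [Real.norm_eq_abs, abs_of_nonneg h0]
  have h : Summable (fun n : ℕ => ((n : ℝ) ^ 2 * a ^ n + 3 * ((n : ℝ) ^ 1 * a ^ n)) + 2 * a ^ n) :=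
    ((summable_pow_mul_geometric_of_norm_lt_one 2 ha).add
      ((summable_pow_mul_geometric_of_norm_lt_one 1 ha).mul_left 3)).add ((geo0 h0 h1).mul_left 2)
  refine h.congr (fun n => ?_)
  have h2 : (n + 2) - 2 = n := by omega
  have h3 : ((n + 2 - 1 : ℕ) : ℝ) = (n : ℝ) + 1 := by
    rw [show n + 2 - 1 = n + 1 from by omega]; push_cast; ring
  rw [h2, h3]
  push_cast
  ring

variable {μ : ℕ∞ → ℝ} {c : ℝ}

lemma norm_mu_le (hμ : MemS1 μ) (i : ℕ) : ‖μ (i : ℕ∞)‖ ≤ 1 := by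
  rw [Real.norm_eq_abs, abs_of_nonneg (mu_nonneg hμ _)]
  exact mu_le_one hμ i

lemma sum0 (hμ : MemS1 μ) {x : ℝ} (hx : |x| < 1) :
    Summable (fun i : ℕ => μ (i : ℕ∞) * x ^ i) := by
  refine Summable.of_norm_bounded (geo0 (abs_nonneg x) hx) (fun i => ?_)
  rw [norm_mul, norm_pow, Real.norm_eq_abs x]
  calc ‖μ (i : ℕ∞)‖ * |x| ^ i ≤ 1 * |x| ^ i :=
        mul_le_mul_of_nonneg_right (norm_mu_le hμ i) (by positivity)
    _ = |x| ^ i := one_mul _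

lemma sum1 (hμ : MemS1 μ) {x : ℝ} (hx : |x| < 1) :
    Summable (fun i : ℕ => μ (i : ℕ∞) * ((i : ℝ) * x ^ (i - 1))) := by
  refine Summable.of_norm_bounded (geo1 (abs_nonneg x) hx) (fun i => ?_)
  rw [norm_mul, norm_mul, norm_pow, Real.norm_eq_abs x, Real.norm_natCast]
  calc ‖μ (i : ℕ∞)‖ * ((i : ℝ) * |x| ^ (i - 1)) ≤ 1 * ((i : ℝ) * |x| ^ (i - 1)) :=
        mul_le_mul_of_nonneg_right (norm_mu_le hμ i) (by positivity)
    _ = (i : ℝ) * |x| ^ (i - 1) := one_mul _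

lemma sum2 (hμ : MemS1 μ) {x : ℝ} (hx : |x| < 1) :
    Summable (fun i : ℕ => μ (i : ℕ∞) * ((i : ℝ) * (((i - 1 : ℕ)) : ℝ) * x ^ (i - 2))) := by
  refine Summable.of_norm_bounded (geo2 (abs_nonneg x) hx) (fun i => ?_)
  rw [norm_mul, norm_mul, norm_mul, norm_pow, Real.norm_eq_abs x, Real.norm_natCast,
    Real.norm_natCast]
  calc ‖μ (i : ℕ∞)‖ * ((i : ℝ) * ((i - 1 : ℕ) : ℝ) * |x| ^ (i - 2))
      ≤ 1 * ((i : ℝ) * ((i - 1 : ℕ) : ℝ) * |x| ^ (i - 2)) :=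
        mul_le_mul_of_nonneg_right (norm_mu_le hμ i) (by positivity)
    _ = (i : ℝ) * ((i - 1 : ℕ) : ℝ) * |x| ^ (i - 2) := one_mul _

lemma hasDerivAt_Rf (hμ : MemS1 μ) {x : ℝ} (hx : x ∈ Set.Ioo (-1 : ℝ) 1) :
    HasDerivAt (Rf μ) (R1 μ x) x := by
  obtain ⟨hx1, hx2⟩ := hx
  set a : ℝ := (|x| + 1) / 2 with ha_def
  have hxa : |x| < 1 := abs_lt.2 ⟨hx1, hx2⟩
  have ha0 : 0 < a := by positivity
  have ha1 : a < 1 := by rw [ha_def]; linarith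
  have hxa' : |x| < a := by rw [ha_def]; linarith
  have hmem : x ∈ Set.Ioo (-a) a := by
    rcases abs_lt.1 hxa' with ⟨h1, h2⟩; exact ⟨h1, h2⟩
  have h0mem : (0 : ℝ) ∈ Set.Ioo (-a) a := ⟨by linarith, ha0⟩
  show HasDerivAt (fun z : ℝ => ∑' i : ℕ, μ (i : ℕ∞) * z ^ i)
    (∑' i : ℕ, μ (i : ℕ∞) * ((i : ℝ) * x ^ (i - 1))) x
  exact hasDerivAt_tsum_of_isPreconnected (geo1 ha0.le ha1) isOpen_Ioo
    (isPreconnected_Ioo)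
    (g := fun (i : ℕ) (y : ℝ) => μ (i : ℕ∞) * y ^ i)
    (g' := fun (i : ℕ) (y : ℝ) => μ (i : ℕ∞) * ((i : ℝ) * y ^ (i - 1)))
    (fun i y _ => (hasDerivAt_pow i y).const_mul (μ (i : ℕ∞)))
    (fun i y hy => by
      rw [norm_mul, norm_mul, norm_pow, Real.norm_eq_abs y, Real.norm_natCast]
      have hya : |y| ≤ a := by
        rw [abs_le]; exact ⟨hy.1.le, hy.2.le⟩
      calc ‖μ (i : ℕ∞)‖ * ((i : ℝ) * |y| ^ (i - 1))
          ≤ 1 * ((i : ℝ) * a ^ (i - 1)) := by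
            apply mul_le_mul (norm_mu_le hμ i)
            · exact mul_le_mul_of_nonneg_left (pow_le_pow_left₀ (abs_nonneg y) hya _)
                (Nat.cast_nonneg i)
            · positivity
            · norm_num
        _ = (i : ℝ) * a ^ (i - 1) := one_mul _)
    h0mem
    (sum0 hμ (by rw [abs_zero]; norm_num))
    hmem

lemma hasDerivAt_R1 (hμ : MemS1 μ) {x : ℝ} (hx : x ∈ Set.Ioo (-1 : ℝ) 1) :
    HasDerivAt (R1 μ) (R2 μ x) x := by
  obtain ⟨hx1, hx2⟩ := hx
  set a : ℝ := (|x| + 1) / 2 with ha_def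
  have hxa : |x| < 1 := abs_lt.2 ⟨hx1, hx2⟩
  have ha0 : 0 < a := by positivity
  have ha1 : a < 1 := by rw [ha_def]; linarith
  have hxa' : |x| < a := by rw [ha_def]; linarith
  have hmem : x ∈ Set.Ioo (-a) a := by
    rcases abs_lt.1 hxa' with ⟨h1, h2⟩; exact ⟨h1, h2⟩
  have h0mem : (0 : ℝ) ∈ Set.Ioo (-a) a := ⟨by linarith, ha0⟩
  show HasDerivAt (fun z : ℝ => ∑' i : ℕ, μ (i : ℕ∞) * ((i : ℝ) * z ^ (i - 1)))
    (∑' i : ℕ, μ (i : ℕ∞) * ((i : ℝ) * (((i - 1 : ℕ)) : ℝ) * x ^ (i - 2))) x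
  exact hasDerivAt_tsum_of_isPreconnected (geo2 ha0.le ha1) isOpen_Ioo
    (isPreconnected_Ioo)
    (g := fun (i : ℕ) (y : ℝ) => μ (i : ℕ∞) * ((i : ℝ) * y ^ (i - 1)))
    (g' := fun (i : ℕ) (y : ℝ) => μ (i : ℕ∞) * ((i : ℝ) * (((i - 1 : ℕ)) : ℝ) * y ^ (i - 2)))
    (fun i y _ => by
      have h := (((hasDerivAt_pow (i - 1) y).const_mul ((i : ℝ))).const_mul (μ (i : ℕ∞)))
      refine h.congr_deriv ?_
      rw [show i - 1 - 1 = i - 2 from by omega]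
      ring)
    (fun i y hy => by
      rw [norm_mul, norm_mul, norm_mul, norm_pow, Real.norm_eq_abs y, Real.norm_natCast,
        Real.norm_natCast]
      have hya : |y| ≤ a := by
        rw [abs_le]; exact ⟨hy.1.le, hy.2.le⟩
      calc ‖μ (i : ℕ∞)‖ * ((i : ℝ) * ((i - 1 : ℕ) : ℝ) * |y| ^ (i - 2))
          ≤ 1 * ((i : ℝ) * ((i - 1 : ℕ) : ℝ) * a ^ (i - 2)) := by
            apply mul_le_mul (norm_mu_le hμ i)
            · exact mul_le_mul_of_nonneg_left (pow_le_pow_left₀ (abs_nonneg y) hya _)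
                (by positivity)
            · positivity
            · norm_num
        _ = (i : ℝ) * ((i - 1 : ℕ) : ℝ) * a ^ (i - 2) := one_mul _)
    h0mem
    (sum1 hμ (by rw [abs_zero]; norm_num))
    hmem


lemma hasSum_Rf (hμ : MemS1 μ) {x : ℝ} (hx : |x| < 1) :
    HasSum (fun i : ℕ => μ (i : ℕ∞) * x ^ i) (Rf μ x) := (sum0 hμ hx).hasSum

lemma hasSum_R2 (hμ : MemS1 μ) {x : ℝ} (hx : |x| < 1) :
    HasSum (fun i : ℕ => μ (i : ℕ∞) * ((i : ℝ) * (((i - 1 : ℕ)) : ℝ) * x ^ (i - 2)))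
      (R2 μ x) := (sum2 hμ hx).hasSum

set_option maxHeartbeats 1000000 in
lemma hasSum_sq (hμ : MemS1 μ) {x : ℝ} (hx0 : 0 ≤ x) (hx : |x| < 1) :
    HasSum (fun k : ℕ => Mc μ k * x ^ k) (Rf μ x * Rf μ x) := by
  have hprod : Summable fun p : ℕ × ℕ => (μ (p.1 : ℕ∞) * x ^ p.1) * (μ (p.2 : ℕ∞) * x ^ p.2) :=
    Summable.mul_of_nonneg (sum0 hμ hx) (sum0 hμ hx)
      (fun i => mul_nonneg (mu_nonneg hμ _) (pow_nonneg hx0 i))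
      (fun i => mul_nonneg (mu_nonneg hμ _) (pow_nonneg hx0 i))
  have hsum := summable_sum_mul_antidiagonal_of_summable_mul
    (f := fun i : ℕ => μ (i : ℕ∞) * x ^ i) (g := fun i : ℕ => μ (i : ℕ∞) * x ^ i) hprod
  have hcong : (fun k : ℕ =>
      (∑ kl ∈ Finset.HasAntidiagonal.antidiagonal k, (μ (kl.1 : ℕ∞) * x ^ kl.1) * (μ (kl.2 : ℕ∞) * x ^ kl.2)))
        = fun k : ℕ => Mc μ k * x ^ k := by
    funext k
    rw [Mc, Finset.sum_mul]
    refine Finset.sum_congr rfl fun p hp => ?_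
    have hpk : p.1 + p.2 = k := Finset.HasAntidiagonal.mem_antidiagonal.mp hp
    rw [← hpk, pow_add]
    ring
  have htsum := Summable.tsum_mul_tsum_eq_tsum_sum_antidiagonal (sum0 hμ hx) (sum0 hμ hx) hprod
  have hval : Rf μ x * Rf μ x = ∑' k : ℕ, Mc μ k * x ^ k := by
    rw [show Rf μ x = ∑' i : ℕ, μ (i : ℕ∞) * x ^ i from rfl, htsum, hcong]
  rw [hcong] at hsum
  rw [hval]
  exact hsum.hasSum

lemma key_identity (hc : 0 < c) (hμ : MemS1 μ) (hfix : Fc c μ = μ) {x : ℝ}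
    (hx : x ∈ Set.Ioo (0 : ℝ) 1) :
    x * (1 - x) * R2 μ x = 2 * c * Rf μ x * (1 - Rf μ x) := by
  obtain ⟨hx0, hx1⟩ := hx
  have hax : |x| < 1 := abs_lt.2 ⟨by linarith, hx1⟩
  have h2 := hasSum_R2 hμ hax
  set F : ℕ → ℝ := fun i : ℕ => μ (i : ℕ∞) * ((i : ℝ) * (((i - 1 : ℕ)) : ℝ) * x ^ (i - 1))
    with hF
  set G : ℕ → ℝ := fun i : ℕ => μ (i : ℕ∞) * ((i : ℝ) * (((i - 1 : ℕ)) : ℝ) * x ^ i) with hG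
  have hxa : HasSum F (x * R2 μ x) := by
    have h := h2.mul_left x
    rw [show (fun i : ℕ => x * (μ (i : ℕ∞) * ((i : ℝ) * (((i - 1 : ℕ)) : ℝ) * x ^ (i - 2))))
        = F from funext fun i => ?_] at h
    · exact h
    · rw [hF]
      match i with
      | 0 => simp
      | 1 => simp
      | (n + 2) =>
        simp only
        rw [show n + 2 - 2 = n from by omega, show n + 2 - 1 = n + 1 from by omega]
        ring
  have hxb : HasSum G (x ^ 2 * R2 μ x) := by
    have h := h2.mul_left (x ^ 2)
    rw [show (fun i : ℕ => x ^ 2 * (μ (i : ℕ∞) * ((i : ℝ) * (((i - 1 : ℕ)) : ℝ) * x ^ (i - 2))))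
        = G from funext fun i => ?_] at h
    · exact h
    · rw [hG]
      match i with
      | 0 => simp
      | 1 => simp
      | (n + 2) =>
        simp only
        rw [show n + 2 - 2 = n from by omega]
        ring
  have hshift : HasSum (fun k : ℕ => F (k + 1)) (x * R2 μ x) := by
    have hsum' : HasSum F (x * R2 μ x + ∑ i ∈ Finset.range 1, F i) := by
      have hF0 : F 0 = 0 := by rw [hF]; simp
      rw [Finset.range_one, Finset.sum_singleton, hF0, add_zero]
      exact hxa
    exact (hasSum_nat_add_iff 1).mpr hsum'
  have hL : HasSum (fun k : ℕ => F (k + 1) - G k) (x * R2 μ x - x ^ 2 * R2 μ x) :=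
    hshift.sub hxb
  have hRc : HasSum (fun k : ℕ => 2 * c * (μ (k : ℕ∞) * x ^ k) - 2 * c * (Mc μ k * x ^ k))
      (2 * c * Rf μ x - 2 * c * (Rf μ x * Rf μ x)) :=
    ((hasSum_Rf hμ hax).mul_left (2 * c)).sub ((hasSum_sq hμ hx0.le hax).mul_left (2 * c))
  have hEq : (fun k : ℕ => F (k + 1) - G k)
      = fun k : ℕ => 2 * c * (μ (k : ℕ∞) * x ^ k) - 2 * c * (Mc μ k * x ^ k) := by
    funext k
    rw [hF, hG]
    simp only
    have hco := coeff_identity hc hμ hfix k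
    rw [show (k + 1 : ℕ) - 1 = k from by omega] at hco ⊢
    linear_combination (x ^ k) * hco
  rw [hEq] at hL
  have huniq := hL.unique hRc
  linear_combination huniq


lemma exists_pos (hμ : MemS1 μ) : ∃ k : ℕ, 1 ≤ k ∧ 0 < μ (k : ℕ∞) := by
  by_contra h
  push_neg at h
  have hz : (fun n : ℕ => μ (n : ℕ∞)) = fun _ => (0 : ℝ) := by
    funext n
    rcases Nat.eq_zero_or_pos n with rfl | hn
    · exact mu_zero hμ
    · exact le_antisymm (h n hn) (mu_nonneg hμ _)
  have h1 := hasSum_nat hμ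
  rw [hz] at h1
  exact one_ne_zero (h1.unique hasSum_zero)

lemma Rf_zero (hμ : MemS1 μ) : Rf μ 0 = 0 := by
  unfold Rf
  have hz : (fun i : ℕ => μ (i : ℕ∞) * (0 : ℝ) ^ i) = fun _ => (0 : ℝ) := by
    funext i
    rcases Nat.eq_zero_or_pos i with rfl | hi
    · simp [Nat.cast_zero, hμ.1.2.1]
    · rw [zero_pow (by omega), mul_zero]
  rw [hz, tsum_zero]

lemma Rf_nonneg (hμ : MemS1 μ) {x : ℝ} (hx0 : 0 ≤ x) : 0 ≤ Rf μ x :=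
  tsum_nonneg fun i => mul_nonneg (mu_nonneg hμ _) (pow_nonneg hx0 i)

lemma Rf_lt_one (hμ : MemS1 μ) {x : ℝ} (hx : |x| < 1) : Rf μ x < 1 := by
  obtain ⟨k₀, hk₀, hkpos⟩ := exists_pos hμ
  have habs : Summable (fun i : ℕ => μ (i : ℕ∞) * |x| ^ i) :=
    sum0 hμ (by rwa [abs_abs])
  have h1 : Rf μ x ≤ ∑' i : ℕ, μ (i : ℕ∞) * |x| ^ i := by
    refine Summable.tsum_le_tsum (fun i => ?_) (sum0 hμ hx) habs
    exact mul_le_mul_of_nonneg_left ((le_abs_self _).trans_eq (abs_pow x i)) (mu_nonneg hμ _)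
  have h2 : ∑' i : ℕ, μ (i : ℕ∞) * |x| ^ i < ∑' i : ℕ, μ (i : ℕ∞) := by
    refine Summable.tsum_lt_tsum_of_nonneg
      (fun i => mul_nonneg (mu_nonneg hμ _) (pow_nonneg (abs_nonneg x) i))
      (fun i => ?_) (i := k₀) ?_ (summable_nat hμ)
    · calc μ (i : ℕ∞) * |x| ^ i ≤ μ (i : ℕ∞) * 1 :=
          mul_le_mul_of_nonneg_left (pow_le_one₀ (abs_nonneg x) hx.le) (mu_nonneg hμ _)
        _ = μ (i : ℕ∞) := mul_one _
    · have hpow : |x| ^ k₀ < 1 := pow_lt_one₀ (abs_nonneg x) hx (by omega)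
      nlinarith [hkpos, hpow]
  have h3 : ∑' i : ℕ, μ (i : ℕ∞) = 1 := (hasSum_nat hμ).tsum_eq
  linarith

lemma Rf_pos (hμ : MemS1 μ) {x : ℝ} (hx0 : 0 < x) (hx : |x| < 1) : 0 < Rf μ x := by
  obtain ⟨k₀, hk₀, hkpos⟩ := exists_pos hμ
  have h1 : μ (k₀ : ℕ∞) * x ^ k₀ ≤ Rf μ x :=
    Summable.le_tsum (sum0 hμ hx) k₀
      (fun j _ => mul_nonneg (mu_nonneg hμ _) (pow_nonneg hx0.le j))
  have h2 : 0 < μ (k₀ : ℕ∞) * x ^ k₀ := mul_pos hkpos (pow_pos hx0 k₀)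
  linarith

lemma tendsto_Rf_one (hμ : MemS1 μ) : Tendsto (Rf μ) (𝓝[<] (1 : ℝ)) (𝓝 1) := by
  have hIoo : Set.Ioo (0 : ℝ) 1 ∈ 𝓝[<] (1 : ℝ) :=
    Ioo_mem_nhdsLT_of_mem ⟨zero_lt_one, le_refl 1⟩
  rw [tendsto_order]
  constructor
  · intro a ha
    have hps := (hasSum_nat hμ).tendsto_sum_nat
    obtain ⟨N, hN⟩ := (hps.eventually_const_lt ha).exists
    have hcont : Tendsto (fun x : ℝ => ∑ i ∈ Finset.range N, μ (i : ℕ∞) * x ^ i)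
        (𝓝[<] (1 : ℝ)) (𝓝 (∑ i ∈ Finset.range N, μ (i : ℕ∞) * (1 : ℝ) ^ i)) := by
      refine Tendsto.mono_left ?_ nhdsWithin_le_nhds
      exact Continuous.tendsto (by continuity) 1
    have hval : (∑ i ∈ Finset.range N, μ (i : ℕ∞) * (1 : ℝ) ^ i)
        = ∑ i ∈ Finset.range N, μ (i : ℕ∞) := by simp
    rw [hval] at hcont
    filter_upwards [hcont.eventually_const_lt hN, hIoo] with x h1 h2
    calc a < ∑ i ∈ Finset.range N, μ (i : ℕ∞) * x ^ i := h1
      _ ≤ Rf μ x := by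
        refine Summable.sum_le_tsum (Finset.range N)
          (fun i _ => mul_nonneg (mu_nonneg hμ _) (pow_nonneg h2.1.le i)) ?_
        exact sum0 hμ (abs_lt.2 ⟨by linarith [h2.1], h2.2⟩)
  · intro a ha
    filter_upwards [hIoo] with x hx
    have := Rf_lt_one hμ (abs_lt.2 ⟨by linarith [hx.1], hx.2⟩)
    linarith

lemma tendsto_sub_Rf (hμ : MemS1 μ) :
    Tendsto (fun x => 1 - Rf μ x) (𝓝[<] (1 : ℝ)) (𝓝[>] (0 : ℝ)) := by
  rw [tendsto_nhdsWithin_iff]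
  constructor
  · have h := (tendsto_const_nhds (x := (1 : ℝ)) (f := 𝓝[<] (1:ℝ))).sub (tendsto_Rf_one hμ)
    simpa using h
  · filter_upwards [Ioo_mem_nhdsLT_of_mem
      (⟨zero_lt_one, le_refl 1⟩ : (1:ℝ) ∈ Set.Ioc (0:ℝ) 1)] with x hx
    exact sub_pos.2 (Rf_lt_one hμ (abs_lt.2 ⟨by linarith [hx.1], hx.2⟩))

lemma R1_nonneg (hμ : MemS1 μ) {x : ℝ} (hx0 : 0 ≤ x) : 0 ≤ R1 μ x :=
  tsum_nonneg fun i =>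
    mul_nonneg (mu_nonneg hμ _) (mul_nonneg (Nat.cast_nonneg i) (pow_nonneg hx0 _))

lemma R1_lower (hμ : MemS1 μ) (k₀ : ℕ) {x : ℝ} (hx0 : 0 ≤ x) (hx : |x| < 1) :
    μ (k₀ : ℕ∞) * ((k₀ : ℝ) * x ^ (k₀ - 1)) ≤ R1 μ x :=
  Summable.le_tsum (sum1 hμ hx) k₀ (fun j _ =>
    mul_nonneg (mu_nonneg hμ _) (mul_nonneg (Nat.cast_nonneg j) (pow_nonneg hx0 _)))

lemma poly_ineq {x : ℝ} (hx0 : 0 ≤ x) (hx1 : x ≤ 1) (i : ℕ) :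
    (i : ℝ) * x ^ (i - 1) * (1 - x) ≤ 1 - x ^ i := by
  have hs : (i : ℝ) * x ^ (i - 1) ≤ ∑ j ∈ Finset.range i, x ^ j := by
    have hterm : ∀ j ∈ Finset.range i, x ^ (i - 1) ≤ x ^ j := by
      intro j hj
      exact pow_le_pow_of_le_one hx0 hx1 (by
        have := Finset.mem_range.mp hj; omega)
    calc (i : ℝ) * x ^ (i - 1) = ∑ _j ∈ Finset.range i, x ^ (i - 1) := by
          rw [Finset.sum_const, Finset.card_range, nsmul_eq_mul]
      _ ≤ ∑ j ∈ Finset.range i, x ^ j := Finset.sum_le_sum hterm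
  have hgs : (∑ j ∈ Finset.range i, x ^ j) * (x - 1) = x ^ i - 1 := geom_sum_mul x i
  nlinarith [mul_le_mul_of_nonneg_right hs (by linarith : (0:ℝ) ≤ 1 - x)]

lemma R1_le_aux (hμ : MemS1 μ) {x : ℝ} (hx0 : 0 ≤ x) (hx1 : x < 1) :
    (1 - x) * R1 μ x ≤ 1 - Rf μ x := by
  have hax : |x| < 1 := abs_lt.2 ⟨by linarith, hx1⟩
  have h1 : HasSum (fun i : ℕ => μ (i : ℕ∞) * ((i : ℝ) * x ^ (i - 1)) * (1 - x))
      (R1 μ x * (1 - x)) := (sum1 hμ hax).hasSum.mul_right (1 - x)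
  have h2 : HasSum (fun i : ℕ => μ (i : ℕ∞) - μ (i : ℕ∞) * x ^ i) (1 - Rf μ x) :=
    (hasSum_nat hμ).sub (hasSum_Rf hμ hax)
  have hle := hasSum_le (fun i => ?_) h1 h2
  · linarith [hle]
  · have hp := poly_ineq hx0 hx1.le i
    have hm := mu_nonneg hμ ((i : ℕ) : ℕ∞)
    nlinarith [hp, hm]

end GAux
end GAux

open GAux in
/-- Properties of `g(x) = -log(1 - R(x))` where `R` is the probability
generating function of a fixed point `μ ∈ S₁` of `F_c`. -/
theorem g_properties (c : ℝ) (hc : 0 < c) (μ : ℕ∞ → ℝ) (hμ : MemS1 μ) (hfix : Fc c μ = μ)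
    (R : ℝ → ℝ) (hR : R = fun x => ∑' i : ℕ, μ (i : ℕ∞) * x ^ i)
    (g : ℝ → ℝ) (hg : g = fun x => -Real.log (1 - R x)) :
    g 0 = 0 ∧
    (∀ x ∈ Set.Ioo (0 : ℝ) 1, 0 < g x ∧ R x < 1) ∧
    Tendsto g (𝓝[<] (1 : ℝ)) atTop ∧
    (∀ x ∈ Set.Ioo (0 : ℝ) 1,
      deriv (deriv g) x = (deriv g x) ^ 2 + 2 * c / (x * (1 - x)) * (1 - Real.exp (-g x))) ∧
    Tendsto (deriv g) (𝓝[<] (1 : ℝ)) atTop ∧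
    Tendsto (deriv (deriv g)) (𝓝[<] (1 : ℝ)) atTop ∧
    ∀ x ∈ Set.Ico (0 : ℝ) 1, deriv g x ≤ 1 / (1 - x) := by
  have hReq : R = Rf μ := hR
  have hgeq : g = fun x => -Real.log (1 - Rf μ x) := by rw [hg, hReq]
  -- basic inequalities
  have hRlt : ∀ {x : ℝ}, x ∈ Set.Ioo (-1 : ℝ) 1 → Rf μ x < 1 := fun {x} hx =>
    Rf_lt_one hμ (abs_lt.2 ⟨hx.1, hx.2⟩)
  have hRne : ∀ {x : ℝ}, x ∈ Set.Ioo (-1 : ℝ) 1 → 1 - Rf μ x ≠ 0 := fun {x} hx => by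
    have := hRlt hx; linarith
  -- the derivative of g
  have hgderiv : ∀ x ∈ Set.Ioo (-1 : ℝ) 1, HasDerivAt g (R1 μ x / (1 - Rf μ x)) x := by
    intro x hx
    have h1 : HasDerivAt (fun y => 1 - Rf μ y) (-(R1 μ x)) x :=
      (hasDerivAt_Rf hμ hx).const_sub 1
    have h2 := (h1.log (hRne hx)).neg
    rw [hgeq]
    refine h2.congr_deriv ?_
    rw [neg_div, neg_neg]
  have hderiv_eq : ∀ x ∈ Set.Ioo (-1 : ℝ) 1, deriv g x = R1 μ x / (1 - Rf μ x) :=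
    fun x hx => (hgderiv x hx).deriv
  -- membership helpers
  have hsub : ∀ {x : ℝ}, x ∈ Set.Ioo (0 : ℝ) 1 → x ∈ Set.Ioo (-1 : ℝ) 1 := fun {x} hx =>
    ⟨by linarith [hx.1], hx.2⟩
  have hIoo : Set.Ioo (0 : ℝ) 1 ∈ 𝓝[<] (1 : ℝ) :=
    Ioo_mem_nhdsLT_of_mem ⟨zero_lt_one, le_refl 1⟩
  -- part 1
  have part1 : g 0 = 0 := by
    rw [hgeq]
    simp only
    rw [Rf_zero hμ, sub_zero, Real.log_one, neg_zero]
  -- part 2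
  have part2 : ∀ x ∈ Set.Ioo (0 : ℝ) 1, 0 < g x ∧ R x < 1 := by
    intro x hx
    have hax : |x| < 1 := abs_lt.2 ⟨by linarith [hx.1], hx.2⟩
    have hlt : Rf μ x < 1 := Rf_lt_one hμ hax
    have hpos : 0 < Rf μ x := Rf_pos hμ hx.1 hax
    constructor
    · rw [hgeq]
      simp only
      have hlog : Real.log (1 - Rf μ x) < 0 := Real.log_neg (by linarith) (by linarith)
      linarith
    · rw [hReq]; exact hlt
  -- part 3
  have part3 : Tendsto g (𝓝[<] (1 : ℝ)) atTop := by
    have hlog := Real.tendsto_log_nhdsGT_zero.comp (tendsto_sub_Rf hμ)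
    have hneg := tendsto_neg_atBot_atTop.comp hlog
    rw [hgeq]
    exact hneg
  -- part 4 (the ODE)
  have part4 : ∀ x ∈ Set.Ioo (0 : ℝ) 1,
      deriv (deriv g) x = (deriv g x) ^ 2 + 2 * c / (x * (1 - x)) * (1 - Real.exp (-g x)) := by
    intro x hx
    have hx' : x ∈ Set.Ioo (-1 : ℝ) 1 := hsub hx
    have hne : 1 - Rf μ x ≠ 0 := hRne hx'
    have hEvEq : deriv g =ᶠ[𝓝 x] fun y => R1 μ y / (1 - Rf μ y) := by
      filter_upwards [isOpen_Ioo.mem_nhds hx'] with y hy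
      exact hderiv_eq y hy
    have hD2 : HasDerivAt (fun y => R1 μ y / (1 - Rf μ y))
        ((R2 μ x * (1 - Rf μ x) - R1 μ x * (-(R1 μ x))) / (1 - Rf μ x) ^ 2) x :=
      (hasDerivAt_R1 hμ hx').div ((hasDerivAt_Rf hμ hx').const_sub 1) hne
    have hD2v : deriv (deriv g) x
        = (R2 μ x * (1 - Rf μ x) - R1 μ x * (-(R1 μ x))) / (1 - Rf μ x) ^ 2 := by
      rw [hEvEq.deriv_eq, hD2.deriv]
    have hgx : Real.exp (-g x) = 1 - Rf μ x := by
      rw [hgeq]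
      simp only [neg_neg]
      exact Real.exp_log (by have := hRlt hx'; linarith)
    have hkey := key_identity hc hμ hfix hx
    rw [hD2v, hderiv_eq x hx', hgx]
    have hx0 : x ≠ 0 := ne_of_gt hx.1
    have h1x : (1 : ℝ) - x ≠ 0 := by have := hx.2; intro h; linarith [h]
    have hstep : R2 μ x / (1 - Rf μ x) = 2 * c / (x * (1 - x)) * Rf μ x := by
      rw [div_eq_iff hne, div_mul_eq_mul_div, div_mul_eq_mul_div,
        eq_div_iff (mul_ne_zero hx0 h1x)]
      linear_combination hkey
    have hsplit : (R2 μ x * (1 - Rf μ x) - R1 μ x * (-(R1 μ x))) / (1 - Rf μ x) ^ 2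
        = R2 μ x / (1 - Rf μ x) + (R1 μ x / (1 - Rf μ x)) ^ 2 := by
      field_simp
      ring
    rw [hsplit, hstep]
    ring
  -- part 5
  obtain ⟨k₀, hk₀1, hk₀pos⟩ := exists_pos hμ
  have part5 : Tendsto (deriv g) (𝓝[<] (1 : ℝ)) atTop := by
    set δ : ℝ := μ (k₀ : ℕ∞) * ((k₀ : ℝ) * (1 / 2) ^ k₀) with hδdef
    have hδ : 0 < δ := by
      have : (0 : ℝ) < (k₀ : ℝ) := by exact_mod_cast hk₀1
      positivity
    have hinv : Tendsto (fun x => (1 - Rf μ x)⁻¹) (𝓝[<] (1 : ℝ)) atTop :=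
      tendsto_inv_nhdsGT_zero.comp (tendsto_sub_Rf hμ)
    have hconst : Tendsto (fun x => δ * (1 - Rf μ x)⁻¹) (𝓝[<] (1 : ℝ)) atTop :=
      hinv.const_mul_atTop hδ
    refine tendsto_atTop_mono' _ ?_ hconst
    filter_upwards [Ioo_mem_nhdsLT_of_mem
      (⟨by norm_num, le_refl (1 : ℝ)⟩ : (1 : ℝ) ∈ Set.Ioc (1 / 2 : ℝ) 1)] with x hx
    have hx' : x ∈ Set.Ioo (-1 : ℝ) 1 := ⟨by linarith [hx.1], hx.2⟩
    have hx0 : (0 : ℝ) ≤ x := by linarith [hx.1]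
    have hax : |x| < 1 := abs_lt.2 ⟨by linarith [hx.1], hx.2⟩
    rw [hderiv_eq x hx']
    have hRpos : 0 < 1 - Rf μ x := by have := hRlt hx'; linarith
    have hpow : (1 / 2 : ℝ) ^ k₀ ≤ x ^ (k₀ - 1) := by
      calc (1 / 2 : ℝ) ^ k₀ ≤ (1 / 2 : ℝ) ^ (k₀ - 1) :=
            pow_le_pow_of_le_one (by norm_num) (by norm_num) (by omega)
        _ ≤ x ^ (k₀ - 1) := pow_le_pow_left₀ (by norm_num) hx.1.le _
    have hR1 : δ ≤ R1 μ x := by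
      refine le_trans ?_ (R1_lower hμ k₀ hx0 hax)
      rw [hδdef]
      have h1 : (0 : ℝ) ≤ (k₀ : ℝ) := Nat.cast_nonneg k₀
      have h2 := mu_nonneg hμ ((k₀ : ℕ) : ℕ∞)
      have := mul_le_mul_of_nonneg_left hpow h1
      nlinarith [this, h2]
    rw [div_eq_mul_inv]
    exact mul_le_mul_of_nonneg_right hR1 (inv_nonneg.2 hRpos.le)
  -- part 6
  have part6 : Tendsto (deriv (deriv g)) (𝓝[<] (1 : ℝ)) atTop := by
    have hmul : Tendsto (fun x => deriv g x * deriv g x) (𝓝[<] (1 : ℝ)) atTop :=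
      part5.atTop_mul_atTop₀ part5
    refine tendsto_atTop_mono' _ ?_ hmul
    filter_upwards [hIoo] with x hx
    rw [part4 x hx]
    have hgpos : 0 < g x := (part2 x hx).1
    have hexp : Real.exp (-g x) ≤ 1 := by
      rw [← Real.exp_zero]
      exact Real.exp_le_exp.mpr (by linarith)
    have hfrac : 0 ≤ 2 * c / (x * (1 - x)) := by
      have h1 : 0 < x * (1 - x) := mul_pos hx.1 (by linarith [hx.2])
      positivity
    have hterm : 0 ≤ 2 * c / (x * (1 - x)) * (1 - Real.exp (-g x)) :=
      mul_nonneg hfrac (by linarith)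
    nlinarith [hterm, sq_nonneg (deriv g x)]
  -- part 7
  have part7 : ∀ x ∈ Set.Ico (0 : ℝ) 1, deriv g x ≤ 1 / (1 - x) := by
    intro x hx
    have hx' : x ∈ Set.Ioo (-1 : ℝ) 1 := ⟨by linarith [hx.1], hx.2⟩
    rw [hderiv_eq x hx']
    have hle := R1_le_aux hμ hx.1 hx.2
    have hRpos : 0 < 1 - Rf μ x := by have := hRlt hx'; linarith
    have hxpos : 0 < 1 - x := by linarith [hx.2]
    rw [div_le_div_iff₀ hRpos hxpos]
    nlinarith [hle]
  exact ⟨part1, part2, part3, part4, part5, part6, part7⟩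
end
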